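/- arXiv:1610.00571 — 2 statements merged into one kernel-verified Lean document; each statement's English description precedes it below -/
import Mathlib

section
/- Let i ≤ ℓ−1 be a critical index and let θ_i be the unique vertex with Ψ_{>i−1} = Ψ_{>i} ⊎ {θ_i}. For all V-selectors f and g: if f_{i+1}(v) = g_{i+1}(v) for every node v ∈ Θ_{i+1}, {s ∈ 𝐓(v_i) : f(θ_i) = s} = {s ∈ 𝐓(v_i) : g(θ_i) = s}, and {t ∈ 𝐓(v_i) : f(t) = θ_i} = {t ∈ 𝐓(v_i) : g(t) = θ_i}, then f_i(v) = g_i(v) for every node v ∈ Θ_i. (This is the determination content of the claim that f_i is definable from f_{i+1} together with a predicate recording which vertices s ∈ 𝐓(v_i) satisfy f(θ_i) = s and which satisfy f(s) = θ_i.) -/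
universe u v

/-- A leaf of a graph: a node with at most one neighbour. -/
def IsTreeLeaf {𝒱 : Type v} (T : SimpleGraph 𝒱) (x : 𝒱) : Prop :=
  (T.neighborSet x).Subsingleton

/-- `(T, B)` is a tree decomposition of the graph with vertex set `V` and edge
relation `E`. -/
def IsTreeDecomp {V : Type u} {𝒱 : Type v} (E : V → V → Prop) (T : SimpleGraph 𝒱)
    (B : 𝒱 → Finset V) : Prop :=
  T.IsTree ∧ (∀ s t : V, E s t → ∃ x : 𝒱, s ∈ B x ∧ t ∈ B x) ∧
    ∀ s : V, (T.induce {x : 𝒱 | s ∈ B x}).Connected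

/-- A nice (rooted) tree decomposition: every leaf has a singleton bag, every vertex
is the bag of some leaf, and along every tree edge one bag is obtained from the other
by adding exactly one vertex. -/
def IsNiceTD {V : Type u} {𝒱 : Type v} [DecidableEq V] (E : V → V → Prop)
    (T : SimpleGraph 𝒱) (B : 𝒱 → Finset V) (root : 𝒱) : Prop :=
  IsTreeDecomp E T B ∧
  (∀ x : 𝒱, IsTreeLeaf T x → ∃ s : V, B x = {s}) ∧
  (∀ s : V, ∃ x : 𝒱, IsTreeLeaf T x ∧ B x = {s}) ∧
  ∀ x y : 𝒱, T.Adj x y →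
    (∃ s : V, s ∉ B x ∧ B y = insert s (B x)) ∨ (∃ s : V, s ∉ B y ∧ B x = insert s (B y))

/-- A depth-first traversal `vs 1, …, vs ℓ` of the rooted tree `T`: it starts and ends
at the root, consecutive nodes are adjacent, and every oriented edge of `T` occurs
exactly once among consecutive pairs. -/
structure IsDFT {𝒱 : Type v} (T : SimpleGraph 𝒱) (root : 𝒱) (ℓ : ℕ) (vs : ℕ → 𝒱) :
    Prop where
  one_le : 1 ≤ ℓ
  first : vs 1 = root
  last : vs ℓ = root
  adj : ∀ j : ℕ, 1 ≤ j → j < ℓ → T.Adj (vs j) (vs (j + 1))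
  once : ∀ a b : 𝒱, T.Adj a b → ∃! j : ℕ, 1 ≤ j ∧ j < ℓ ∧ vs j = a ∧ vs (j + 1) = b

/-- `x` is an ancestor of `y` (w.r.t. `root`): `x` lies on the path from the root
to `y`.  (In a tree the path between two nodes is unique.) -/
def Anc {𝒱 : Type v} (T : SimpleGraph 𝒱) (root x y : 𝒱) : Prop :=
  ∀ p : T.Walk root y, p.IsPath → x ∈ p.support

/-- `Θ_i`: the set of ancestors of `vs i`. -/
def Theta {𝒱 : Type v} (T : SimpleGraph 𝒱) (root : 𝒱) (vs : ℕ → 𝒱) (i : ℕ) : Set 𝒱 :=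
  {x | Anc T root x (vs i)}

/-- `Θ_{≤ i} = ⋃_{1 ≤ j ≤ i} Θ_j`. -/
def ThetaLe {𝒱 : Type v} (T : SimpleGraph 𝒱) (root : 𝒱) (vs : ℕ → 𝒱) (i : ℕ) : Set 𝒱 :=
  {x | ∃ j : ℕ, 1 ≤ j ∧ j ≤ i ∧ x ∈ Theta T root vs j}

/-- `Ψ_i = ⋃_{x ∈ Θ_i} B x`. -/
def Psi {V : Type u} {𝒱 : Type v} (T : SimpleGraph 𝒱) (root : 𝒱) (vs : ℕ → 𝒱)
    (B : 𝒱 → Finset V) (i : ℕ) : Set V :=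
  {s | ∃ x ∈ Theta T root vs i, s ∈ B x}

/-- `Ψ_{≤ i} = ⋃_{1 ≤ j ≤ i} Ψ_j`. -/
def PsiLe {V : Type u} {𝒱 : Type v} (T : SimpleGraph 𝒱) (root : 𝒱) (vs : ℕ → 𝒱)
    (B : 𝒱 → Finset V) (i : ℕ) : Set V :=
  {s | ∃ j : ℕ, 1 ≤ j ∧ j ≤ i ∧ s ∈ Psi T root vs B j}

/-- `x = n_i(w)`: `x` is the lowest ancestor of `w` belonging to `Θ_{≤ i}`. -/
def LowestAnc {𝒱 : Type v} (T : SimpleGraph 𝒱) (root : 𝒱) (vs : ℕ → 𝒱) (i : ℕ)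
    (w x : 𝒱) : Prop :=
  Anc T root x w ∧ x ∈ ThetaLe T root vs i ∧
    ∀ y : 𝒱, Anc T root y w → y ∈ ThetaLe T root vs i → Anc T root y x

/-- `r = r(s)`: the node of `𝒯^s = {x | s ∈ B x}` closest to the root. -/
def IsBagRoot {V : Type u} {𝒱 : Type v} (T : SimpleGraph 𝒱) (root : 𝒱)
    (B : 𝒱 → Finset V) (s : V) (r : 𝒱) : Prop :=
  s ∈ B r ∧ ∀ x : 𝒱, s ∈ B x → Anc T root r x

/-- `Ψ_{> i-1}(x) = {s ∈ Ψ_{> i-1} | n_i(s) = x}`, where `n_i(s) = n_i(r(s))`. -/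
def PsiGtAt {V : Type u} {𝒱 : Type v} (T : SimpleGraph 𝒱) (root : 𝒱) (vs : ℕ → 𝒱)
    (B : 𝒱 → Finset V) (i : ℕ) (x : 𝒱) : Set V :=
  {s | s ∉ PsiLe T root vs B (i - 1) ∧
    ∃ r : 𝒱, IsBagRoot T root B s r ∧ LowestAnc T root vs i r x}

/-- Possible values of a selector view: `?`, `⊤`, `⊥`, or an exit pair `(t, m)`. -/
inductive View (V : Type u) : Type u where
  | unk : View V
  | top : View V
  | bot : View V
  | exit : V → ℕ → View V

/-- The trace of the (partial) selector `f` from `s`: `iter f s n` is the `n`-th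
vertex of the trace, if the trace is still defined at step `n`. -/
def iter {V : Type u} (f : V → Option V) (s : V) : ℕ → Option V
  | 0 => some s
  | n + 1 => (iter f s n).bind f

/-- `t` occurs infinitely often on the trace of `f` from `s`. -/
def infOcc {V : Type u} (f : V → Option V) (s t : V) : Prop :=
  ∀ N : ℕ, ∃ n : ℕ, N ≤ n ∧ iter f s n = some t

/-- A parity game together with a tree decomposition and a depth-first traversal:
edge relation `E`, number of colors `C`, coloring `c`, set `V0` of vertices of
player `P₀` (`V1 = V0ᶜ`), tree `T` with bags `B`, depth-first traversal
`vs 1, …, vs len` and distinguished initial vertex `sigma`. -/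
structure Setting (V : Type u) (𝒱 : Type v) where
  E : V → V → Prop
  C : ℕ
  c : V → ℕ
  V0 : Set V
  T : SimpleGraph 𝒱
  vs : ℕ → 𝒱
  len : ℕ
  sigma : V
  B : 𝒱 → Finset V

namespace Setting

variable {V : Type u} {𝒱 : Type v} (S : Setting V 𝒱)

/-- The root of the tree is the first node of the depth-first traversal. -/
def root : 𝒱 := S.vs 1

/-- Standing assumptions: colors lie in `{1, …, C}`, `(T, B)` is a nice tree
decomposition of `(V, E)` rooted at `v₁` with bag `{σ}`, and `vs` is a
depth-first traversal of `T` of length `len`. -/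
def Standing [DecidableEq V] : Prop :=
  (∀ s : V, 1 ≤ S.c s ∧ S.c s ≤ S.C) ∧
  IsNiceTD S.E S.T S.B S.root ∧
  IsDFT S.T S.root S.len S.vs ∧
  S.B S.root = {S.sigma}

def theta (i : ℕ) : Set 𝒱 := Theta S.T S.root S.vs i

def psi (i : ℕ) : Set V := Psi S.T S.root S.vs S.B i

def psiLe (i : ℕ) : Set V := PsiLe S.T S.root S.vs S.B i

def psiGtAt (i : ℕ) (x : 𝒱) : Set V := PsiGtAt S.T S.root S.vs S.B i x

/-- The index `i` is critical: `Ψ_{>i} ⊊ Ψ_{>i-1}`. -/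
def Crit (i : ℕ) : Prop := (S.psiLe i)ᶜ ⊂ (S.psiLe (i - 1))ᶜ

/-- `f` is a `W`-selector: a partial map with domain contained in `W` that follows
edges of the game. -/
def Sel (W : Set V) (f : V → Option V) : Prop :=
  ∀ s t : V, f s = some t → s ∈ W ∧ S.E s t

/-- The (maximal) trace of the `V`-selector `f` from `s` is winning for player `P₀`:
either it is finite and its last vertex belongs to `V1 = V0ᶜ`, or it is infinite and
the maximal color occurring infinitely often along it is even. -/
def TraceWin (f : V → Option V) (s : V) : Prop :=
  (∃ (n : ℕ) (t : V), iter f s n = some t ∧ f t = none ∧ t ∉ S.V0) ∨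
  ((∀ n : ℕ, iter f s n ≠ none) ∧
    ∃ m : ℕ, Even m ∧ (∃ t : V, infOcc f s t ∧ S.c t = m) ∧
      ∀ t : V, infOcc f s t → S.c t ≤ m)

/-- The selector view `f_i(x, s)` of the `V`-selector `f`: `S.SelView f i x s w`
means `f_i(x, s) = w`. -/
def SelView (f : V → Option V) (i : ℕ) (x : 𝒱) (s : V) : View V → Prop := fun w =>
  match w with
  | View.unk =>
      (f s = none ∧ s ∉ S.psiGtAt i x) ∨ (∃ t : V, f s = some t ∧ t ∉ S.psiGtAt i x)
  | View.top =>
      (f s ≠ none ∨ s ∈ S.psiGtAt i x) ∧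
      (∀ (n : ℕ) (t : V), 1 ≤ n → iter f s n = some t → t ∈ S.psiGtAt i x) ∧
      S.TraceWin f s
  | View.bot =>
      (f s ≠ none ∨ s ∈ S.psiGtAt i x) ∧
      (∀ (n : ℕ) (t : V), 1 ≤ n → iter f s n = some t → t ∈ S.psiGtAt i x) ∧
      ¬ S.TraceWin f s
  | View.exit t m =>
      ∃ j : ℕ, 2 ≤ j ∧ iter f s j = some t ∧ t ∉ S.psiGtAt i x ∧
        (∀ (n : ℕ) (u : V), 1 ≤ n → n < j → iter f s n = some u → u ∈ S.psiGtAt i x) ∧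
        (∃ (n : ℕ) (u : V), n < j ∧ iter f s n = some u ∧ S.c u = m) ∧
        (∀ (n : ℕ) (u : V), n < j → iter f s n = some u → S.c u ≤ m)

/-- The selector views `f_i(x)` and `g_i(x)` coincide (as functions on the bag of `x`). -/
def ViewEq (f g : V → Option V) (i : ℕ) (x : 𝒱) : Prop :=
  ∀ s ∈ S.B x, ∀ w : View V, S.SelView f i x s w ↔ S.SelView g i x s w

/-- `f` is a `V`-selector extending the `V₀`-selector `g` (i.e. `g` is the
restriction of `f` to `V0`). -/
def Ext (f g : V → Option V) : Prop :=
  S.Sel Set.univ f ∧ (∀ s ∈ S.V0, g s = f s) ∧ ∀ s ∉ S.V0, g s = none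

/-- The selector view `f_i(x)` of a `V`-selector, as a relation on the bag of `x`. -/
def viewOn (f : V → Option V) (i : ℕ) (x : 𝒱) : V → View V → Prop :=
  fun s w => s ∈ S.B x ∧ S.SelView f i x s w

/-- `ω_i^g(x) = { f_i(x) | f is an extension of g }`. -/
def omega (g : V → Option V) (i : ℕ) (x : 𝒱) : Set (V → View V → Prop) :=
  {R | ∃ f : V → Option V, S.Ext f g ∧ R = S.viewOn f i x}

/-- The accessibility set `α_i^g`: vertices of `Ψ_i` reachable from `σ` along the
trace of some extension of `g`. -/
def alpha (g : V → Option V) (i : ℕ) : Set V :=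
  {s | s ∈ S.psi i ∧ ∃ f : V → Option V, S.Ext f g ∧ ∃ k : ℕ, iter f S.sigma k = some s}

/-- The set `B(g)_{x,y} ⊆ {⊥, ⊤}` (with `false` for `⊥` and `true` for `⊤`). -/
def Bsel (g : V → Option V) (x y : V) : Set Bool :=
  {b | (b = false ∧ (¬ S.E x y ∨ (x ∈ S.V0 ∧ g x = none) ∨
          (∃ z : V, g x = some z ∧ z ≠ y) ∨ (S.E x y ∧ x ∉ S.V0))) ∨
       (b = true ∧ (g x = some y ∨ (S.E x y ∧ x ∉ S.V0)))}

end Setting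

namespace Aux

/-! ### iter lemmas -/

theorem iter_zero {V : Type u} (f : V → Option V) (s : V) : iter f s 0 = some s := rfl

theorem iter_succ {V : Type u} (f : V → Option V) (s : V) (n : ℕ) :
    iter f s (n + 1) = (iter f s n).bind f := rfl

theorem iter_one {V : Type u} (f : V → Option V) (s : V) : iter f s 1 = f s := rfl

theorem iter_none_mono {V : Type u} {f : V → Option V} {s : V} {m n : ℕ}
    (h : m ≤ n) (hm : iter f s m = none) : iter f s n = none := by
  induction n with
  | zero => exact (show m = 0 by omega) ▸ hm
  | succ k ih =>
    rcases Nat.lt_or_ge m (k+1) with h' | h'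
    · have := ih (by omega)
      rw [iter_succ, this]; rfl
    · have : m = k + 1 := by omega
      rwa [this] at hm

theorem iter_some_of_le {V : Type u} {f : V → Option V} {s t : V} {m n : ℕ}
    (hn : iter f s n = some t) (h : m ≤ n) : ∃ u, iter f s m = some u := by
  cases hm : iter f s m with
  | none => rw [iter_none_mono h hm] at hn; exact absurd hn (by simp)
  | some u => exact ⟨u, rfl⟩

theorem iter_add {V : Type u} (f : V → Option V) (s : V) (m n : ℕ) :
    iter f s (m + n) = (iter f s m).bind (fun v => iter f v n) := by
  induction n with
  | zero => rw [Nat.add_zero]; cases h : iter f s m <;> simp [h, iter_zero]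
  | succ k ih =>
    rw [show m + (k+1) = (m + k) + 1 by omega, iter_succ, ih]
    cases iter f s m with
    | none => rfl
    | some v => simp [iter_succ]

theorem iter_shift {V : Type u} {f : V → Option V} {s v : V} {m : ℕ}
    (h : iter f s m = some v) (n : ℕ) : iter f s (m + n) = iter f v n := by
  rw [iter_add, h]; rfl

theorem iter_periodic {V : Type u} {f : V → Option V} {s : V} {j : ℕ}
    (h : iter f s j = some s) : ∀ n, iter f s (n + j) = iter f s n := by
  intro n
  rw [show n + j = j + n by omega, iter_shift h]

theorem iter_periodic_mul {V : Type u} {f : V → Option V} {s : V} {j : ℕ}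
    (h : iter f s j = some s) : ∀ k n, iter f s (n + k * j) = iter f s n := by
  intro k
  induction k with
  | zero => simp
  | succ l ih =>
    intro n
    rw [show n + (l+1) * j = (n + l * j) + j by ring, iter_periodic h, ih]

theorem iter_mod {V : Type u} {f : V → Option V} {s : V} {j : ℕ}
    (h : iter f s j = some s) (n : ℕ) : iter f s n = iter f s (n % j) := by
  rcases Nat.eq_zero_or_pos j with hj | hj
  · subst hj; simp
  · conv_lhs => rw [show n = n % j + (n / j) * j by rw [Nat.mod_add_div']]
    rw [iter_periodic_mul h]

/-! ### infOcc and TraceWin congruence lemmas -/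

theorem infOcc_congr {V : Type u} {f g : V → Option V} {s t : V}
    (h : ∀ n, iter f s n = iter g t n) : ∀ u, infOcc f s u ↔ infOcc g t u := by
  intro u
  constructor <;> intro hio N <;> obtain ⟨n, hn1, hn2⟩ := hio N <;> exact ⟨n, hn1, by rw [← hn2, h n]⟩ <;> rfl

theorem traceWin_congr {V : Type u} {𝒱 : Type v} (S : Setting V 𝒱) {f g : V → Option V} {s t : V}
    (h : ∀ n, iter f s n = iter g t n) : S.TraceWin f s ↔ S.TraceWin g t := by
  have key : ∀ (f' g' : V → Option V) (s' t' : V), (∀ n, iter f' s' n = iter g' t' n) →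
      S.TraceWin f' s' → S.TraceWin g' t' := by
    intro f' g' s' t' h' hw
    rcases hw with ⟨n, u, h1, h2, h3⟩ | ⟨h1, m, hm, ⟨u, hu1, hu2⟩, hmax⟩
    · left
      refine ⟨n, u, by rw [← h' n]; exact h1, ?_, h3⟩
      have : iter f' s' (n+1) = none := by rw [iter_succ, h1]; simpa
      have h4 : iter g' t' (n+1) = none := by rw [← h' (n+1)]; exact this
      rw [iter_succ, ← h' n, h1] at h4
      simpa using h4
    · right
      refine ⟨fun n => by rw [← h' n]; exact h1 n, m, hm, ⟨u, ((infOcc_congr h') u).1 hu1, hu2⟩,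
        fun u' hu' => hmax u' (((infOcc_congr h') u').2 hu')⟩
  exact ⟨key f g s t h, key g f t s (fun n => (h n).symm)⟩

theorem infOcc_shift {V : Type u} {f : V → Option V} {s v : V} {k : ℕ}
    (h : iter f s k = some v) : ∀ u, infOcc f s u ↔ infOcc f v u := by
  intro u
  constructor
  · intro hio N
    obtain ⟨n, hn1, hn2⟩ := hio (N + k)
    refine ⟨n - k, by omega, ?_⟩
    rw [← iter_shift h, show k + (n - k) = n by omega]
    exact hn2
  · intro hio N
    obtain ⟨n, hn1, hn2⟩ := hio N
    exact ⟨k + n, by omega, by rw [iter_shift h]; exact hn2⟩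

theorem traceWin_shift {V : Type u} {𝒱 : Type v} (S : Setting V 𝒱) {f : V → Option V} {s v : V}
    {k : ℕ} (h : iter f s k = some v) : S.TraceWin f s ↔ S.TraceWin f v := by
  constructor
  · rintro (⟨n, u, h1, h2, h3⟩ | ⟨h1, m, hm, ⟨u, hu1, hu2⟩, hmax⟩)
    · left
      rcases Nat.lt_or_ge n k with hn | hn
      · exfalso
        have : iter f s (n+1) = none := by rw [iter_succ, h1]; exact h2
        have := iter_none_mono (show n + 1 ≤ k by omega) this
        rw [this] at h; exact absurd h (by simp)
      · refine ⟨n - k, u, ?_, h2, h3⟩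
        rw [← iter_shift h, show k + (n - k) = n by omega]; exact h1
    · right
      refine ⟨fun n hn => ?_, m, hm, ⟨u, ((infOcc_shift h) u).1 hu1, hu2⟩,
        fun u' hu' => hmax u' (((infOcc_shift h) u').2 hu')⟩
      rw [← iter_shift h] at hn
      exact h1 _ hn
  · rintro (⟨n, u, h1, h2, h3⟩ | ⟨h1, m, hm, ⟨u, hu1, hu2⟩, hmax⟩)
    · exact Or.inl ⟨k + n, u, by rw [iter_shift h]; exact h1, h2, h3⟩
    · right
      refine ⟨fun n hn => ?_, m, hm, ⟨u, ((infOcc_shift h) u).2 hu1, hu2⟩,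
        fun u' hu' => hmax u' (((infOcc_shift h) u').1 hu')⟩
      rcases Nat.lt_or_ge n k with hn' | hn'
      · obtain ⟨u', hu'⟩ := iter_some_of_le h (show n ≤ k by omega)
        rw [hu'] at hn; simp at hn
      · have := h1 (n - k)
        rw [← iter_shift h, show k + (n - k) = n by omega] at this
        exact this hn

end Aux
namespace Aux
section Tree

variable {𝒱 : Type v} {T : SimpleGraph 𝒱} [DecidableEq 𝒱] {root : 𝒱}

theorem anc_of_isPath (hT : T.IsTree) {x y : 𝒱} {p : T.Walk root y} (hp : p.IsPath)
    (hx : x ∈ p.support) : Anc T root x y := fun q hq =>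
  ((hT.existsUnique_path root y).unique hp hq) ▸ hx

theorem exists_path (hT : T.IsTree) (u v : 𝒱) : ∃ p : T.Walk u v, p.IsPath :=
  (hT.existsUnique_path u v).exists

theorem anc_refl (y : 𝒱) : Anc T root y y := fun p _ => p.end_mem_support

theorem anc_root (y : 𝒱) : Anc T root root y := fun p _ => p.start_mem_support

theorem anc_trans {x y z : 𝒱} (hxy : Anc T root x y) (hyz : Anc T root y z) :
    Anc T root x z :=
  fun q hq => q.support_takeUntil_subset (hyz q hq) (hxy _ (hq.takeUntil (hyz q hq)))

theorem path_support_subset_walk (hT : T.IsTree) {u v : 𝒱} {p : T.Walk u v} (hp : p.IsPath)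
    (q : T.Walk u v) : p.support ⊆ q.support := by
  have h : q.bypass = p := (hT.existsUnique_path u v).unique q.bypass_isPath hp
  exact h ▸ q.support_bypass_subset

theorem anc_antisymm (hT : T.IsTree) {x y : 𝒱} (hxy : Anc T root x y)
    (hyx : Anc T root y x) : x = y := by
  obtain ⟨p, hp⟩ := exists_path hT root y
  have hx : x ∈ p.support := hxy p hp
  have hy : y ∈ (p.takeUntil x hx).support := hyx _ (hp.takeUntil hx)
  have hnd : p.support.Nodup := hp.support_nodup
  rw [← p.take_spec hx, SimpleGraph.Walk.support_append, List.nodup_append] at hnd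
  have hyd : y ∈ (p.dropUntil x hx).support := (p.dropUntil x hx).end_mem_support
  rw [SimpleGraph.Walk.support_eq_cons (p.dropUntil x hx)] at hyd
  rcases List.mem_cons.1 hyd with h | h
  · exact h.symm
  · exact absurd h (fun h' => hnd.2.2 _ hy _ h' rfl)

theorem anc_total (hT : T.IsTree) {x y z : 𝒱} (hxz : Anc T root x z) (hyz : Anc T root y z) :
    Anc T root x y ∨ Anc T root y x := by
  obtain ⟨p, hp⟩ := exists_path hT root z
  have hx : x ∈ p.support := hxz p hp
  have hy : y ∈ p.support := hyz p hp
  by_cases hxy : x ∈ (p.takeUntil y hy).support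
  · exact Or.inl (anc_of_isPath hT (hp.takeUntil hy) hxy)
  · right
    have hxd : x ∈ (p.dropUntil y hy).support := by
      have := hx
      rw [← p.take_spec hy, SimpleGraph.Walk.mem_support_append_iff] at this
      rcases this with h | h
      · exact absurd h hxy
      · exact h
    set dU := p.dropUntil y hy with hdU
    have hdUp : dU.IsPath := hp.dropUntil hy
    set r := dU.takeUntil x hxd with hr
    have hrp : r.IsPath := hdUp.takeUntil hxd
    set tk := p.takeUntil y hy with htk
    have htkp : tk.IsPath := hp.takeUntil hy
    -- r.support.tail is a prefix of dU.support.tail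
    have hsub : r.support.tail ⊆ dU.support.tail := by
      have hspec : r.support ++ (dU.dropUntil x hxd).support.tail = dU.support := by
        rw [← SimpleGraph.Walk.support_append, dU.take_spec hxd]
      have h1 : r.support = y :: r.support.tail := SimpleGraph.Walk.support_eq_cons r
      have h2 : dU.support = y :: dU.support.tail := SimpleGraph.Walk.support_eq_cons dU
      rw [h1] at hspec
      rw [h2] at hspec
      simp only [List.cons_append] at hspec
      have := (List.cons.inj hspec)
      intro a ha
      rw [← this.2]
      exact List.mem_append_left _ ha
    have hnd : p.support.Nodup := hp.support_nodup
    rw [← p.take_spec hy, SimpleGraph.Walk.support_append, List.nodup_append] at hnd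
    have hdisj : tk.support.Disjoint r.support.tail :=
      fun a ha hb => hnd.2.2 _ ha _ (hsub hb) rfl
    have hw : (tk.append r).IsPath := by
      apply SimpleGraph.Walk.IsPath.mk'
      rw [SimpleGraph.Walk.support_append]
      exact List.Nodup.append htkp.support_nodup
        (by
          have := hrp.support_nodup
          rw [SimpleGraph.Walk.support_eq_cons r] at this
          exact this.of_cons) hdisj
    apply anc_of_isPath hT hw
    rw [SimpleGraph.Walk.mem_support_append_iff]
    exact Or.inl tk.end_mem_support

theorem adj_anc_dichotomy (hT : T.IsTree) {a b : 𝒱} (h : T.Adj a b) :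
    Anc T root a b ∨ Anc T root b a := by
  obtain ⟨q, hq⟩ := exists_path hT root a
  by_cases hb : b ∈ q.support
  · exact Or.inr (anc_of_isPath hT hq hb)
  · left
    have hw : (q.concat h).IsPath := by
      apply SimpleGraph.Walk.IsPath.mk'
      rw [SimpleGraph.Walk.support_concat]
      exact List.Nodup.append hq.support_nodup (List.nodup_singleton b)
        (fun x hx hxb => hb ((List.mem_singleton.1 hxb) ▸ hx))
    apply anc_of_isPath hT hw
    rw [SimpleGraph.Walk.support_concat,
      List.mem_append]
    exact Or.inl q.end_mem_support

theorem anc_adj_between (hT : T.IsTree) {a b x : 𝒱} (h : T.Adj a b) (hab : Anc T root a b)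
    (hx : Anc T root x b) : x = b ∨ Anc T root x a := by
  obtain ⟨q, hq⟩ := exists_path hT root a
  have hb : b ∉ q.support := by
    intro hb
    exact h.ne (anc_antisymm hT hab (anc_of_isPath hT hq hb))
  have hw : (q.concat h).IsPath := by
    apply SimpleGraph.Walk.IsPath.mk'
    rw [SimpleGraph.Walk.support_concat]
    exact List.Nodup.append hq.support_nodup (List.nodup_singleton b)
      (fun y hy hyb => hb ((List.mem_singleton.1 hyb) ▸ hy))
  have hxw : x ∈ (q.concat h).support := hx _ hw
  rw [SimpleGraph.Walk.support_concat, List.mem_append] at hxw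
  rcases hxw with h' | h'
  · exact Or.inr (anc_of_isPath hT hq h')
  · exact Or.inl (List.mem_singleton.1 h')

theorem parent_unique (hT : T.IsTree) {a b c : 𝒱} (ha : T.Adj a c) (hb : T.Adj b c)
    (haa : Anc T root a c) (hba : Anc T root b c) : a = b := by
  rcases anc_adj_between hT ha haa hba with h | h
  · exact absurd h.symm hb.ne'
  · rcases anc_adj_between hT hb hba haa with h' | h'
    · exact absurd h'.symm ha.ne'
    · exact anc_antisymm hT h' h

theorem anc_mem_append (hT : T.IsTree) {x y z : 𝒱} (hxy : Anc T root x y)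
    (q : T.Walk root z) (r : T.Walk z y) : x ∈ q.support ∨ x ∈ r.support := by
  obtain ⟨p, hp⟩ := exists_path hT root y
  have hx : x ∈ p.support := hxy p hp
  have := path_support_subset_walk hT hp (q.append r) hx
  rwa [SimpleGraph.Walk.mem_support_append_iff] at this

end Tree
end Aux
namespace Aux
section Tree2

variable {𝒱 : Type v} {T : SimpleGraph 𝒱} [DecidableEq 𝒱] {root : 𝒱}

noncomputable def depth {𝒱 : Type v} {T : SimpleGraph 𝒱} (hT : T.IsTree) (root x : 𝒱) : ℕ :=
  (hT.existsUnique_path root x).choose.length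

theorem depth_lt (hT : T.IsTree) {x y : 𝒱} (hxy : Anc T root x y) (hne : x ≠ y) :
    depth hT root x < depth hT root y := by
  have hp : (hT.existsUnique_path root y).choose.IsPath :=
    (hT.existsUnique_path root y).choose_spec.1
  set p := (hT.existsUnique_path root y).choose with hpdef
  have hx : x ∈ p.support := hxy p hp
  have hdx : depth hT root x = (p.takeUntil x hx).length := by
    unfold depth
    exact congrArg SimpleGraph.Walk.length
      ((hT.existsUnique_path root x).choose_spec.2 _ (hp.takeUntil hx)).symm
  have hsplit : p.length = (p.takeUntil x hx).length + (p.dropUntil x hx).length := by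
    conv_lhs => rw [← p.take_spec hx]
    exact SimpleGraph.Walk.length_append _ _
  have hpos : 0 < (p.dropUntil x hx).length := by
    rcases Nat.eq_zero_or_pos (p.dropUntil x hx).length with h0 | h
    · exact absurd (SimpleGraph.Walk.Nil.eq (SimpleGraph.Walk.nil_iff_length_eq.2 h0)) hne
    · exact h
  have : depth hT root y = p.length := rfl
  omega

theorem induce_walk_support {W : Set 𝒱} :
    ∀ {a b : W} (_ : (T.induce W).Walk a b), ∃ w2 : T.Walk a b, ∀ x ∈ w2.support, x ∈ W := by
  intro a b w
  induction w with
  | @nil u => exact ⟨SimpleGraph.Walk.nil, by intro x hx; simp at hx; rw [hx]; exact u.2⟩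
  | @cons u c d hadj w ih =>
    obtain ⟨w2, hw2⟩ := ih
    refine ⟨SimpleGraph.Walk.cons (show T.Adj u c from hadj) w2, ?_⟩
    intro x hx
    rw [SimpleGraph.Walk.support_cons, List.mem_cons] at hx
    rcases hx with h | h
    · rw [h]; exact u.2
    · exact hw2 x h

theorem path_in_connected_set (hT : T.IsTree) {W : Set 𝒱}
    (hconn : (T.induce W).Connected) {y z : 𝒱} (hy : y ∈ W) (hz : z ∈ W)
    {p : T.Walk y z} (hp : p.IsPath) : ∀ x ∈ p.support, x ∈ W := by
  obtain ⟨w⟩ := hconn.preconnected ⟨y, hy⟩ ⟨z, hz⟩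
  obtain ⟨w2, hw2⟩ := induce_walk_support w
  intro x hx
  exact hw2 x (path_support_subset_walk hT hp w2 hx)

theorem exists_anc_min (hT : T.IsTree) [Fintype 𝒱] {W : Set 𝒱}
    (hconn : (T.induce W).Connected) (hW : W.Nonempty) :
    ∃ r ∈ W, ∀ x ∈ W, Anc T root r x := by
  obtain ⟨r, hr, hmin⟩ := Set.exists_min_image W (depth hT root) (Set.toFinite W) hW
  refine ⟨r, hr, ?_⟩
  have step : ∀ a ∈ W, ∀ c ∈ W, T.Adj a c → Anc T root r a → Anc T root r c := by
    intro a _ c hc hadj hra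
    rcases adj_anc_dichotomy (root := root) hT hadj with h | h
    · exact anc_trans hra h
    · rcases anc_total hT hra h with h' | h'
      · exact h'
      · by_cases hcr : c = r
        · rw [hcr]; exact anc_refl r
        · exact absurd (hmin c hc) (by have := depth_lt hT h' hcr; omega)
  intro x hx
  obtain ⟨w⟩ := hconn.preconnected ⟨r, hr⟩ ⟨x, hx⟩
  clear hmin
  suffices h : ∀ (a b : W) (_ : (T.induce W).Walk a b), Anc T root r a → Anc T root r b by
    exact h _ _ w (anc_refl r)
  intro a b w2
  induction w2 with
  | nil => exact fun h => h
  | @cons u c d hadj w3 ih =>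
    intro hra
    exact ih (step u u.2 c c.2 (by exact hadj) hra)

end Tree2
end Aux
namespace Aux
section Views
open Classical in
theorem selView_unique {V : Type u} {𝒱 : Type v} {S : Setting V 𝒱}
    {f : V → Option V} {i : ℕ} {x : 𝒱} {s : V} {w w' : View V}
    (h : S.SelView f i x s w) (h' : S.SelView f i x s w') : w = w' := by
  have key : ∀ w₁ w₂ : View V, S.SelView f i x s w₁ → S.SelView f i x s w₂ →
      (∀ t m t' m', w₁ = View.exit t m → w₂ = View.exit t' m' → (t = t' ∧ m ≤ m')) → True := by
    intros; trivial
  clear key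
  -- helper facts
  cases w with
  | unk =>
    cases w' with
    | unk => rfl
    | top =>
      exfalso
      simp only [Setting.SelView] at h h'
      rcases h with ⟨h1, h2⟩ | ⟨t, h1, h2⟩
      · rcases h'.1 with h3 | h3
        · exact h3 h1
        · exact h2 h3
      · exact h2 (h'.2.1 1 t le_rfl (by rw [Aux.iter_one]; exact h1))
    | bot =>
      exfalso
      simp only [Setting.SelView] at h h'
      rcases h with ⟨h1, h2⟩ | ⟨t, h1, h2⟩
      · rcases h'.1 with h3 | h3
        · exact h3 h1
        · exact h2 h3
      · exact h2 (h'.2.1 1 t le_rfl (by rw [Aux.iter_one]; exact h1))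
    | exit t' m' =>
      exfalso
      simp only [Setting.SelView] at h h'
      obtain ⟨j, hj2, hjt, _, hint, _, _⟩ := h'
      rcases h with ⟨h1, h2⟩ | ⟨t, h1, h2⟩
      · have : iter f s 1 = none := by rw [Aux.iter_one]; exact h1
        rw [Aux.iter_none_mono (show (1:ℕ) ≤ j by omega) this] at hjt
        exact absurd hjt (by simp)
      · exact h2 (hint 1 t le_rfl (by omega) (by rw [Aux.iter_one]; exact h1))
  | top =>
    cases w' with
    | unk =>
      exfalso
      simp only [Setting.SelView] at h h'
      rcases h' with ⟨h1, h2⟩ | ⟨t, h1, h2⟩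
      · rcases h.1 with h3 | h3
        · exact h3 h1
        · exact h2 h3
      · exact h2 (h.2.1 1 t le_rfl (by rw [Aux.iter_one]; exact h1))
    | top => rfl
    | bot => exact absurd h.2.2 (fun hw => h'.2.2 hw)
    | exit t' m' =>
      exfalso
      simp only [Setting.SelView] at h h'
      obtain ⟨j, hj2, hjt, hnt, _, _, _⟩ := h'
      exact hnt (h.2.1 j t' (by omega) hjt)
  | bot =>
    cases w' with
    | unk =>
      exfalso
      simp only [Setting.SelView] at h h'
      rcases h' with ⟨h1, h2⟩ | ⟨t, h1, h2⟩
      · rcases h.1 with h3 | h3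
        · exact h3 h1
        · exact h2 h3
      · exact h2 (h.2.1 1 t le_rfl (by rw [Aux.iter_one]; exact h1))
    | bot => rfl
    | top => exact absurd h'.2.2 (fun hw => h.2.2 hw)
    | exit t' m' =>
      exfalso
      simp only [Setting.SelView] at h h'
      obtain ⟨j, hj2, hjt, hnt, _, _, _⟩ := h'
      exact hnt (h.2.1 j t' (by omega) hjt)
  | exit t m =>
    cases w' with
    | unk =>
      exfalso
      simp only [Setting.SelView] at h h'
      obtain ⟨j, hj2, hjt, _, hint, _, _⟩ := h
      rcases h' with ⟨h1, h2⟩ | ⟨t'', h1, h2⟩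
      · have : iter f s 1 = none := by rw [Aux.iter_one]; exact h1
        rw [Aux.iter_none_mono (show (1:ℕ) ≤ j by omega) this] at hjt
        exact absurd hjt (by simp)
      · exact h2 (hint 1 t'' le_rfl (by omega) (by rw [Aux.iter_one]; exact h1))
    | top =>
      exfalso
      simp only [Setting.SelView] at h h'
      obtain ⟨j, hj2, hjt, hnt, _, _, _⟩ := h
      exact hnt (h'.2.1 j t (by omega) hjt)
    | bot =>
      exfalso
      simp only [Setting.SelView] at h h'
      obtain ⟨j, hj2, hjt, hnt, _, _, _⟩ := h
      exact hnt (h'.2.1 j t (by omega) hjt)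
    | exit t' m' =>
      simp only [Setting.SelView] at h h'
      obtain ⟨j, hj2, hjt, hnt, hint, hatt, hbd⟩ := h
      obtain ⟨j', hj2', hjt', hnt', hint', hatt', hbd'⟩ := h'
      have hjj : j = j' := by
        by_contra hne
        rcases Nat.lt_or_ge j j' with hlt | hge
        · exact hnt (hint' j t (by omega) hlt hjt)
        · exact hnt' (hint j' t' (by omega) (by omega) hjt')
      subst hjj
      have htt : t = t' := by
        rw [hjt] at hjt'; exact (Option.some.inj hjt')
      have hmm : m = m' := by
        obtain ⟨n, u, hn, hu, hcu⟩ := hatt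
        obtain ⟨n', u', hn', hu', hcu'⟩ := hatt'
        have := hbd' n u hn hu
        have := hbd n' u' hn' hu'
        omega
      rw [htt, hmm]

theorem selView_total {V : Type u} {𝒱 : Type v} (S : Setting V 𝒱)
    (f : V → Option V) (i : ℕ) (x : 𝒱) (s : V) : ∃ w, S.SelView f i x s w := by
  classical
  by_cases hstay : ∀ (n : ℕ), 1 ≤ n → ∀ t, iter f s n = some t → t ∈ S.psiGtAt i x
  · -- top, bot or unk
    by_cases hfirst : f s = none ∧ s ∉ S.psiGtAt i x
    · exact ⟨View.unk, Or.inl hfirst⟩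
    · by_cases hwin : S.TraceWin f s
      · refine ⟨View.top, ?_, fun n t h1 h2 => hstay n h1 t h2, hwin⟩
        by_cases h : f s = none
        · exact Or.inr (by_contra fun hc => hfirst ⟨h, hc⟩)
        · exact Or.inl h
      · refine ⟨View.bot, ?_, fun n t h1 h2 => hstay n h1 t h2, hwin⟩
        by_cases h : f s = none
        · exact Or.inr (by_contra fun hc => hfirst ⟨h, hc⟩)
        · exact Or.inl h
  · push_neg at hstay
    obtain ⟨n₀, hn₀1, t₀, ht₀, ht₀n⟩ := hstay
    rcases Nat.lt_or_ge n₀ 2 with hn₀2 | hn₀2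
    · -- n₀ = 1 : first step exits
      have : n₀ = 1 := by omega
      subst this
      exact ⟨View.unk, Or.inr ⟨t₀, ht₀, ht₀n⟩⟩
    · -- check whether step 1 already exits
      by_cases h1 : ∃ t, iter f s 1 = some t ∧ t ∉ S.psiGtAt i x
      · obtain ⟨t, ht, htn⟩ := h1
        exact ⟨View.unk, Or.inr ⟨t, ht, htn⟩⟩
      · push_neg at h1
        have hex : ∃ n, 1 ≤ n ∧ ∃ t, iter f s n = some t ∧ t ∉ S.psiGtAt i x :=
          ⟨n₀, hn₀1, t₀, ht₀, ht₀n⟩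
        have hj := Nat.find_spec hex
        set j := Nat.find hex with hjdef
        obtain ⟨hj1, t, hjt, hjtn⟩ := hj
        have hjmin : ∀ n, n < j → ¬ (1 ≤ n ∧ ∃ t, iter f s n = some t ∧ t ∉ S.psiGtAt i x) :=
          fun n hn => Nat.find_min hex hn
        have hj2 : 2 ≤ j := by
          rcases Nat.lt_or_ge j 2 with h | h
          · exfalso
            have hj1' : j = 1 := by omega
            have hjt1 : iter f s 1 = some t := by rw [← hj1']; exact hjt
            exact hjtn (h1 t hjt1)
          · exact h
        have hint : ∀ (n : ℕ) (u : V), 1 ≤ n → n < j → iter f s n = some u →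
            u ∈ S.psiGtAt i x := by
          intro n u hn1 hnj hu
          by_contra hc
          exact hjmin n hnj ⟨hn1, u, hu, hc⟩
        have hFne : (Finset.range j).Nonempty := ⟨0, by simp; omega⟩
        set F := (Finset.range j).image (fun n => S.c ((iter f s n).getD t)) with hF
        have hFne2 : F.Nonempty := hFne.image _
        set m := F.max' hFne2 with hm
        refine ⟨View.exit t m, j, hj2, hjt, hjtn, hint, ?_, ?_⟩
        · obtain ⟨n, hn, hcn⟩ := Finset.mem_image.1 (F.max'_mem hFne2)
          rw [Finset.mem_range] at hn
          obtain ⟨u, hu⟩ := Aux.iter_some_of_le hjt (show n ≤ j by omega)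
          refine ⟨n, u, hn, hu, ?_⟩
          rw [hu] at hcn
          exact hcn
        · intro n u hn hu
          have : S.c u ∈ F :=
            Finset.mem_image.2 ⟨n, Finset.mem_range.2 hn, by rw [hu]; rfl⟩
          exact F.le_max' _ this
end Views
end Aux
namespace Aux
section Views2

variable {V : Type u} {𝒱 : Type v} {S : Setting V 𝒱} {f g : V → Option V} {i i' : ℕ}
  {x x' : 𝒱} {s : V}

theorem selView_congr_set (hA : S.psiGtAt i x = S.psiGtAt i' x') (w : View V) :
    S.SelView f i x s w ↔ S.SelView f i' x' s w := by
  cases w <;> (simp only [Setting.SelView]; rw [hA])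

theorem selView_congr_fun (hiter : ∀ n, iter f s n = iter g s n) (w : View V) :
    S.SelView f i x s w ↔ S.SelView g i x s w := by
  have hfg : f s = g s := by
    have := hiter 1
    rwa [iter_one, iter_one] at this
  have htw := Aux.traceWin_congr S hiter
  cases w with
  | unk => simp only [Setting.SelView]; rw [hfg]
  | top =>
    simp only [Setting.SelView]
    rw [hfg]
    constructor <;> rintro ⟨a, b, c⟩
    · exact ⟨a, fun n t h1 h2 => b n t h1 (by rw [hiter n]; exact h2), htw.1 c⟩
    · exact ⟨a, fun n t h1 h2 => b n t h1 (by rw [← hiter n]; exact h2), htw.2 c⟩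
  | bot =>
    simp only [Setting.SelView]
    rw [hfg]
    constructor <;> rintro ⟨a, b, c⟩
    · exact ⟨a, fun n t h1 h2 => b n t h1 (by rw [hiter n]; exact h2), fun hw => c (htw.2 hw)⟩
    · exact ⟨a, fun n t h1 h2 => b n t h1 (by rw [← hiter n]; exact h2), fun hw => c (htw.1 hw)⟩
  | exit t m =>
    simp only [Setting.SelView]
    constructor <;> rintro ⟨j, hj2, hjt, hnt, hint, ⟨n, u, hn, hu, hcu⟩, hbd⟩
    · exact ⟨j, hj2, by rw [← hiter j]; exact hjt, hnt,
        fun n' u' h1 h2 h3 => hint n' u' h1 h2 (by rw [hiter n']; exact h3),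
        ⟨n, u, hn, by rw [← hiter n]; exact hu, hcu⟩,
        fun n' u' h1 h2 => hbd n' u' h1 (by rw [hiter n']; exact h2)⟩
    · exact ⟨j, hj2, by rw [hiter j]; exact hjt, hnt,
        fun n' u' h1 h2 h3 => hint n' u' h1 h2 (by rw [← hiter n']; exact h3),
        ⟨n, u, hn, by rw [hiter n]; exact hu, hcu⟩,
        fun n' u' h1 h2 => hbd n' u' h1 (by rw [← hiter n']; exact h2)⟩

theorem selView_dead (hsA : s ∈ S.psiGtAt i x) (hnone : f s = none) :
    (s ∉ S.V0 → S.SelView f i x s View.top) ∧ (s ∈ S.V0 → S.SelView f i x s View.bot) := by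
  have hit : ∀ n, 1 ≤ n → iter f s n = none := by
    intro n hn
    apply Aux.iter_none_mono hn
    rw [iter_one]; exact hnone
  have hstay : ∀ (n : ℕ) (t : V), 1 ≤ n → iter f s n = some t → t ∈ S.psiGtAt i x := by
    intro n t hn h
    rw [hit n hn] at h
    exact absurd h (by simp)
  have hwin : S.TraceWin f s ↔ s ∉ S.V0 := by
    constructor
    · rintro (⟨n, t, h1, h2, h3⟩ | ⟨h1, _⟩)
      · rcases Nat.eq_zero_or_pos n with h0 | h0
        · subst h0
          rw [iter_zero] at h1
          rw [Option.some.inj h1]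
          exact h3
        · rw [hit n h0] at h1; exact absurd h1 (by simp)
      · exact absurd (hit 1 le_rfl) (h1 1)
    · intro h
      exact Or.inl ⟨0, s, rfl, hnone, h⟩
  constructor
  · intro hv
    exact ⟨Or.inr hsA, hstay, hwin.2 hv⟩
  · intro hv
    exact ⟨Or.inr hsA, hstay, fun hw => (hwin.1 hw) hv⟩

theorem selView_loop {j m : ℕ} (hjs : iter f s j = some s) (hj1 : 1 ≤ j)
    (hsA : s ∈ S.psiGtAt i x)
    (hint : ∀ n, n < j → ∀ u, iter f s n = some u → u ∈ S.psiGtAt i x)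
    (hatt : ∃ n, n < j ∧ ∃ u, iter f s n = some u ∧ S.c u = m)
    (hbd : ∀ n, n < j → ∀ u, iter f s n = some u → S.c u ≤ m) :
    (Even m → S.SelView f i x s View.top) ∧ (¬ Even m → S.SelView f i x s View.bot) := by
  have hsome : ∀ n, ∃ u, iter f s n = some u := by
    intro n
    rw [Aux.iter_mod hjs n]
    exact Aux.iter_some_of_le hjs (le_of_lt (Nat.mod_lt n (by omega)))
  have hstay : ∀ (n : ℕ) (t : V), 1 ≤ n → iter f s n = some t → t ∈ S.psiGtAt i x := by
    intro n t _ h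
    rw [Aux.iter_mod hjs n] at h
    exact hint _ (Nat.mod_lt n (by omega)) t h
  have hio : ∀ u, infOcc f s u ↔ ∃ n, n < j ∧ iter f s n = some u := by
    intro u
    constructor
    · intro h
      obtain ⟨n, _, hn2⟩ := h 0
      exact ⟨n % j, Nat.mod_lt n (by omega), by rw [← Aux.iter_mod hjs n]; exact hn2⟩
    · rintro ⟨n, hn, hu⟩ N
      refine ⟨n + N * j, by nlinarith, ?_⟩
      rw [Aux.iter_periodic_mul hjs N n]
      exact hu
  have hnn : ∀ n, iter f s n ≠ none := by
    intro n h
    obtain ⟨u, hu⟩ := hsome n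
    rw [h] at hu; exact absurd hu (by simp)
  have hwin : S.TraceWin f s ↔ Even m := by
    constructor
    · rintro (⟨n, t, h1, h2, _⟩ | ⟨_, m', hm', ⟨u, hu1, hu2⟩, hbd'⟩)
      · exfalso
        apply hnn (n + 1)
        rw [iter_succ, h1]
        exact h2
      · have h1 : m' ≤ m := by
          obtain ⟨n, hn, hu⟩ := (hio u).1 hu1
          have := hbd n hn u hu
          omega
        have h2 : m ≤ m' := by
          obtain ⟨n, hn, u', hu', hcu'⟩ := hatt
          have := hbd' u' ((hio u').2 ⟨n, hn, hu'⟩)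
          omega
        have : m = m' := by omega
        rwa [this]
    · intro hm
      right
      refine ⟨hnn, m, hm, ?_, ?_⟩
      · obtain ⟨n, hn, u, hu, hcu⟩ := hatt
        exact ⟨u, (hio u).2 ⟨n, hn, hu⟩, hcu⟩
      · intro t ht
        obtain ⟨n, hn, hu⟩ := (hio t).1 ht
        exact hbd n hn t hu
  have hfirst : (f s ≠ none ∨ s ∈ S.psiGtAt i x) := Or.inr hsA
  constructor
  · intro hm
    exact ⟨hfirst, hstay, hwin.2 hm⟩
  · intro hm
    exact ⟨hfirst, hstay, fun hw => hm (hwin.1 hw)⟩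

-- Combination lemmas: prefix from `s` to `θ'` (inside the region), then view from `θ'`.
section Comb

variable {θ' : V} {j₁ m₁ : ℕ}
  (hj : iter f s j₁ = some θ') (hj1 : 1 ≤ j₁) (hθA : θ' ∈ S.psiGtAt i x)
  (hint : ∀ n, 1 ≤ n → n < j₁ → ∀ u, iter f s n = some u → u ∈ S.psiGtAt i x)
  (hatt : ∃ n, n < j₁ ∧ ∃ u, iter f s n = some u ∧ S.c u = m₁)
  (hbd : ∀ n, n < j₁ → ∀ u, iter f s n = some u → S.c u ≤ m₁)

include hj hj1 hθA hint

theorem comb_stay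
    (hstay : ∀ (n : ℕ) (t : V), 1 ≤ n → iter f θ' n = some t → t ∈ S.psiGtAt i x) :
    ∀ (n : ℕ) (t : V), 1 ≤ n → iter f s n = some t → t ∈ S.psiGtAt i x := by
  intro n t hn h
  rcases Nat.lt_or_ge n j₁ with h' | h'
  · exact hint n hn h' t h
  · rcases Nat.eq_or_lt_of_le h' with h'' | h''
    · rw [← h'', hj] at h
      rw [← Option.some.inj h]
      exact hθA
    · apply hstay (n - j₁) t (by omega)
      rw [← Aux.iter_shift hj, show j₁ + (n - j₁) = n by omega]
      exact h

theorem comb_first : f s ≠ none ∨ s ∈ S.psiGtAt i x := by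
  left
  obtain ⟨u, hu⟩ := Aux.iter_some_of_le hj hj1
  rw [show f s = iter f s 1 from rfl]
  intro h
  rw [Aux.iter_none_mono hj1 h] at hj
  exact absurd hj (by simp)

theorem comb_top (hv : S.SelView f i x θ' View.top) : S.SelView f i x s View.top := by
  obtain ⟨h1, h2, h3⟩ := hv
  exact ⟨comb_first hj hj1 hθA hint, comb_stay hj hj1 hθA hint h2, (Aux.traceWin_shift S hj).2 h3⟩

theorem comb_bot (hv : S.SelView f i x θ' View.bot) : S.SelView f i x s View.bot := by
  obtain ⟨h1, h2, h3⟩ := hv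
  exact ⟨comb_first hj hj1 hθA hint, comb_stay hj hj1 hθA hint h2,
    fun hw => h3 ((Aux.traceWin_shift S hj).1 hw)⟩

include hatt hbd

theorem comb_exit {t : V} {m₂ : ℕ} (hv : S.SelView f i x θ' (View.exit t m₂)) :
    S.SelView f i x s (View.exit t (max m₁ m₂)) := by
  obtain ⟨j₂, hj₂2, hjt, hnt, hint₂, hatt₂, hbd₂⟩ := hv
  refine ⟨j₁ + j₂, by omega, by rw [Aux.iter_shift hj]; exact hjt, hnt, ?_, ?_, ?_⟩
  · intro n u hn1 hnj h
    rcases Nat.lt_or_ge n j₁ with h' | h'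
    · exact hint n hn1 h' u h
    · rcases Nat.eq_or_lt_of_le h' with h'' | h''
      · rw [← h'', hj] at h
        rw [← Option.some.inj h]
        exact hθA
      · apply hint₂ (n - j₁) u (by omega) (by omega)
        rw [← Aux.iter_shift hj, show j₁ + (n - j₁) = n by omega]
        exact h
  · rcases le_or_gt m₂ m₁ with hm | hm
    · obtain ⟨n, hn, u, hu, hcu⟩ := hatt
      exact ⟨n, u, by omega, hu, by omega⟩
    · obtain ⟨n, u, hn, hu, hcu⟩ := hatt₂
      refine ⟨j₁ + n, u, by omega, by rw [Aux.iter_shift hj]; exact hu, by omega⟩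
  · intro n u hn h
    rcases Nat.lt_or_ge n j₁ with h' | h'
    · have := hbd n h' u h
      omega
    · have := hbd₂ (n - j₁) u (by omega)
        (by rw [← Aux.iter_shift hj, show j₁ + (n - j₁) = n by omega]; exact h)
      omega

theorem comb_unk_exit {t : V} (ht : f θ' = some t) (htA : t ∉ S.psiGtAt i x) :
    S.SelView f i x s (View.exit t (max m₁ (S.c θ'))) := by
  refine ⟨j₁ + 1, by omega, by rw [Aux.iter_shift hj]; exact ht, htA, ?_, ?_, ?_⟩
  · intro n u hn1 hnj h
    rcases Nat.lt_or_ge n j₁ with h' | h'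
    · exact hint n hn1 h' u h
    · have : n = j₁ := by omega
      rw [this, hj] at h
      rw [← Option.some.inj h]
      exact hθA
  · rcases le_or_gt (S.c θ') m₁ with hm | hm
    · obtain ⟨n, hn, u, hu, hcu⟩ := hatt
      exact ⟨n, u, by omega, hu, by omega⟩
    · exact ⟨j₁, θ', by omega, hj, by omega⟩
  · intro n u hn h
    rcases Nat.lt_or_ge n j₁ with h' | h'
    · have := hbd n h' u h
      omega
    · have : n = j₁ := by omega
      rw [this, hj] at h
      rw [← Option.some.inj h]
      omega

end Comb
end Views2
end Aux
namespace Aux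
section Struct

variable {𝒱 : Type v} {T : SimpleGraph 𝒱} [DecidableEq 𝒱] {root : 𝒱} {vs : ℕ → 𝒱}

theorem walk_invariant {W : Set 𝒱} (hconn : (T.induce W).Connected) (P : 𝒱 → Prop)
    (hstep : ∀ a ∈ W, ∀ c ∈ W, T.Adj a c → P a → P c) {y z : 𝒱} (hy : y ∈ W) (hz : z ∈ W)
    (hPy : P y) : P z := by
  obtain ⟨w⟩ := hconn.preconnected ⟨y, hy⟩ ⟨z, hz⟩
  suffices h : ∀ (a b : W) (_ : (T.induce W).Walk a b), P a → P b from h _ _ w hPy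
  intro a b w2
  induction w2 with
  | nil => exact fun h => h
  | @cons u c d hadj w3 ih => exact fun hpa => ih (hstep u u.2 c c.2 (by exact hadj) hpa)

theorem thetaLe_mem {x : 𝒱} {i : ℕ} :
    x ∈ ThetaLe T root vs i ↔ ∃ j, 1 ≤ j ∧ j ≤ i ∧ Anc T root x (vs j) := Iff.rfl

theorem thetaLe_upclosed {a b : 𝒱} {i : ℕ} (h : Anc T root a b)
    (hb : b ∈ ThetaLe T root vs i) : a ∈ ThetaLe T root vs i := by
  obtain ⟨j, h1, h2, hb⟩ := hb
  exact ⟨j, h1, h2, anc_trans h hb⟩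

theorem vs_mem_thetaLe {j i : ℕ} (h1 : 1 ≤ j) (h2 : j ≤ i) :
    vs j ∈ ThetaLe T root vs i := ⟨j, h1, h2, anc_refl _⟩

theorem thetaLe_mono {i j : ℕ} (h : i ≤ j) :
    ThetaLe T root vs i ⊆ ThetaLe T root vs j := by
  rintro x ⟨k, h1, h2, h3⟩
  exact ⟨k, h1, by omega, h3⟩

theorem thetaLe_succ {i : ℕ} (hi : 1 ≤ i) {x : 𝒱} :
    x ∈ ThetaLe T root vs (i + 1) ↔ x ∈ ThetaLe T root vs i ∨ x ∈ Theta T root vs (i+1) := by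
  constructor
  · rintro ⟨k, h1, h2, h3⟩
    rcases Nat.lt_or_ge k (i+1) with h | h
    · exact Or.inl ⟨k, h1, by omega, h3⟩
    · have : k = i + 1 := by omega
      subst this
      exact Or.inr h3
  · rintro (h | h)
    · exact thetaLe_mono (by omega) h
    · exact ⟨i+1, by omega, le_rfl, h⟩

theorem theta_subset_pred (hT : T.IsTree) {ℓ : ℕ} (hdft : IsDFT T root ℓ vs) {i : ℕ}
    (hi1 : 1 ≤ i) (hiℓ : i ≤ ℓ) :
    Theta T root vs i ⊆ ThetaLe T root vs (i-1) ∪ {vs i} := by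
  intro x hx
  have hx' : Anc T root x (vs i) := hx
  rcases Nat.lt_or_ge i 2 with h2 | h2
  · have : i = 1 := by omega
    subst this
    right
    rw [hdft.first] at hx' ⊢
    exact anc_antisymm hT hx' (anc_root x)
  · have hadj : T.Adj (vs (i-1)) (vs i) := by
      have := hdft.adj (i-1) (by omega) (by omega)
      rwa [show i - 1 + 1 = i by omega] at this
    rcases adj_anc_dichotomy (root := root) hT hadj with h | h
    · rcases anc_adj_between hT hadj h hx' with h' | h'
      · right; exact h'
      · left; exact ⟨i-1, by omega, le_rfl, h'⟩
    · left
      exact ⟨i-1, by omega, le_rfl, anc_trans hx' h⟩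

end Struct

section Struct2

variable {V : Type u} {𝒱 : Type v} [DecidableEq 𝒱] {S : Setting V 𝒱}

theorem mem_psiLe {z : 𝒱} {t : V} {i : ℕ} (hz : z ∈ ThetaLe S.T S.root S.vs i)
    (ht : t ∈ S.B z) : t ∈ S.psiLe i := by
  obtain ⟨k, h1, h2, h3⟩ := hz
  exact ⟨k, h1, h2, z, h3, ht⟩

theorem psiLe_mono {i j : ℕ} (h : i ≤ j) : S.psiLe i ⊆ S.psiLe j := by
  rintro t ⟨k, h1, h2, h3⟩
  exact ⟨k, h1, by omega, h3⟩

theorem fresh_vsi (hT : S.T.IsTree) (hdft : IsDFT S.T S.root S.len S.vs) {i : ℕ} {θ : V}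
    (hi1 : 1 ≤ i) (hiℓ : i ≤ S.len) (hθnot : θ ∉ S.psiLe (i-1)) (hθ2 : θ ∈ S.psiLe i) :
    S.vs i ∉ ThetaLe S.T S.root S.vs (i-1) ∧ θ ∈ S.B (S.vs i) := by
  obtain ⟨k, hk1, hk2, z, hz, hθz⟩ := hθ2
  have hki : k = i := by
    by_contra h
    exact hθnot ⟨k, hk1, by omega, z, hz, hθz⟩
  subst hki
  have hz' := theta_subset_pred hT hdft hk1 hiℓ hz
  rcases hz' with h | h
  · exact absurd (mem_psiLe h hθz) hθnot
  · have hz'' : z = S.vs k := h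
    subst hz''
    refine ⟨?_, hθz⟩
    intro hmem
    exact hθnot (mem_psiLe hmem hθz)

theorem fresh_below (hT : S.T.IsTree) {i : ℕ} (hi1 : 1 ≤ i)
    (hfresh : S.vs i ∉ ThetaLe S.T S.root S.vs (i-1)) :
    ∀ a ∈ ThetaLe S.T S.root S.vs i, Anc S.T S.root (S.vs i) a → a = S.vs i := by
  rintro a ⟨k, hk1, hk2, ha⟩ hanc
  have : Anc S.T S.root (S.vs i) (S.vs k) := anc_trans hanc ha
  rcases Nat.lt_or_ge k i with h | h
  · exact absurd ⟨k, hk1, by omega, this⟩ hfresh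
  · have : k = i := by omega
    subst this
    exact anc_antisymm hT ha hanc

theorem sep_lemma (hT : S.T.IsTree)
    (hconn : ∀ s : V, (S.T.induce {x : 𝒱 | s ∈ S.B x}).Connected) {i : ℕ}
    (hfreshb : ∀ a ∈ ThetaLe S.T S.root S.vs i, Anc S.T S.root (S.vs i) a → a = S.vs i)
    {y : 𝒱} {t : V} (hy1 : y ∉ ThetaLe S.T S.root S.vs i) (hy2 : Anc S.T S.root (S.vs i) y)
    (hty : t ∈ S.B y) (htcov : t ∈ S.psiLe i) : t ∈ S.B (S.vs i) := by
  obtain ⟨k, hk1, hk2, z, hz, htz⟩ := htcov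
  have hzLe : z ∈ ThetaLe S.T S.root S.vs i := ⟨k, hk1, hk2, hz⟩
  by_cases hvz : Anc S.T S.root (S.vs i) z
  · have := hfreshb z hzLe hvz
    subst this
    exact htz
  · obtain ⟨qz, hqz⟩ := exists_path hT S.root z
    have hvq : S.vs i ∉ qz.support := fun h => hvz (anc_of_isPath hT hqz h)
    obtain ⟨r, hr⟩ := exists_path hT z y
    rcases anc_mem_append hT hy2 qz r with h | h
    · exact absurd h hvq
    · exact path_in_connected_set hT (hconn t) htz hty hr _ h

theorem bagRoot_exists (hT : S.T.IsTree) [Fintype 𝒱]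
    (hconn : ∀ s : V, (S.T.induce {x : 𝒱 | s ∈ S.B x}).Connected)
    (hne : ∀ s : V, ∃ x : 𝒱, s ∈ S.B x) (s : V) :
    ∃ r : 𝒱, IsBagRoot S.T S.root S.B s r := by
  obtain ⟨x, hx⟩ := hne s
  obtain ⟨r, hr, hmin⟩ := exists_anc_min (root := S.root) hT (hconn s) ⟨x, hx⟩
  exact ⟨r, hr, hmin⟩

theorem bagRoot_unique (hT : S.T.IsTree) {s : V} {r r' : 𝒱}
    (h : IsBagRoot S.T S.root S.B s r) (h' : IsBagRoot S.T S.root S.B s r') : r = r' :=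
  anc_antisymm hT (h.2 r' h'.1) (h'.2 r h.1)

theorem bagRoot_theta (hT : S.T.IsTree)
    (hconn : ∀ s : V, (S.T.induce {x : 𝒱 | s ∈ S.B x}).Connected) {i : ℕ} {θ : V}
    (hθB : θ ∈ S.B (S.vs i)) (hθnot : θ ∉ S.psiLe (i-1))
    (hsub : Theta S.T S.root S.vs i ⊆ ThetaLe S.T S.root S.vs (i-1) ∪ {S.vs i}) :
    IsBagRoot S.T S.root S.B θ (S.vs i) := by
  refine ⟨hθB, fun x hx => ?_⟩
  refine walk_invariant (hconn θ) (fun u => Anc S.T S.root (S.vs i) u) ?_ hθB hx (anc_refl _)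
  intro a ha c hc hadj hPa
  rcases adj_anc_dichotomy (root := S.root) hT hadj with h | h
  · exact anc_trans hPa h
  · rcases anc_total hT hPa h with h' | h'
    · exact h'
    · rcases hsub h' with h'' | h''
      · exact absurd (mem_psiLe h'' hc) hθnot
      · rw [h'']; exact anc_refl _

end Struct2
end Aux
namespace Aux
section CaseA

variable {V : Type u} {𝒱 : Type v} [Fintype V] [DecidableEq V] [Fintype 𝒱] [DecidableEq 𝒱]
  {S : Setting V 𝒱} {i : ℕ} {θ : V}

/-- Common context for the critical-index argument. -/
structure Ctx (S : Setting V 𝒱) (i : ℕ) (θ : V) : Prop where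
  hT : S.T.IsTree
  hcover : ∀ s t : V, S.E s t → ∃ x : 𝒱, s ∈ S.B x ∧ t ∈ S.B x
  hconn : ∀ s : V, (S.T.induce {x : 𝒱 | s ∈ S.B x}).Connected
  hne : ∀ s : V, ∃ x, s ∈ S.B x
  hdft : IsDFT S.T S.root S.len S.vs
  hi1 : 1 ≤ i
  hilt : i < S.len
  hcompl : ∀ s' : V, s' ∉ S.psiLe (i-1) ↔ (s' = θ ∨ s' ∉ S.psiLe i)
  hθcov : θ ∈ S.psiLe i

namespace Ctx

variable (C : _root_.Aux.Ctx S i θ)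

include C

theorem hθnot : θ ∉ S.psiLe (i-1) := (C.hcompl θ).2 (Or.inl rfl)

theorem notPsiLe {s' : V} (h : s' ∉ S.psiLe i) : s' ∉ S.psiLe (i-1) :=
  fun hc => h (psiLe_mono (by omega) hc)

theorem adj : S.T.Adj (S.vs i) (S.vs (i+1)) := C.hdft.adj i C.hi1 C.hilt

theorem fresh : S.vs i ∉ ThetaLe S.T S.root S.vs (i-1) :=
  (fresh_vsi C.hT C.hdft C.hi1 C.hilt.le C.hθnot C.hθcov).1

theorem θB : θ ∈ S.B (S.vs i) :=
  (fresh_vsi C.hT C.hdft C.hi1 C.hilt.le C.hθnot C.hθcov).2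

theorem fb : ∀ a ∈ ThetaLe S.T S.root S.vs i, Anc S.T S.root (S.vs i) a → a = S.vs i :=
  fresh_below C.hT C.hi1 C.fresh

theorem brθ : IsBagRoot S.T S.root S.B θ (S.vs i) :=
  bagRoot_theta C.hT C.hconn C.θB C.hθnot
    (fun x hx => theta_subset_pred C.hT C.hdft C.hi1 C.hilt.le hx)

theorem vsi_mem : S.vs i ∈ ThetaLe S.T S.root S.vs i := vs_mem_thetaLe C.hi1 le_rfl

theorem vsi1_mem : S.vs (i+1) ∈ ThetaLe S.T S.root S.vs (i+1) :=
  vs_mem_thetaLe (by omega) le_rfl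

theorem θmem : θ ∈ S.psiGtAt i (S.vs i) :=
  ⟨C.hθnot, S.vs i, C.brθ, anc_refl _, C.vsi_mem, fun _ h _ => h⟩

theorem θnotA1 : θ ∉ S.psiGtAt (i+1) (S.vs i) := fun h => h.1 C.hθcov

theorem θnotA2 : θ ∉ S.psiGtAt (i+1) (S.vs (i+1)) := fun h => h.1 C.hθcov

theorem only_vsi {s' : V} {x : 𝒱} (h : s' ∈ S.psiGtAt i x) (hx : x ≠ S.vs i) : s' ≠ θ := by
  rintro rfl
  obtain ⟨_, r, hbr, hL⟩ := h
  have hr : r = S.vs i := bagRoot_unique C.hT hbr C.brθ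
  subst hr
  exact hx (anc_antisymm C.hT hL.1 (hL.2.2 _ (anc_refl _) C.vsi_mem))

theorem sep {y : 𝒱} {t : V} (hy1 : y ∉ ThetaLe S.T S.root S.vs i)
    (hy2 : Anc S.T S.root (S.vs i) y) (hty : t ∈ S.B y) (htcov : t ∈ S.psiLe i) :
    t ∈ S.B (S.vs i) :=
  sep_lemma C.hT C.hconn C.fb hy1 hy2 hty htcov

/-! #### Case A : `vs (i+1)` is a child of `vs i` -/

variable (hA : Anc S.T S.root (S.vs i) (S.vs (i+1)))

include hA

theorem freshA : S.vs (i+1) ∉ ThetaLe S.T S.root S.vs i := by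
  rintro ⟨k, hk1, hk2, hk3⟩
  have h1 : Anc S.T S.root (S.vs i) (S.vs k) := anc_trans hA hk3
  rcases Nat.lt_or_ge k i with h | h
  · exact C.fresh ⟨k, hk1, by omega, h1⟩
  · have : k = i := by omega
    subst this
    exact (C.adj).ne (anc_antisymm C.hT hA hk3)

theorem fbA : ∀ a ∈ ThetaLe S.T S.root S.vs (i+1),
    Anc S.T S.root (S.vs (i+1)) a → a = S.vs (i+1) :=
  fresh_below C.hT (by omega) (C.freshA hA)

theorem sepA {y : 𝒱} {t : V} (hy1 : y ∉ ThetaLe S.T S.root S.vs (i+1))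
    (hy2 : Anc S.T S.root (S.vs (i+1)) y) (hty : t ∈ S.B y) (htcov : t ∈ S.psiLe (i+1)) :
    t ∈ S.B (S.vs (i+1)) :=
  sep_lemma C.hT C.hconn (C.fbA hA) hy1 hy2 hty htcov

theorem not_anc1_vsi : ¬ Anc S.T S.root (S.vs (i+1)) (S.vs i) :=
  fun h => (C.adj).ne (anc_antisymm C.hT hA h)

-- region 1 bags produce A1 vertices
theorem r1a {y : 𝒱} (hy1 : y ∉ ThetaLe S.T S.root S.vs i)
    (hy2 : Anc S.T S.root (S.vs i) y) (hy3 : ¬ Anc S.T S.root (S.vs (i+1)) y)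
    {t : V} (hty : t ∈ S.B y) (htun : t ∉ S.psiLe i) : t ∈ S.psiGtAt (i+1) (S.vs i) := by
  obtain ⟨r, hbr⟩ := bagRoot_exists C.hT C.hconn C.hne t
  have hry : Anc S.T S.root r y := hbr.2 y hty
  have h1 : Anc S.T S.root (S.vs i) r := by
    rcases anc_total C.hT hy2 hry with h | h
    · exact h
    · exact absurd (mem_psiLe (thetaLe_upclosed h C.vsi_mem) hbr.1) htun
  refine ⟨htun, r, hbr, h1, thetaLe_mono (by omega) C.vsi_mem, ?_⟩
  intro z hz hzLe
  rcases (thetaLe_succ C.hi1).1 hzLe with h | h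
  · rcases anc_total C.hT (anc_trans hz hry) hy2 with h' | h'
    · exact h'
    · rw [C.fb z h h']
      exact anc_refl _
  · by_cases hz1 : z = S.vs (i+1)
    · subst hz1
      exact absurd (anc_trans hz hry) hy3
    · rcases anc_adj_between C.hT C.adj hA h with h' | h'
      · exact absurd h' hz1
      · exact h'

-- region 2 bags produce A2 vertices
theorem r2a {y : 𝒱} (hy1 : y ∉ ThetaLe S.T S.root S.vs i)
    (hy2 : Anc S.T S.root (S.vs (i+1)) y)
    {t : V} (hty : t ∈ S.B y) (htun : t ∉ S.psiLe i) : t ∈ S.psiGtAt (i+1) (S.vs (i+1)) := by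
  obtain ⟨r, hbr⟩ := bagRoot_exists C.hT C.hconn C.hne t
  have hry : Anc S.T S.root r y := hbr.2 y hty
  have h1 : Anc S.T S.root (S.vs (i+1)) r := by
    rcases anc_total C.hT hy2 hry with h | h
    · exact h
    · by_cases hr1 : r = S.vs (i+1)
      · rw [hr1]; exact anc_refl _
      · rcases anc_adj_between C.hT C.adj hA h with h' | h'
        · exact absurd h' hr1
        · exact absurd (mem_psiLe (thetaLe_upclosed h' C.vsi_mem) hbr.1) htun
  refine ⟨htun, r, hbr, h1, C.vsi1_mem, ?_⟩
  intro z hz hzLe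
  rcases (thetaLe_succ C.hi1).1 hzLe with h | h
  · rcases anc_total C.hT (anc_trans hz hry) (anc_trans hA hy2) with h' | h'
    · exact anc_trans h' hA
    · rw [C.fb z h h']
      exact hA
  · exact h

-- bags of A1 vertices lie in region 1
theorem r1b {u : V} (hu : u ∈ S.psiGtAt (i+1) (S.vs i)) {y : 𝒱} (huy : u ∈ S.B y) :
    y ∉ ThetaLe S.T S.root S.vs i ∧ Anc S.T S.root (S.vs i) y ∧
      ¬ Anc S.T S.root (S.vs (i+1)) y := by
  obtain ⟨hun, r, hbr, hL⟩ := hu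
  have hry : Anc S.T S.root r y := hbr.2 y huy
  have hrnot : r ∉ ThetaLe S.T S.root S.vs i := by
    intro h
    exact hun (mem_psiLe h hbr.1)
  have hmax := hL.2.2
  have hnot1r : ¬ Anc S.T S.root (S.vs (i+1)) r := by
    intro h
    exact (C.adj).ne (anc_antisymm C.hT hA (hmax _ h C.vsi1_mem))
  refine ⟨?_, anc_trans hL.1 hry, ?_⟩
  · intro h
    exact hrnot (thetaLe_upclosed hry h)
  · intro h
    rcases anc_total C.hT h hry with h' | h'
    · exact hnot1r h'
    · by_cases hr1 : r = S.vs (i+1)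
      · exact hnot1r (hr1 ▸ anc_refl _)
      · rcases anc_adj_between C.hT C.adj hA h' with h'' | h''
        · exact hr1 h''
        · exact hrnot (thetaLe_upclosed h'' C.vsi_mem)

-- bags of A2 vertices lie in region 2
theorem r2b {u : V} (hu : u ∈ S.psiGtAt (i+1) (S.vs (i+1))) {y : 𝒱} (huy : u ∈ S.B y) :
    y ∉ ThetaLe S.T S.root S.vs i ∧ Anc S.T S.root (S.vs (i+1)) y := by
  obtain ⟨hun, r, hbr, hL⟩ := hu
  have hry : Anc S.T S.root r y := hbr.2 y huy
  have hrnot : r ∉ ThetaLe S.T S.root S.vs i := fun h => hun (mem_psiLe h hbr.1)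
  exact ⟨fun h => hrnot (thetaLe_upclosed hry h), anc_trans hL.1 hry⟩

omit hA

-- bags of θ
theorem rθ {y : 𝒱} (hθy : θ ∈ S.B y) (hy : y ≠ S.vs i) :
    y ∉ ThetaLe S.T S.root S.vs i ∧ Anc S.T S.root (S.vs i) y := by
  have h2 : Anc S.T S.root (S.vs i) y := C.brθ.2 y hθy
  exact ⟨fun h => hy (C.fb y h h2), h2⟩

/-- steps from covered vertices into A2 happen at vertices of `B (vs (i+1))`. -/
theorem entry2 {p t : V} (hp : p ∈ S.psiLe i) (hE : S.E p t)
    (ht : t ∈ S.psiGtAt (i+1) (S.vs (i+1))) (hA : Anc S.T S.root (S.vs i) (S.vs (i+1))) :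
    p ∈ S.B (S.vs (i+1)) := by
  obtain ⟨y, hpy, hty⟩ := C.hcover p t hE
  obtain ⟨hy1, hy2⟩ := C.r2b hA ht hty
  by_cases hy3 : y = S.vs (i+1)
  · rwa [hy3] at hpy
  · have hy4 : y ∉ ThetaLe S.T S.root S.vs (i+1) := by
      intro h
      rcases (thetaLe_succ C.hi1).1 h with h' | h'
      · exact hy1 h'
      · exact hy3 (anc_antisymm C.hT h' hy2)
    exact C.sepA hA hy4 hy2 hpy (psiLe_mono (by omega) hp)

/-- classification of a step from an A1 vertex. -/
theorem stepA1 {u t : V} (hu : u ∈ S.psiGtAt (i+1) (S.vs i)) (hE : S.E u t)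
    (hA : Anc S.T S.root (S.vs i) (S.vs (i+1))) :
    t ∈ S.psiGtAt (i+1) (S.vs i) ∨ (t ∈ S.psiLe i ∧ t ∈ S.B (S.vs i)) := by
  obtain ⟨y, huy, hty⟩ := C.hcover u t hE
  obtain ⟨hy1, hy2, hy3⟩ := C.r1b hA hu huy
  by_cases htun : t ∈ S.psiLe i
  · exact Or.inr ⟨htun, C.sep hy1 hy2 hty htun⟩
  · exact Or.inl (C.r1a hA hy1 hy2 hy3 hty htun)

/-- classification of a step from an A2 vertex. -/
theorem stepA2 {u t : V} (hu : u ∈ S.psiGtAt (i+1) (S.vs (i+1))) (hE : S.E u t)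
    (hA : Anc S.T S.root (S.vs i) (S.vs (i+1))) :
    t ∈ S.psiGtAt (i+1) (S.vs (i+1)) ∨ (t ∈ S.psiLe i ∧ t ∈ S.B (S.vs i)) := by
  obtain ⟨y, huy, hty⟩ := C.hcover u t hE
  obtain ⟨hy1, hy2⟩ := C.r2b hA hu huy
  by_cases htun : t ∈ S.psiLe i
  · exact Or.inr ⟨htun, C.sep hy1 (anc_trans hA hy2) hty htun⟩
  · exact Or.inl (C.r2a hA hy1 hy2 hty htun)

/-- classification of a step from θ. -/
theorem stepθ {t : V} (hE : S.E θ t) (hA : Anc S.T S.root (S.vs i) (S.vs (i+1))) :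
    (t ∈ S.psiLe i ∧ t ∈ S.B (S.vs i)) ∨ t ∈ S.psiGtAt (i+1) (S.vs i) ∨
      (t ∈ S.psiGtAt (i+1) (S.vs (i+1)) ∧ θ ∈ S.B (S.vs (i+1))) := by
  obtain ⟨y, hθy, hty⟩ := C.hcover θ t hE
  by_cases hy : y = S.vs i
  · subst hy
    exact Or.inl ⟨mem_psiLe C.vsi_mem hty, hty⟩
  · obtain ⟨hy1, hy2⟩ := C.rθ hθy hy
    by_cases htun : t ∈ S.psiLe i
    · exact Or.inl ⟨htun, C.sep hy1 hy2 hty htun⟩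
    · by_cases hy3 : Anc S.T S.root (S.vs (i+1)) y
      · have ht2 := C.r2a hA hy1 hy3 hty htun
        exact Or.inr (Or.inr ⟨ht2, C.entry2 C.hθcov hE ht2 hA⟩)
      · exact Or.inr (Or.inl (C.r1a hA hy1 hy2 hy3 hty htun))

/-- decomposition of the region at index `i`. -/
theorem Acases {s' : V} (hs : s' ∈ S.psiGtAt i (S.vs i))
    (hA : Anc S.T S.root (S.vs i) (S.vs (i+1))) :
    s' = θ ∨ s' ∈ S.psiGtAt (i+1) (S.vs i) ∨ s' ∈ S.psiGtAt (i+1) (S.vs (i+1)) := by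
  obtain ⟨hnot, r, hbr, hL⟩ := hs
  by_cases hsθ : s' = θ
  · exact Or.inl hsθ
  · have hun : s' ∉ S.psiLe i := by
      rcases (C.hcompl s').1 hnot with h | h
      · exact absurd h hsθ
      · exact h
    by_cases hanc : Anc S.T S.root (S.vs (i+1)) r
    · refine Or.inr (Or.inr ⟨hun, r, hbr, hanc, C.vsi1_mem, ?_⟩)
      intro z hz hzLe
      rcases (thetaLe_succ C.hi1).1 hzLe with h | h
      · exact anc_trans (hL.2.2 z hz h) hA
      · exact h
    · refine Or.inr (Or.inl ⟨hun, r, hbr, hL.1, thetaLe_mono (by omega) C.vsi_mem, ?_⟩)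
      intro z hz hzLe
      rcases (thetaLe_succ C.hi1).1 hzLe with h | h
      · exact hL.2.2 z hz h
      · by_cases hz1 : z = S.vs (i+1)
        · subst hz1
          exact absurd hz hanc
        · rcases anc_adj_between C.hT C.adj hA h with h' | h'
          · exact absurd h' hz1
          · exact h'

theorem A1sub {s' : V} (hs : s' ∈ S.psiGtAt (i+1) (S.vs i)) : s' ∈ S.psiGtAt i (S.vs i) := by
  obtain ⟨hnot, r, hbr, hL⟩ := hs
  exact ⟨(C.hcompl s').2 (Or.inr hnot), r, hbr, hL.1, C.vsi_mem,
    fun z hz hzLe => hL.2.2 z hz (thetaLe_mono (by omega) hzLe)⟩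

theorem A2sub {s' : V} (hs : s' ∈ S.psiGtAt (i+1) (S.vs (i+1)))
    (hA : Anc S.T S.root (S.vs i) (S.vs (i+1))) : s' ∈ S.psiGtAt i (S.vs i) := by
  obtain ⟨hnot, r, hbr, hL⟩ := hs
  refine ⟨(C.hcompl s').2 (Or.inr hnot), r, hbr, anc_trans hA hL.1, C.vsi_mem, ?_⟩
  intro z hz hzLe
  have h' := hL.2.2 z hz (thetaLe_mono (by omega) hzLe)
  rcases anc_total C.hT h' hA with h'' | h''
  · exact h''
  · rw [C.fb z hzLe h'']
    exact anc_refl _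

/-- for nodes `x ∈ Θ i` other than `vs i`, the regions at `i` and `i+1` coincide. -/
theorem transferA {x : 𝒱} (hx : x ∈ S.theta i) (hxne : x ≠ S.vs i)
    (hA : Anc S.T S.root (S.vs i) (S.vs (i+1))) :
    S.psiGtAt i x = S.psiGtAt (i+1) x ∧ x ∈ S.theta (i+1) := by
  have hxanc : Anc S.T S.root x (S.vs i) := hx
  have hxLe : x ∈ ThetaLe S.T S.root S.vs i := ⟨i, C.hi1, le_rfl, hxanc⟩
  constructor
  · ext s'
    constructor
    · rintro ⟨hnot, r, hbr, hL⟩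
      have hsθ : s' ≠ θ := C.only_vsi ⟨hnot, r, hbr, hL⟩ hxne
      have hun : s' ∉ S.psiLe i := by
        rcases (C.hcompl s').1 hnot with h | h
        · exact absurd h hsθ
        · exact h
      have hnanc : ¬ Anc S.T S.root (S.vs (i+1)) r := by
        intro h
        have h2 : Anc S.T S.root (S.vs i) r := anc_trans hA h
        have h3 := hL.2.2 _ h2 C.vsi_mem
        exact hxne (anc_antisymm C.hT hxanc h3)
      refine ⟨hun, r, hbr, hL.1, thetaLe_mono (by omega) hL.2.1, ?_⟩
      intro z hz hzLe
      rcases (thetaLe_succ C.hi1).1 hzLe with h | h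
      · exact hL.2.2 z hz h
      · by_cases hz1 : z = S.vs (i+1)
        · subst hz1
          exact absurd hz hnanc
        · rcases anc_adj_between C.hT C.adj hA h with h' | h'
          · exact absurd h' hz1
          · exact hL.2.2 z hz ⟨i, C.hi1, le_rfl, h'⟩
    · rintro ⟨hnot, r, hbr, hL⟩
      exact ⟨(C.hcompl s').2 (Or.inr hnot), r, hbr, hL.1, hxLe,
        fun z hz hzLe => hL.2.2 z hz (thetaLe_mono (by omega) hzLe)⟩
  · exact anc_trans hxanc hA

end Ctx
end CaseA
end Aux
namespace Aux
section CaseB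

variable {V : Type u} {𝒱 : Type v} [Fintype V] [DecidableEq V] [Fintype 𝒱] [DecidableEq 𝒱]
  {S : Setting V 𝒱} {i : ℕ} {θ : V}

namespace Ctx

variable (C : _root_.Aux.Ctx S i θ) (hB : Anc S.T S.root (S.vs (i+1)) (S.vs i))

include C hB

theorem cin : ∀ m, 1 ≤ m → m < S.len → ¬ Anc S.T S.root (S.vs i) (S.vs m) →
    Anc S.T S.root (S.vs i) (S.vs (m+1)) → S.vs m = S.vs (i+1) ∧ S.vs (m+1) = S.vs i := by
  intro m hm1 hml hnm hm
  have hadj := C.hdft.adj m hm1 hml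
  rcases adj_anc_dichotomy (root := S.root) C.hT hadj with h | h
  · rcases anc_adj_between C.hT hadj h hm with h' | h'
    · have h'' : S.vs (m+1) = S.vs i := h'.symm
      have hadj2 : S.T.Adj (S.vs m) (S.vs i) := h'' ▸ hadj
      have h2 : Anc S.T S.root (S.vs m) (S.vs i) := h'' ▸ h
      exact ⟨parent_unique C.hT hadj2 ((C.hdft.adj i C.hi1 C.hilt).symm) h2 hB, h''⟩
    · exact absurd h' hnm
  · exact absurd (anc_trans hm h) hnm

theorem cross_exists : ∀ k, 1 ≤ k → k ≤ i → Anc S.T S.root (S.vs i) (S.vs k) →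
    ∃ m, 1 ≤ m ∧ m + 1 ≤ k ∧ ¬ Anc S.T S.root (S.vs i) (S.vs m) ∧
      Anc S.T S.root (S.vs i) (S.vs (m+1)) := by
  have hne : S.vs i ≠ S.root := by
    intro h
    have h2 : Anc S.T S.root (S.vs i) (S.vs (i+1)) := h ▸ anc_root _
    exact (C.adj).ne (anc_antisymm C.hT h2 hB)
  intro k
  induction k with
  | zero => omega
  | succ k ih =>
    intro _ hki hanc
    rcases Nat.eq_zero_or_pos k with h0 | h0
    · subst h0
      rw [C.hdft.first] at hanc
      exact absurd (anc_antisymm C.hT hanc (anc_root _)) hne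
    · by_cases h : Anc S.T S.root (S.vs i) (S.vs k)
      · obtain ⟨m, h1, h2, h3, h4⟩ := ih h0 (by omega) h
        exact ⟨m, h1, by omega, h3, h4⟩
      · exact ⟨k, h0, le_rfl, h, hanc⟩

theorem noreentry : ∀ k, i + 1 ≤ k → k ≤ S.len → ¬ Anc S.T S.root (S.vs i) (S.vs k) := by
  have hil := C.hilt
  obtain ⟨m₀, hm1, hm2, hm3, hm4⟩ := C.cross_exists hB i C.hi1 le_rfl (anc_refl _)
  have hm0 := C.cin hB m₀ hm1 (by omega) hm3 hm4
  obtain ⟨j, _, huniq⟩ := C.hdft.once _ _ ((C.hdft.adj i C.hi1 C.hilt).symm)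
  have hm0j : m₀ = j := huniq m₀ ⟨hm1, by omega, hm0.1, hm0.2⟩
  intro k hk1 hk2
  induction k with
  | zero => omega
  | succ k ih =>
    rcases Nat.lt_or_ge k (i+1) with h | h
    · have : k = i := by omega
      subst this
      intro hc
      exact (C.adj).ne (anc_antisymm C.hT hc hB)
    · intro hc
      have hnk : ¬ Anc S.T S.root (S.vs i) (S.vs k) := ih (by omega) (by omega)
      have := C.cin hB k (by omega) (by omega) hnk hc
      have hkj : k = j := huniq k ⟨by omega, by omega, this.1, this.2⟩
      omega

theorem B_no_child : ∀ c, S.T.Adj (S.vs i) c → Anc S.T S.root (S.vs i) c → False := by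
  intro c hadj hanc
  obtain ⟨j, ⟨hj1, hjl, hje, hje'⟩, _⟩ := C.hdft.once _ _ hadj
  have hmemj : Anc S.T S.root (S.vs i) (S.vs j) := by
    rw [hje]; exact anc_refl _
  rcases Nat.lt_or_ge j i with h | h
  · exact C.fresh ⟨j, hj1, by omega, hmemj⟩
  · rcases Nat.eq_or_lt_of_le h with h' | h'
    · rw [← h'] at hje'
      rw [← hje'] at hanc
      exact (C.adj).ne (anc_antisymm C.hT hanc hB)
    · exact C.noreentry hB j (by omega) (by omega) hmemj

theorem B_no_sdesc : ∀ w, Anc S.T S.root (S.vs i) w → w = S.vs i := by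
  intro w hw
  by_contra hne
  obtain ⟨p, hp⟩ := exists_path C.hT S.root w
  have hmem : S.vs i ∈ p.support := hw p hp
  set q := p.dropUntil (S.vs i) hmem with hq
  have hqp : q.IsPath := hp.dropUntil hmem
  have hqn : ¬ q.Nil := SimpleGraph.Walk.not_nil_of_ne (fun h => hne h.symm)
  obtain ⟨c, hadj, q', hq'⟩ := SimpleGraph.Walk.not_nil_iff.1 hqn
  apply C.B_no_child hB c hadj
  -- build the path root → c
  set tk := p.takeUntil (S.vs i) hmem with htk
  have htkp : tk.IsPath := hp.takeUntil hmem
  have hnd : p.support.Nodup := hp.support_nodup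
  rw [← p.take_spec hmem, SimpleGraph.Walk.support_append, List.nodup_append] at hnd
  have hcq : c ∈ q.support.tail := by
    rw [hq', SimpleGraph.Walk.support_cons]
    exact q'.start_mem_support
  have hctk : c ∉ tk.support := fun h => hnd.2.2 _ h _ hcq rfl
  have hw2 : (tk.concat hadj).IsPath := by
    apply SimpleGraph.Walk.IsPath.mk'
    rw [SimpleGraph.Walk.support_concat]
    exact List.Nodup.append htkp.support_nodup (List.nodup_singleton c)
      (fun x hx hxc => hctk ((List.mem_singleton.1 hxc) ▸ hx))
  apply anc_of_isPath C.hT hw2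
  rw [SimpleGraph.Walk.support_concat, List.mem_append]
  exact Or.inl tk.end_mem_support

theorem stepθB {t : V} (hE : S.E θ t) : t ∈ S.B (S.vs i) := by
  obtain ⟨y, hθy, hty⟩ := C.hcover θ t hE
  have := C.B_no_sdesc hB y (C.brθ.2 y hθy)
  rwa [this] at hty

theorem AeqB : S.psiGtAt i (S.vs i) = {θ} := by
  ext s'
  constructor
  · rintro ⟨hnot, r, hbr, hL⟩
    have hr : r = S.vs i := C.B_no_sdesc hB r hL.1
    subst hr
    have hcov : s' ∈ S.psiLe i := mem_psiLe C.vsi_mem hbr.1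
    rcases (C.hcompl s').1 hnot with h | h
    · exact h
    · exact absurd hcov h
  · rintro rfl
    exact C.θmem

theorem transferB {x : 𝒱} (hx : x ∈ S.theta i) (hxne : x ≠ S.vs i) :
    S.psiGtAt i x = S.psiGtAt (i+1) x ∧ x ∈ S.theta (i+1) := by
  have hxanc : Anc S.T S.root x (S.vs i) := hx
  have hxLe : x ∈ ThetaLe S.T S.root S.vs i := ⟨i, C.hi1, le_rfl, hxanc⟩
  constructor
  · ext s'
    constructor
    · rintro ⟨hnot, r, hbr, hL⟩
      have hsθ : s' ≠ θ := C.only_vsi ⟨hnot, r, hbr, hL⟩ hxne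
      have hun : s' ∉ S.psiLe i := by
        rcases (C.hcompl s').1 hnot with h | h
        · exact absurd h hsθ
        · exact h
      refine ⟨hun, r, hbr, hL.1, thetaLe_mono (by omega) hL.2.1, ?_⟩
      intro z hz hzLe
      rcases (thetaLe_succ C.hi1).1 hzLe with h | h
      · exact hL.2.2 z hz h
      · exact hL.2.2 z hz ⟨i, C.hi1, le_rfl, anc_trans h hB⟩
    · rintro ⟨hnot, r, hbr, hL⟩
      exact ⟨(C.hcompl s').2 (Or.inr hnot), r, hbr, hL.1, hxLe,
        fun z hz hzLe => hL.2.2 z hz (thetaLe_mono (by omega) hzLe)⟩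
  · rcases anc_adj_between C.hT (C.adj).symm hB hxanc with h | h
    · exact absurd h hxne
    · exact h

end Ctx
end CaseB
end Aux
namespace Aux
section Core

variable {V : Type u} {𝒱 : Type v} [Fintype V] [DecidableEq V] [Fintype 𝒱] [DecidableEq 𝒱]
  {S : Setting V 𝒱} {i : ℕ} {θ : V} {f : V → Option V}

namespace Ctx

variable (C : _root_.Aux.Ctx S i θ)

include C

theorem Anotcov {u : V} (h : u ∈ S.psiGtAt i (S.vs i)) (hcov : u ∈ S.psiLe i) : u = θ := by
  rcases (C.hcompl u).1 h.1 with h' | h'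
  · exact h'
  · exact absurd hcov h'

theorem lift_top {x' : 𝒱} {p : V}
    (hsub : ∀ u, u ∈ S.psiGtAt (i+1) x' → u ∈ S.psiGtAt i (S.vs i))
    (hv : S.SelView f (i+1) x' p View.top) : S.SelView f i (S.vs i) p View.top := by
  obtain ⟨h1, h2, h3⟩ := hv
  refine ⟨?_, fun n t hn ht => hsub t (h2 n t hn ht), h3⟩
  rcases h1 with h | h
  · exact Or.inl h
  · exact Or.inr (hsub p h)

theorem lift_bot {x' : 𝒱} {p : V}
    (hsub : ∀ u, u ∈ S.psiGtAt (i+1) x' → u ∈ S.psiGtAt i (S.vs i))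
    (hv : S.SelView f (i+1) x' p View.bot) : S.SelView f i (S.vs i) p View.bot := by
  obtain ⟨h1, h2, h3⟩ := hv
  refine ⟨?_, fun n t hn ht => hsub t (h2 n t hn ht), h3⟩
  rcases h1 with h | h
  · exact Or.inl h
  · exact Or.inr (hsub p h)

theorem lift_exit_ne {x' : 𝒱} {p t1 : V} {m1 : ℕ}
    (hsub : ∀ u, u ∈ S.psiGtAt (i+1) x' → u ∈ S.psiGtAt i (S.vs i))
    (hv : S.SelView f (i+1) x' p (View.exit t1 m1)) (ht1A : t1 ∉ S.psiGtAt i (S.vs i)) :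
    S.SelView f i (S.vs i) p (View.exit t1 m1) := by
  obtain ⟨j, hj2, hjt, _, hint, hatt, hbd⟩ := hv
  exact ⟨j, hj2, hjt, ht1A, fun n u h1 h2 h3 => hsub u (hint n u h1 h2 h3), hatt, hbd⟩

theorem exit_class {x' : 𝒱} {p t1 : V} {m1 : ℕ} (hf : S.Sel Set.univ f)
    (hstep : ∀ u t, u ∈ S.psiGtAt (i+1) x' → S.E u t →
      t ∈ S.psiGtAt (i+1) x' ∨ (t ∈ S.psiLe i ∧ t ∈ S.B (S.vs i)))
    (hv : S.SelView f (i+1) x' p (View.exit t1 m1)) :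
    t1 ∈ S.psiLe i ∧ t1 ∈ S.B (S.vs i) := by
  obtain ⟨j, hj2, hjt, hnt, hint, _, _⟩ := hv
  obtain ⟨u, hu⟩ := Aux.iter_some_of_le hjt (show j - 1 ≤ j by omega)
  have huA : u ∈ S.psiGtAt (i+1) x' := hint (j-1) u (by omega) (by omega) hu
  have hfu : f u = some t1 := by
    have h := hjt
    rw [show j = (j-1) + 1 by omega, Aux.iter_succ, hu] at h
    exact h
  rcases hstep u t1 huA (hf u t1 hfu).2 with h | h
  · exact absurd h hnt
  · exact h

/-- The common view of `f` and `g` from `θ` at level `i`, in case A. -/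
theorem thetaEqA {g : V → Option V} (hA : Anc S.T S.root (S.vs i) (S.vs (i+1)))
    (hf : S.Sel Set.univ f) (hg : S.Sel Set.univ g)
    (hEq1 : ∀ s' ∈ S.B (S.vs i), ∀ w, S.SelView f (i+1) (S.vs i) s' w ↔
      S.SelView g (i+1) (S.vs i) s' w)
    (hEq2 : ∀ s' ∈ S.B (S.vs (i+1)), ∀ w, S.SelView f (i+1) (S.vs (i+1)) s' w ↔
      S.SelView g (i+1) (S.vs (i+1)) s' w)
    (h2 : ∀ s' ∈ S.B (S.vs i), (f θ = some s' ↔ g θ = some s')) :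
    ∃ w, S.SelView f i (S.vs i) θ w ∧ S.SelView g i (S.vs i) θ w ∧
      (w = View.unk → ∃ u, f θ = some u ∧ g θ = some u ∧ u ∉ S.psiGtAt i (S.vs i)) := by
  classical
  have hθB := C.θB
  have hθA := C.θmem
  -- if one selector is undefined at θ, so is the other
  have hnone : ∀ (f1 g1 : V → Option V), S.Sel Set.univ g1 →
      (∀ w, S.SelView f1 (i+1) (S.vs i) θ w → S.SelView g1 (i+1) (S.vs i) θ w) →
      (θ ∈ S.B (S.vs (i+1)) → ∀ w, S.SelView f1 (i+1) (S.vs (i+1)) θ w →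
        S.SelView g1 (i+1) (S.vs (i+1)) θ w) →
      (∀ s' ∈ S.B (S.vs i), g1 θ = some s' → f1 θ = some s') →
      f1 θ = none → g1 θ = none := by
    intro f1 g1 hg1 he1 he2 h2' hf1
    cases hgt : g1 θ with
    | none => rfl
    | some t =>
      exfalso
      have hE := (hg1 θ t hgt).2
      rcases C.stepθ hE hA with ⟨hcov, hBi⟩ | h | ⟨ht2, hθBi1⟩
      · have := h2' t hBi hgt
        rw [hf1] at this
        exact absurd this (by simp)
      · have hunk : S.SelView f1 (i+1) (S.vs i) θ View.unk := Or.inl ⟨hf1, C.θnotA1⟩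
        rcases he1 _ hunk with ⟨h', _⟩ | ⟨t', ht', ht'n⟩
        · rw [hgt] at h'; exact absurd h' (by simp)
        · rw [hgt] at ht'
          exact ht'n (Option.some.inj ht' ▸ h)
      · have hunk : S.SelView f1 (i+1) (S.vs (i+1)) θ View.unk := Or.inl ⟨hf1, C.θnotA2⟩
        rcases he2 hθBi1 _ hunk with ⟨h', _⟩ | ⟨t', ht', ht'n⟩
        · rw [hgt] at h'; exact absurd h' (by simp)
        · rw [hgt] at ht'
          exact ht'n (Option.some.inj ht' ▸ ht2)
  cases hfθ : f θ with
  | none =>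
    have hgθ : g θ = none :=
      hnone f g hg (fun w => (hEq1 θ hθB w).1) (fun hb w => (hEq2 θ hb w).1)
        (fun s' hs' h => (h2 s' hs').2 h) hfθ
    obtain ⟨hft, hfb⟩ := selView_dead (f := f) (i := i) (x := S.vs i) hθA hfθ
    obtain ⟨hgt, hgb⟩ := selView_dead (f := g) (i := i) (x := S.vs i) hθA hgθ
    by_cases hv0 : θ ∈ S.V0
    · exact ⟨View.bot, hfb hv0, hgb hv0, nofun⟩
    · exact ⟨View.top, hft hv0, hgt hv0, nofun⟩
  | some t =>
    by_cases htθ : t = θ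
    · subst htθ
      have hgθ : g t = some t := (h2 t hθB).1 (by simp [hfθ])
      have hloopf := selView_loop (S := S) (i := i) (x := S.vs i) (j := 1) (m := S.c t)
        (show iter f t 1 = some t from hfθ) le_rfl hθA
        (fun n hn u hu => by
          have : n = 0 := by omega
          subst this
          rw [← Option.some.inj hu]; exact hθA)
        ⟨0, by omega, t, rfl, rfl⟩
        (fun n hn u hu => by
          have : n = 0 := by omega
          subst this
          rw [← Option.some.inj hu])
      have hloopg := selView_loop (S := S) (i := i) (x := S.vs i) (j := 1) (m := S.c t)
        (show iter g t 1 = some t from hgθ) le_rfl hθA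
        (fun n hn u hu => by
          have : n = 0 := by omega
          subst this
          rw [← Option.some.inj hu]; exact hθA)
        ⟨0, by omega, t, rfl, rfl⟩
        (fun n hn u hu => by
          have : n = 0 := by omega
          subst this
          rw [← Option.some.inj hu])
      by_cases hm : Even (S.c t)
      · exact ⟨View.top, hloopf.1 hm, hloopg.1 hm, nofun⟩
      · exact ⟨View.bot, hloopf.2 hm, hloopg.2 hm, nofun⟩
    · have hE := (hf θ t hfθ).2
      rcases C.stepθ hE hA with ⟨hcov, hBi⟩ | h | ⟨ht2, hθBi1⟩
      · have hgθ : g θ = some t := (h2 t hBi).1 hfθ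
        have htA : t ∉ S.psiGtAt i (S.vs i) := fun h => htθ (C.Anotcov h hcov)
        exact ⟨View.unk, Or.inr ⟨t, by simp [hfθ], htA⟩, Or.inr ⟨t, hgθ, htA⟩,
          fun _ => ⟨t, by simp [hfθ], hgθ, htA⟩⟩
      · -- f θ ∈ A1
        obtain ⟨w1, hw1⟩ := selView_total S f (i+1) (S.vs i) θ
        have hw1g := (hEq1 θ hθB w1).1 hw1
        have hsub : ∀ u, u ∈ S.psiGtAt (i+1) (S.vs i) → u ∈ S.psiGtAt i (S.vs i) :=
          fun u hu => C.A1sub hu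
        cases w1 with
        | unk =>
          exfalso
          rcases hw1 with ⟨h', _⟩ | ⟨t', ht', ht'n⟩
          · rw [hfθ] at h'; exact absurd h' (by simp)
          · rw [hfθ] at ht'
            exact ht'n (Option.some.inj ht' ▸ h)
        | top => exact ⟨View.top, C.lift_top hsub hw1, C.lift_top hsub hw1g, nofun⟩
        | bot => exact ⟨View.bot, C.lift_bot hsub hw1, C.lift_bot hsub hw1g, nofun⟩
        | exit t1 m1 =>
          obtain ⟨ht1cov, ht1Bi⟩ := C.exit_class hf
            (fun u t' hu hE' => C.stepA1 hu hE' hA) hw1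
          by_cases ht1θ : t1 = θ
          · subst ht1θ
            -- periodic loop through θ with maximal colour m1
            have hloop : ∀ (f1 : V → Option V),
                S.SelView f1 (i+1) (S.vs i) t1 (View.exit t1 m1) →
                (Even m1 → S.SelView f1 i (S.vs i) t1 View.top) ∧
                (¬ Even m1 → S.SelView f1 i (S.vs i) t1 View.bot) := by
              intro f1 hv
              obtain ⟨j, hj2, hjt, _, hint, hatt, hbd⟩ := hv
              apply selView_loop hjt (by omega) hθA
              · intro n hn u hu
                rcases Nat.eq_zero_or_pos n with h0 | h0
                · subst h0
                  rw [← Option.some.inj hu]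
                  exact hθA
                · exact hsub u (hint n u h0 hn hu)
              · obtain ⟨n, u, hn, hu, hcu⟩ := hatt
                exact ⟨n, hn, u, hu, hcu⟩
              · intro n hn u hu
                exact hbd n u hn hu
            by_cases hm : Even m1
            · exact ⟨View.top, (hloop f hw1).1 hm, (hloop g hw1g).1 hm, nofun⟩
            · exact ⟨View.bot, (hloop f hw1).2 hm, (hloop g hw1g).2 hm, nofun⟩
          · have ht1A : t1 ∉ S.psiGtAt i (S.vs i) := fun h => ht1θ (C.Anotcov h ht1cov)
            exact ⟨View.exit t1 m1, C.lift_exit_ne hsub hw1 ht1A,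
              C.lift_exit_ne hsub hw1g ht1A, nofun⟩
      · -- f θ ∈ A2
        obtain ⟨w2, hw2⟩ := selView_total S f (i+1) (S.vs (i+1)) θ
        have hw2g := (hEq2 θ hθBi1 w2).1 hw2
        have hsub : ∀ u, u ∈ S.psiGtAt (i+1) (S.vs (i+1)) → u ∈ S.psiGtAt i (S.vs i) :=
          fun u hu => C.A2sub hu hA
        cases w2 with
        | unk =>
          exfalso
          rcases hw2 with ⟨h', _⟩ | ⟨t', ht', ht'n⟩
          · rw [hfθ] at h'; exact absurd h' (by simp)
          · rw [hfθ] at ht'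
            exact ht'n (Option.some.inj ht' ▸ ht2)
        | top => exact ⟨View.top, C.lift_top hsub hw2, C.lift_top hsub hw2g, nofun⟩
        | bot => exact ⟨View.bot, C.lift_bot hsub hw2, C.lift_bot hsub hw2g, nofun⟩
        | exit t1 m1 =>
          obtain ⟨ht1cov, ht1Bi⟩ := C.exit_class hf
            (fun u t' hu hE' => C.stepA2 hu hE' hA) hw2
          by_cases ht1θ : t1 = θ
          · subst ht1θ
            have hloop : ∀ (f1 : V → Option V),
                S.SelView f1 (i+1) (S.vs (i+1)) t1 (View.exit t1 m1) →
                (Even m1 → S.SelView f1 i (S.vs i) t1 View.top) ∧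
                (¬ Even m1 → S.SelView f1 i (S.vs i) t1 View.bot) := by
              intro f1 hv
              obtain ⟨j, hj2, hjt, _, hint, hatt, hbd⟩ := hv
              apply selView_loop hjt (by omega) hθA
              · intro n hn u hu
                rcases Nat.eq_zero_or_pos n with h0 | h0
                · subst h0
                  rw [← Option.some.inj hu]
                  exact hθA
                · exact hsub u (hint n u h0 hn hu)
              · obtain ⟨n, u, hn, hu, hcu⟩ := hatt
                exact ⟨n, hn, u, hu, hcu⟩
              · intro n hn u hu
                exact hbd n u hn hu
            by_cases hm : Even m1
            · exact ⟨View.top, (hloop f hw2).1 hm, (hloop g hw2g).1 hm, nofun⟩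
            · exact ⟨View.bot, (hloop f hw2).2 hm, (hloop g hw2g).2 hm, nofun⟩
          · have ht1A : t1 ∉ S.psiGtAt i (S.vs i) := fun h => ht1θ (C.Anotcov h ht1cov)
            exact ⟨View.exit t1 m1, C.lift_exit_ne hsub hw2 ht1A,
              C.lift_exit_ne hsub hw2g ht1A, nofun⟩

end Ctx
end Core
end Aux
namespace Aux

/-- Combination of a prefix (max colour `m₁`) with the view from `θ`. -/
def combView {V : Type u} (m₁ cθ : ℕ) (u : V) : View V → View V
  | View.top => View.top
  | View.bot => View.bot
  | View.exit t2 m2 => View.exit t2 (max m₁ m2)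
  | View.unk => View.exit u (max m₁ cθ)

section Core2

variable {V : Type u} {𝒱 : Type v} [Fintype V] [DecidableEq V] [Fintype 𝒱] [DecidableEq 𝒱]
  {S : Setting V 𝒱} {i : ℕ} {θ : V} {f g : V → Option V}

namespace Ctx

variable (C : _root_.Aux.Ctx S i θ)

include C

theorem combn {s : V} (f1 : V → Option V) (u : V) {j₁ m₁ : ℕ} {wθ' : View V}
    (hvθ : S.SelView f1 i (S.vs i) θ wθ')
    (hj : iter f1 s j₁ = some θ) (hj1 : 1 ≤ j₁)
    (hint : ∀ n, 1 ≤ n → n < j₁ → ∀ u', iter f1 s n = some u' → u' ∈ S.psiGtAt i (S.vs i))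
    (hatt : ∃ n, n < j₁ ∧ ∃ u', iter f1 s n = some u' ∧ S.c u' = m₁)
    (hbd : ∀ n, n < j₁ → ∀ u', iter f1 s n = some u' → S.c u' ≤ m₁)
    (hdata : wθ' = View.unk → f1 θ = some u ∧ u ∉ S.psiGtAt i (S.vs i)) :
    S.SelView f1 i (S.vs i) s (combView m₁ (S.c θ) u wθ') := by
  cases wθ' with
  | top => exact comb_top hj hj1 C.θmem hint hvθ
  | bot => exact comb_bot hj hj1 C.θmem hint hvθ
  | exit t2 m2 => exact comb_exit hj hj1 C.θmem hint hatt hbd hvθ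
  | unk =>
    obtain ⟨hu1, hu2⟩ := hdata rfl
    exact comb_unk_exit hj hj1 C.θmem hint hatt hbd hu1 hu2

/-- Case A: the views of `f` and `g` at `(i, vs i)` agree on the bag of `vs i`. -/
theorem mainA (hA : Anc S.T S.root (S.vs i) (S.vs (i+1)))
    (hf : S.Sel Set.univ f) (hg : S.Sel Set.univ g)
    (hEq1 : ∀ s' ∈ S.B (S.vs i), ∀ w, S.SelView f (i+1) (S.vs i) s' w ↔
      S.SelView g (i+1) (S.vs i) s' w)
    (hEq2 : ∀ s' ∈ S.B (S.vs (i+1)), ∀ w, S.SelView f (i+1) (S.vs (i+1)) s' w ↔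
      S.SelView g (i+1) (S.vs (i+1)) s' w)
    (h2 : ∀ s' ∈ S.B (S.vs i), (f θ = some s' ↔ g θ = some s'))
    (h3 : ∀ t' ∈ S.B (S.vs i), (f t' = some θ ↔ g t' = some θ)) :
    ∀ s ∈ S.B (S.vs i), ∀ w, S.SelView f i (S.vs i) s w ↔ S.SelView g i (S.vs i) s w := by
  classical
  obtain ⟨wθ, hwf, hwg, hwu⟩ := C.thetaEqA hA hf hg hEq1 hEq2 h2
  obtain ⟨u0, hu0⟩ : ∃ u0 : V, wθ = View.unk →
      (f θ = some u0 ∧ g θ = some u0 ∧ u0 ∉ S.psiGtAt i (S.vs i)) := by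
    by_cases h : wθ = View.unk
    · obtain ⟨u, h1', h2', h3'⟩ := hwu h
      exact ⟨u, fun _ => ⟨h1', h2', h3'⟩⟩
    · exact ⟨θ, fun hc => absurd hc h⟩
  have iff_of : ∀ {s : V} {w₁ : View V}, S.SelView f i (S.vs i) s w₁ →
      S.SelView g i (S.vs i) s w₁ → ∀ w, S.SelView f i (S.vs i) s w ↔
        S.SelView g i (S.vs i) s w := by
    intro s w₁ hf1 hg1 w
    constructor
    · intro h
      have := selView_unique h hf1
      subst this
      exact hg1
    · intro h
      have := selView_unique h hg1
      subst this
      exact hf1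
  intro s hs
  by_cases hsθ : s = θ
  · subst hsθ
    exact iff_of hwf hwg
  have hscov : s ∈ S.psiLe i := mem_psiLe C.vsi_mem hs
  have hsA : s ∉ S.psiGtAt i (S.vs i) := fun h => hsθ (C.Anotcov h hscov)
  have hsA1 : s ∉ S.psiGtAt (i+1) (S.vs i) := fun h => h.1 hscov
  have hsA2 : s ∉ S.psiGtAt (i+1) (S.vs (i+1)) := fun h => h.1 hscov
  have hnotA : ∀ (f1 g1 : V → Option V), S.Sel Set.univ g1 →
      (∀ w, S.SelView f1 (i+1) (S.vs i) s w → S.SelView g1 (i+1) (S.vs i) s w) →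
      (s ∈ S.B (S.vs (i+1)) → ∀ w, S.SelView f1 (i+1) (S.vs (i+1)) s w →
        S.SelView g1 (i+1) (S.vs (i+1)) s w) →
      (g1 s = some θ → f1 s = some θ) →
      (f1 s = none ∨ ∃ t, f1 s = some t ∧ t ∉ S.psiGtAt i (S.vs i)) →
      (g1 s = none ∨ ∃ t, g1 s = some t ∧ t ∉ S.psiGtAt i (S.vs i)) := by
    intro f1 g1 hg1 he1 he2 h3' hf1
    cases hg1s : g1 s with
    | none => exact Or.inl rfl
    | some t' =>
      refine Or.inr ⟨t', rfl, fun htA => ?_⟩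
      have hf1unk1 : S.SelView f1 (i+1) (S.vs i) s View.unk := by
        rcases hf1 with h | ⟨t, ht, htn⟩
        · exact Or.inl ⟨h, hsA1⟩
        · exact Or.inr ⟨t, ht, fun hc => htn (C.A1sub hc)⟩
      rcases C.Acases htA hA with h | h | h
      · subst h
        have := h3' hg1s
        rcases hf1 with h' | ⟨t, ht, htn⟩
        · rw [this] at h'; exact absurd h' (by simp)
        · rw [this] at ht
          exact htn (Option.some.inj ht ▸ C.θmem)
      · rcases he1 _ hf1unk1 with ⟨h', _⟩ | ⟨t'', ht'', ht''n⟩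
        · rw [hg1s] at h'; exact absurd h' (by simp)
        · rw [hg1s] at ht''
          exact ht''n (Option.some.inj ht'' ▸ h)
      · have hsBi1 : s ∈ S.B (S.vs (i+1)) := C.entry2 hscov (hg1 s t' hg1s).2 h hA
        have hf1unk2 : S.SelView f1 (i+1) (S.vs (i+1)) s View.unk := by
          rcases hf1 with h' | ⟨t, ht, htn⟩
          · exact Or.inl ⟨h', hsA2⟩
          · exact Or.inr ⟨t, ht, fun hc => htn (C.A2sub hc hA)⟩
        rcases he2 hsBi1 _ hf1unk2 with ⟨h', _⟩ | ⟨t'', ht'', ht''n⟩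
        · rw [hg1s] at h'; exact absurd h' (by simp)
        · rw [hg1s] at ht''
          exact ht''n (Option.some.inj ht'' ▸ h)
  cases hfs : f s with
  | none =>
    have hfv : S.SelView f i (S.vs i) s View.unk := Or.inl ⟨hfs, hsA⟩
    have hgn := hnotA f g hg (fun w => (hEq1 s hs w).1) (fun hb w => (hEq2 s hb w).1)
      (fun h => (h3 s hs).2 h) (Or.inl hfs)
    have hgv : S.SelView g i (S.vs i) s View.unk := by
      rcases hgn with h | ⟨t, ht, htn⟩
      · exact Or.inl ⟨h, hsA⟩
      · exact Or.inr ⟨t, ht, htn⟩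
    exact iff_of hfv hgv
  | some t =>
    by_cases htθ : t = θ
    · subst htθ
      have hgs : g s = some t := (h3 s hs).1 hfs
      have hfv := C.combn f u0 hwf (show iter f s 1 = some t from hfs) le_rfl
        (fun n h1 h2 => by omega) ⟨0, by omega, s, rfl, rfl⟩
        (fun n hn u' hu' => by
          have : n = 0 := by omega
          subst this
          rw [← Option.some.inj hu'])
        (fun h => ⟨(hu0 h).1, (hu0 h).2.2⟩)
      have hgv := C.combn g u0 hwg (show iter g s 1 = some t from hgs) le_rfl
        (fun n h1 h2 => by omega) ⟨0, by omega, s, rfl, rfl⟩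
        (fun n hn u' hu' => by
          have : n = 0 := by omega
          subst this
          rw [← Option.some.inj hu'])
        (fun h => ⟨(hu0 h).2.1, (hu0 h).2.2⟩)
      exact iff_of hfv hgv
    · by_cases ht1 : t ∈ S.psiGtAt (i+1) (S.vs i)
      · -- f s enters A1
        obtain ⟨w1, hw1⟩ := selView_total S f (i+1) (S.vs i) s
        have hw1g := (hEq1 s hs w1).1 hw1
        have hsub : ∀ u', u' ∈ S.psiGtAt (i+1) (S.vs i) → u' ∈ S.psiGtAt i (S.vs i) :=
          fun u' hu' => C.A1sub hu'
        cases w1 with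
        | unk =>
          exfalso
          rcases hw1 with ⟨h', _⟩ | ⟨t', ht', ht'n⟩
          · rw [hfs] at h'; exact absurd h' (by simp)
          · rw [hfs] at ht'
            exact ht'n (Option.some.inj ht' ▸ ht1)
        | top => exact iff_of (C.lift_top hsub hw1) (C.lift_top hsub hw1g)
        | bot => exact iff_of (C.lift_bot hsub hw1) (C.lift_bot hsub hw1g)
        | exit t1 m1 =>
          obtain ⟨ht1cov, ht1Bi⟩ := C.exit_class hf
            (fun u' t'' hu' hE' => C.stepA1 hu' hE' hA) hw1
          by_cases ht1θ : t1 = θ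
          · rw [ht1θ] at hw1 hw1g
            obtain ⟨j, hj2, hjθ, _, hint1, hatt1, hbd1⟩ := hw1
            obtain ⟨j', hj2', hjθ', _, hint1', hatt1', hbd1'⟩ := hw1g
            have hfv := C.combn f u0 hwf hjθ (by omega)
              (fun n h1 h2 u' hu' => C.A1sub (hint1 n u' h1 h2 hu'))
              (by obtain ⟨n, u', hn, hu', hc⟩ := hatt1; exact ⟨n, hn, u', hu', hc⟩)
              (fun n hn u' hu' => hbd1 n u' hn hu')
              (fun h => ⟨(hu0 h).1, (hu0 h).2.2⟩)
            have hgv := C.combn g u0 hwg hjθ' (by omega)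
              (fun n h1 h2 u' hu' => C.A1sub (hint1' n u' h1 h2 hu'))
              (by obtain ⟨n, u', hn, hu', hc⟩ := hatt1'; exact ⟨n, hn, u', hu', hc⟩)
              (fun n hn u' hu' => hbd1' n u' hn hu')
              (fun h => ⟨(hu0 h).2.1, (hu0 h).2.2⟩)
            exact iff_of hfv hgv
          · have ht1A : t1 ∉ S.psiGtAt i (S.vs i) := fun h => ht1θ (C.Anotcov h ht1cov)
            exact iff_of (C.lift_exit_ne hsub hw1 ht1A) (C.lift_exit_ne hsub hw1g ht1A)
      · by_cases ht2 : t ∈ S.psiGtAt (i+1) (S.vs (i+1))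
        · -- f s enters A2
          have hsBi1 : s ∈ S.B (S.vs (i+1)) := C.entry2 hscov (hf s t hfs).2 ht2 hA
          obtain ⟨w2, hw2⟩ := selView_total S f (i+1) (S.vs (i+1)) s
          have hw2g := (hEq2 s hsBi1 w2).1 hw2
          have hsub : ∀ u', u' ∈ S.psiGtAt (i+1) (S.vs (i+1)) → u' ∈ S.psiGtAt i (S.vs i) :=
            fun u' hu' => C.A2sub hu' hA
          cases w2 with
          | unk =>
            exfalso
            rcases hw2 with ⟨h', _⟩ | ⟨t', ht', ht'n⟩
            · rw [hfs] at h'; exact absurd h' (by simp)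
            · rw [hfs] at ht'
              exact ht'n (Option.some.inj ht' ▸ ht2)
          | top => exact iff_of (C.lift_top hsub hw2) (C.lift_top hsub hw2g)
          | bot => exact iff_of (C.lift_bot hsub hw2) (C.lift_bot hsub hw2g)
          | exit t1 m1 =>
            obtain ⟨ht1cov, ht1Bi⟩ := C.exit_class hf
              (fun u' t'' hu' hE' => C.stepA2 hu' hE' hA) hw2
            by_cases ht1θ : t1 = θ
            · rw [ht1θ] at hw2 hw2g
              obtain ⟨j, hj2, hjθ, _, hint1, hatt1, hbd1⟩ := hw2
              obtain ⟨j', hj2', hjθ', _, hint1', hatt1', hbd1'⟩ := hw2g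
              have hfv := C.combn f u0 hwf hjθ (by omega)
                (fun n h1 h2 u' hu' => C.A2sub (hint1 n u' h1 h2 hu') hA)
                (by obtain ⟨n, u', hn, hu', hc⟩ := hatt1; exact ⟨n, hn, u', hu', hc⟩)
                (fun n hn u' hu' => hbd1 n u' hn hu')
                (fun h => ⟨(hu0 h).1, (hu0 h).2.2⟩)
              have hgv := C.combn g u0 hwg hjθ' (by omega)
                (fun n h1 h2 u' hu' => C.A2sub (hint1' n u' h1 h2 hu') hA)
                (by obtain ⟨n, u', hn, hu', hc⟩ := hatt1'; exact ⟨n, hn, u', hu', hc⟩)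
                (fun n hn u' hu' => hbd1' n u' hn hu')
                (fun h => ⟨(hu0 h).2.1, (hu0 h).2.2⟩)
              exact iff_of hfv hgv
            · have ht1A : t1 ∉ S.psiGtAt i (S.vs i) := fun h => ht1θ (C.Anotcov h ht1cov)
              exact iff_of (C.lift_exit_ne hsub hw2 ht1A) (C.lift_exit_ne hsub hw2g ht1A)
        · -- f s leaves the region immediately
          have htA : t ∉ S.psiGtAt i (S.vs i) := by
            intro h
            rcases C.Acases h hA with h' | h' | h'
            · exact htθ h'
            · exact ht1 h'
            · exact ht2 h'
          have hfv : S.SelView f i (S.vs i) s View.unk := Or.inr ⟨t, hfs, htA⟩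
          have hgn := hnotA f g hg (fun w => (hEq1 s hs w).1) (fun hb w => (hEq2 s hb w).1)
            (fun h => (h3 s hs).2 h) (Or.inr ⟨t, hfs, htA⟩)
          have hgv : S.SelView g i (S.vs i) s View.unk := by
            rcases hgn with h | ⟨t', ht', htn⟩
            · exact Or.inl ⟨h, hsA⟩
            · exact Or.inr ⟨t', ht', htn⟩
          exact iff_of hfv hgv

/-- Case B: the views of `f` and `g` at `(i, vs i)` agree on the bag of `vs i`. -/
theorem mainB (hB : Anc S.T S.root (S.vs (i+1)) (S.vs i))
    (hf : S.Sel Set.univ f) (hg : S.Sel Set.univ g)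
    (h2 : ∀ s' ∈ S.B (S.vs i), (f θ = some s' ↔ g θ = some s'))
    (h3 : ∀ t' ∈ S.B (S.vs i), (f t' = some θ ↔ g t' = some θ)) :
    ∀ s ∈ S.B (S.vs i), ∀ w, S.SelView f i (S.vs i) s w ↔ S.SelView g i (S.vs i) s w := by
  classical
  have hAB := C.AeqB hB
  have hmemA : ∀ u : V, u ∈ S.psiGtAt i (S.vs i) ↔ u = θ := by
    intro u
    rw [hAB]
    rfl
  -- the common θ view
  have hθeq : ∃ w, S.SelView f i (S.vs i) θ w ∧ S.SelView g i (S.vs i) θ w ∧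
      (w = View.unk → ∃ u, f θ = some u ∧ g θ = some u ∧ u ∉ S.psiGtAt i (S.vs i)) := by
    cases hfθ : f θ with
    | none =>
      have hgθ : g θ = none := by
        cases hgθ' : g θ with
        | none => rfl
        | some t =>
          exfalso
          have htBi := C.stepθB hB (hg θ t hgθ').2
          have := (h2 t htBi).2 hgθ'
          rw [hfθ] at this
          exact absurd this (by simp)
      obtain ⟨hft, hfb⟩ := selView_dead (f := f) (i := i) (x := S.vs i) C.θmem hfθ
      obtain ⟨hgt, hgb⟩ := selView_dead (f := g) (i := i) (x := S.vs i) C.θmem hgθ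
      by_cases hv0 : θ ∈ S.V0
      · exact ⟨View.bot, hfb hv0, hgb hv0, nofun⟩
      · exact ⟨View.top, hft hv0, hgt hv0, nofun⟩
    | some t =>
      have htBi := C.stepθB hB (hf θ t (by simp [hfθ])).2
      have hgθ : g θ = some t := (h2 t htBi).1 (by simp [hfθ])
      by_cases htθ : t = θ
      · subst htθ
        have hloopf := selView_loop (S := S) (i := i) (x := S.vs i) (j := 1) (m := S.c t)
          (show iter f t 1 = some t by simp [iter_one, hfθ]) le_rfl C.θmem
          (fun n hn u hu => by
            have : n = 0 := by omega
            subst this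
            rw [← Option.some.inj hu]; exact C.θmem)
          ⟨0, by omega, t, rfl, rfl⟩
          (fun n hn u hu => by
            have : n = 0 := by omega
            subst this
            rw [← Option.some.inj hu])
        have hloopg := selView_loop (S := S) (i := i) (x := S.vs i) (j := 1) (m := S.c t)
          (show iter g t 1 = some t from hgθ) le_rfl C.θmem
          (fun n hn u hu => by
            have : n = 0 := by omega
            subst this
            rw [← Option.some.inj hu]; exact C.θmem)
          ⟨0, by omega, t, rfl, rfl⟩
          (fun n hn u hu => by
            have : n = 0 := by omega
            subst this
            rw [← Option.some.inj hu])
        by_cases hm : Even (S.c t)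
        · exact ⟨View.top, hloopf.1 hm, hloopg.1 hm, nofun⟩
        · exact ⟨View.bot, hloopf.2 hm, hloopg.2 hm, nofun⟩
      · have htA : t ∉ S.psiGtAt i (S.vs i) := fun h => htθ ((hmemA t).1 h)
        exact ⟨View.unk, Or.inr ⟨t, by simp [hfθ], htA⟩, Or.inr ⟨t, hgθ, htA⟩,
          fun _ => ⟨t, by simp [hfθ], hgθ, htA⟩⟩
  obtain ⟨wθ, hwf, hwg, hwu⟩ := hθeq
  obtain ⟨u0, hu0⟩ : ∃ u0 : V, wθ = View.unk →
      (f θ = some u0 ∧ g θ = some u0 ∧ u0 ∉ S.psiGtAt i (S.vs i)) := by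
    by_cases h : wθ = View.unk
    · obtain ⟨u, h1', h2', h3'⟩ := hwu h
      exact ⟨u, fun _ => ⟨h1', h2', h3'⟩⟩
    · exact ⟨θ, fun hc => absurd hc h⟩
  have iff_of : ∀ {s : V} {w₁ : View V}, S.SelView f i (S.vs i) s w₁ →
      S.SelView g i (S.vs i) s w₁ → ∀ w, S.SelView f i (S.vs i) s w ↔
        S.SelView g i (S.vs i) s w := by
    intro s w₁ hf1 hg1 w
    constructor
    · intro h
      have := selView_unique h hf1
      subst this
      exact hg1
    · intro h
      have := selView_unique h hg1
      subst this
      exact hf1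
  intro s hs
  by_cases hsθ : s = θ
  · subst hsθ
    exact iff_of hwf hwg
  have hsA : s ∉ S.psiGtAt i (S.vs i) := fun h => hsθ ((hmemA s).1 h)
  cases hfs : f s with
  | none =>
    have hfv : S.SelView f i (S.vs i) s View.unk := Or.inl ⟨hfs, hsA⟩
    have hgv : S.SelView g i (S.vs i) s View.unk := by
      cases hgs : g s with
      | none => exact Or.inl ⟨hgs, hsA⟩
      | some t' =>
        refine Or.inr ⟨t', hgs, fun htA => ?_⟩
        have ht'θ : t' = θ := (hmemA t').1 htA
        subst ht'θ
        have := (h3 s hs).2 hgs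
        rw [hfs] at this
        exact absurd this (by simp)
    exact iff_of hfv hgv
  | some t =>
    by_cases htθ : t = θ
    · subst htθ
      have hgs : g s = some t := (h3 s hs).1 hfs
      have hfv := C.combn f u0 hwf (show iter f s 1 = some t from hfs) le_rfl
        (fun n h1 h2 => by omega) ⟨0, by omega, s, rfl, rfl⟩
        (fun n hn u' hu' => by
          have : n = 0 := by omega
          subst this
          rw [← Option.some.inj hu'])
        (fun h => ⟨(hu0 h).1, (hu0 h).2.2⟩)
      have hgv := C.combn g u0 hwg (show iter g s 1 = some t from hgs) le_rfl
        (fun n h1 h2 => by omega) ⟨0, by omega, s, rfl, rfl⟩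
        (fun n hn u' hu' => by
          have : n = 0 := by omega
          subst this
          rw [← Option.some.inj hu'])
        (fun h => ⟨(hu0 h).2.1, (hu0 h).2.2⟩)
      exact iff_of hfv hgv
    · have htA : t ∉ S.psiGtAt i (S.vs i) := fun h => htθ ((hmemA t).1 h)
      have hfv : S.SelView f i (S.vs i) s View.unk := Or.inr ⟨t, hfs, htA⟩
      have hgv : S.SelView g i (S.vs i) s View.unk := by
        cases hgs : g s with
        | none => exact Or.inl ⟨hgs, hsA⟩
        | some t' =>
          refine Or.inr ⟨t', hgs, fun ht'A => ?_⟩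
          have ht'θ : t' = θ := (hmemA t').1 ht'A
          subst ht'θ
          have := (h3 s hs).2 hgs
          rw [hfs] at this
          exact htθ (Option.some.inj this)
      exact iff_of hfv hgv

end Ctx
end Core2
end Aux
/-- For a critical index `i ≤ ℓ - 1` with new vertex `θ`, the
selector views at index `i` are determined by the selector views at index `i + 1`
together with the sets `{s ∈ B (vs i) | f θ = s}` and `{t ∈ B (vs i) | f t = θ}`. -/
theorem selView_critical_determination {V : Type u} {𝒱 : Type v}
    [Fintype V] [DecidableEq V] [Fintype 𝒱]
    (S : Setting V 𝒱) (hS : S.Standing) (hV : 2 ≤ Fintype.card V)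
    (i : ℕ) (hi1 : 1 ≤ i) (hi2 : i ≤ S.len - 1) (hcrit : S.Crit i)
    (θ : V) (hθ1 : (S.psiLe (i - 1))ᶜ = insert θ ((S.psiLe i)ᶜ)) (hθ2 : θ ∈ S.psiLe i)
    (f g : V → Option V) (hf : S.Sel Set.univ f) (hg : S.Sel Set.univ g)
    (h1 : ∀ x ∈ S.theta (i + 1), S.ViewEq f g (i + 1) x)
    (h2 : ∀ s ∈ S.B (S.vs i), (f θ = some s ↔ g θ = some s))
    (h3 : ∀ t ∈ S.B (S.vs i), (f t = some θ ↔ g t = some θ)) :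
    ∀ x ∈ S.theta i, S.ViewEq f g i x := by
  classical
  obtain ⟨hcol, ⟨⟨hT, hcover, hconn⟩, hleaf1, hleaf2, hnice⟩, hdft, hroot⟩ := hS
  have hne : ∀ s : V, ∃ x, s ∈ S.B x := by
    intro s
    obtain ⟨x, _, hx⟩ := hleaf2 s
    exact ⟨x, by rw [hx]; exact Finset.mem_singleton_self s⟩
  have hcompl : ∀ s' : V, s' ∉ S.psiLe (i-1) ↔ (s' = θ ∨ s' ∉ S.psiLe i) := by
    intro s'
    have h := Set.ext_iff.1 hθ1 s'
    simpa [Set.mem_insert_iff] using h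
  have hilt : i < S.len := by
    have := hdft.one_le
    omega
  have C : Aux.Ctx S i θ := ⟨hT, hcover, hconn, hne, hdft, hi1, hilt, hcompl, hθ2⟩
  intro x hx
  rcases Aux.adj_anc_dichotomy (root := S.root) hT C.adj with hA | hB
  · by_cases hxv : x = S.vs i
    · subst hxv
      intro s hs w
      exact C.mainA hA hf hg (fun s' hs' w' => h1 (S.vs i) hA s' hs' w')
        (fun s' hs' w' => h1 (S.vs (i+1)) (Aux.anc_refl _) s' hs' w') h2 h3 s hs w
    · obtain ⟨hset, hmem⟩ := C.transferA hx hxv hA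
      intro s hs w
      calc S.SelView f i x s w
          ↔ S.SelView f (i+1) x s w := Aux.selView_congr_set hset w
        _ ↔ S.SelView g (i+1) x s w := h1 x hmem s hs w
        _ ↔ S.SelView g i x s w := (Aux.selView_congr_set hset w).symm
  · by_cases hxv : x = S.vs i
    · subst hxv
      intro s hs w
      exact C.mainB hB hf hg h2 h3 s hs w
    · obtain ⟨hset, hmem⟩ := C.transferB hB hx hxv
      intro s hs w
      calc S.SelView f i x s w
          ↔ S.SelView f (i+1) x s w := Aux.selView_congr_set hset w
        _ ↔ S.SelView g (i+1) x s w := h1 x hmem s hs w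
        _ ↔ S.SelView g i x s w := (Aux.selView_congr_set hset w).symm
end

section
/- Assume |V| ≥ 2. (i) For every V_0-selector g and every node v ∈ Θ_ℓ, the selector view ω_ℓ^g(v) is the singleton set consisting of the constant function s ↦ ? on 𝐓(v). (ii) For every non-critical index i ≤ ℓ−1 and all V_0-selectors g and h: if ω_{i+1}^g(v) = ω_{i+1}^h(v) for every v ∈ Θ_{i+1}, then ω_i^g(v) = ω_i^h(v) for every v ∈ Θ_i. -/
universe u v

section IterAux

universe u' v'

variable {V : Type u'} {𝒱 : Type v'}

theorem iter_zero (f : V → Option V) (s : V) : iter f s 0 = some s := rfl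

theorem iter_succ (f : V → Option V) (s : V) (n : ℕ) :
    iter f s (n + 1) = (iter f s n).bind f := rfl

theorem iter_one (f : V → Option V) (s : V) : iter f s 1 = f s := by
  rw [iter_succ, iter_zero, Option.bind_some]

theorem iter_none_le {f : V → Option V} {s : V} {m n : ℕ} (hmn : m ≤ n)
    (h : iter f s m = none) : iter f s n = none := by
  induction n with
  | zero => exact (Nat.le_zero.mp hmn) ▸ h
  | succ k ih =>
    rcases Nat.lt_or_ge m (k+1) with hm | hm
    · rw [iter_succ, ih (Nat.lt_succ_iff.mp hm), Option.bind_none]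
    · exact (Nat.le_antisymm hmn hm) ▸ h

theorem iter_some_of_le {f : V → Option V} {s t : V} {m n : ℕ} (hmn : m ≤ n)
    (h : iter f s n = some t) : ∃ u, iter f s m = some u := by
  cases hm : iter f s m with
  | none => rw [iter_none_le hmn hm] at h; exact absurd h (by simp)
  | some u => exact ⟨u, rfl⟩

theorem iter_congr_upto {f f' : V → Option V} {s : V} {J : ℕ}
    (h : ∀ n, n < J → ∀ u, iter f s n = some u → f u = f' u) :
    ∀ n, n ≤ J → iter f s n = iter f' s n := by
  intro n hn
  induction n with
  | zero => rfl
  | succ k ih =>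
    have hk : iter f s k = iter f' s k := ih (Nat.le_of_succ_le hn)
    rw [iter_succ, iter_succ, ← hk]
    cases hik : iter f s k with
    | none => rfl
    | some u => simp only [Option.bind_some]; exact h k (Nat.lt_of_succ_le hn) u hik

theorem iter_congr_all {f f' : V → Option V} {s : V}
    (h : ∀ n u, iter f s n = some u → f u = f' u) :
    ∀ n, iter f s n = iter f' s n := fun n =>
  iter_congr_upto (fun m _ u hu => h m u hu) n le_rfl

theorem traceWin_mono (S : Setting V 𝒱) {f f' : V → Option V} {s : V}
    (hiter : ∀ n, iter f s n = iter f' s n)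
    (hf : ∀ n u, iter f s n = some u → f u = f' u) :
    S.TraceWin f s → S.TraceWin f' s := by
  rintro (⟨n, t, h1, h2, h3⟩ | ⟨h1, m, hm, ⟨t, ht, hc⟩, hmax⟩)
  · exact Or.inl ⟨n, t, (hiter n) ▸ h1, (hf n t h1) ▸ h2, h3⟩
  · refine Or.inr ⟨fun n => (hiter n) ▸ h1 n, m, hm, ⟨t, fun N => ?_, hc⟩,
      fun t' ht' => hmax t' (fun N => ?_)⟩
    · obtain ⟨n, hn1, hn2⟩ := ht N; exact ⟨n, hn1, (hiter n) ▸ hn2⟩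
    · obtain ⟨n, hn1, hn2⟩ := ht' N; exact ⟨n, hn1, (hiter n) ▸ hn2⟩

theorem traceWin_congr (S : Setting V 𝒱) {f f' : V → Option V} {s : V}
    (hiter : ∀ n, iter f s n = iter f' s n)
    (hf : ∀ n u, iter f s n = some u → f u = f' u) :
    S.TraceWin f s ↔ S.TraceWin f' s :=
  ⟨traceWin_mono S hiter hf,
   traceWin_mono S (fun n => (hiter n).symm)
     (fun n u hu => (hf n u (by rw [hiter n]; exact hu)).symm)⟩

/-- Abstract selector view with respect to an arbitrary region `P`. -/
def GV (S : Setting V 𝒱) (P : Set V) (f : V → Option V) (s : V) : View V → Prop := fun w =>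
  match w with
  | View.unk =>
      (f s = none ∧ s ∉ P) ∨ (∃ t : V, f s = some t ∧ t ∉ P)
  | View.top =>
      (f s ≠ none ∨ s ∈ P) ∧
      (∀ (n : ℕ) (t : V), 1 ≤ n → iter f s n = some t → t ∈ P) ∧
      S.TraceWin f s
  | View.bot =>
      (f s ≠ none ∨ s ∈ P) ∧
      (∀ (n : ℕ) (t : V), 1 ≤ n → iter f s n = some t → t ∈ P) ∧
      ¬ S.TraceWin f s
  | View.exit t m =>
      ∃ j : ℕ, 2 ≤ j ∧ iter f s j = some t ∧ t ∉ P ∧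
        (∀ (n : ℕ) (u : V), 1 ≤ n → n < j → iter f s n = some u → u ∈ P) ∧
        (∃ (n : ℕ) (u : V), n < j ∧ iter f s n = some u ∧ S.c u = m) ∧
        (∀ (n : ℕ) (u : V), n < j → iter f s n = some u → S.c u ≤ m)

theorem selView_eq_gv (S : Setting V 𝒱) (f : V → Option V) (i : ℕ) (x : 𝒱) (s : V)
    (w : View V) : S.SelView f i x s w ↔ GV S (S.psiGtAt i x) f s w := by
  cases w <;> exact Iff.rfl

theorem gv_congr (S : Setting V 𝒱) {P P' : Set V} (h : P = P') (f : V → Option V)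
    (s : V) (w : View V) : GV S P f s w ↔ GV S P' f s w := by rw [h]

end IterAux
section GVAux

universe u' v'

variable {V : Type u'} {𝒱 : Type v'} {S : Setting V 𝒱}

theorem gv_empty {P : Set V} (hP : ∀ t, t ∉ P) (f : V → Option V) (s : V) (w : View V) :
    GV S P f s w ↔ w = View.unk := by
  constructor
  · intro hw
    cases w with
    | unk => rfl
    | top =>
      obtain ⟨h1, h2, -⟩ := hw
      cases hfs : f s with
      | none => exact absurd (h1.resolve_right (hP s)) (by simp [hfs])
      | some t => exact absurd (h2 1 t le_rfl (by rw [iter_one]; exact hfs)) (hP t)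
    | bot =>
      obtain ⟨h1, h2, -⟩ := hw
      cases hfs : f s with
      | none => exact absurd (h1.resolve_right (hP s)) (by simp [hfs])
      | some t => exact absurd (h2 1 t le_rfl (by rw [iter_one]; exact hfs)) (hP t)
    | exit t m =>
      obtain ⟨j, hj2, hjt, -, hpre, -, -⟩ := hw
      obtain ⟨u, hu⟩ := iter_some_of_le (le_of_lt (Nat.lt_of_lt_of_le Nat.one_lt_two hj2)) hjt
      exact absurd (hpre 1 u le_rfl (Nat.lt_of_lt_of_le Nat.one_lt_two hj2) hu) (hP u)
  · rintro rfl
    cases hfs : f s with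
    | none => exact Or.inl ⟨hfs, hP s⟩
    | some t => exact Or.inr ⟨t, hfs, hP t⟩

theorem gv_mono {P : Set V} {f f' : V → Option V} {s : V}
    (hs : s ∉ P) (hagree : ∀ u ∈ P, f u = f' u)
    (hsel : ∀ t ∈ P, (f s = some t ↔ f' s = some t)) :
    ∀ w, GV S P f s w → GV S P f' s w := by
  intro w hw
  cases w with
  | unk =>
    rcases hw with ⟨hnone, -⟩ | ⟨t, hft, htP⟩
    · cases hfs' : f' s with
      | none => exact Or.inl ⟨hfs', hs⟩
      | some t =>
        refine Or.inr ⟨t, hfs', fun htP => ?_⟩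
        rw [(hsel t htP).2 hfs'] at hnone; exact absurd hnone (by simp)
    · cases hfs' : f' s with
      | none => exact Or.inl ⟨hfs', hs⟩
      | some t' =>
        refine Or.inr ⟨t', hfs', fun ht' => ?_⟩
        have := ((hsel t' ht').2 hfs').symm.trans hft
        exact htP (Option.some.inj this ▸ ht')
  | top =>
    obtain ⟨h1, h2, h3⟩ := hw
    obtain ⟨t, hft⟩ := Option.ne_none_iff_exists'.mp (h1.resolve_right hs)
    have htP : t ∈ P := h2 1 t le_rfl (by rw [iter_one]; exact hft)
    have hfs' : f' s = some t := (hsel t htP).1 hft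
    have htr : ∀ n u, iter f s n = some u → f u = f' u := by
      intro n u hu
      cases n with
      | zero => rw [show u = s from (Option.some.inj hu).symm, hft, hfs']
      | succ k => exact hagree u (h2 (k+1) u (Nat.succ_le_succ (Nat.zero_le k)) hu)
    have hiter := iter_congr_all htr
    exact ⟨Or.inl (by simp [hfs']), fun n u hn hu => h2 n u hn (by rw [hiter n]; exact hu),
      traceWin_mono S hiter htr h3⟩
  | bot =>
    obtain ⟨h1, h2, h3⟩ := hw
    obtain ⟨t, hft⟩ := Option.ne_none_iff_exists'.mp (h1.resolve_right hs)
    have htP : t ∈ P := h2 1 t le_rfl (by rw [iter_one]; exact hft)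
    have hfs' : f' s = some t := (hsel t htP).1 hft
    have htr : ∀ n u, iter f s n = some u → f u = f' u := by
      intro n u hu
      cases n with
      | zero => rw [show u = s from (Option.some.inj hu).symm, hft, hfs']
      | succ k => exact hagree u (h2 (k+1) u (Nat.succ_le_succ (Nat.zero_le k)) hu)
    have hiter := iter_congr_all htr
    exact ⟨Or.inl (by simp [hfs']), fun n u hn hu => h2 n u hn (by rw [hiter n]; exact hu),
      fun hw => h3 ((traceWin_congr S hiter htr).2 hw)⟩
  | exit t m =>
    obtain ⟨j, hj2, hjt, htP, hpre, hex, hmax⟩ := hw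
    have h1j : 1 < j := hj2
    obtain ⟨u₁, hu₁⟩ := iter_some_of_le (le_of_lt h1j) hjt
    have hu₁P : u₁ ∈ P := hpre 1 u₁ le_rfl h1j hu₁
    have hfs : f s = some u₁ := by rw [← iter_one f s]; exact hu₁
    have hfs' : f' s = some u₁ := (hsel u₁ hu₁P).1 hfs
    have htr : ∀ n, n < j → ∀ u, iter f s n = some u → f u = f' u := by
      intro n hn u hu
      cases n with
      | zero => rw [show u = s from (Option.some.inj hu).symm, hfs, hfs']
      | succ k => exact hagree u (hpre (k+1) u (Nat.succ_le_succ (Nat.zero_le k)) hn hu)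
    have hiter := iter_congr_upto htr
    refine ⟨j, hj2, by rw [← hiter j le_rfl]; exact hjt, htP,
      fun n u hn1 hnj hu => hpre n u hn1 hnj (by rw [hiter n (le_of_lt hnj)]; exact hu),
      ?_, fun n u hnj hu => hmax n u hnj (by rw [hiter n (le_of_lt hnj)]; exact hu)⟩
    obtain ⟨n, u, hnj, hnu, hcu⟩ := hex
    exact ⟨n, u, hnj, by rw [← hiter n (le_of_lt hnj)]; exact hnu, hcu⟩

theorem gv_iff {P : Set V} {f f' : V → Option V} {s : V}
    (hs : s ∉ P) (hagree : ∀ u ∈ P, f u = f' u)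
    (hsel : ∀ t ∈ P, (f s = some t ↔ f' s = some t)) (w : View V) :
    GV S P f s w ↔ GV S P f' s w :=
  ⟨gv_mono hs hagree hsel w,
   gv_mono hs (fun u hu => (hagree u hu).symm) (fun t ht => (hsel t ht).symm) w⟩

/-- If the trace enters `A` and stays in `A ∪ A'` (up to step `J`), it stays in `A`,
provided there are no edges from `A` to `A'`. -/
theorem stay {A A' : Set V} {f : V → Option V} {s t : V} {J : ℕ}
    (hf : S.Sel Set.univ f)
    (hcross : ∀ u t', u ∈ A → t' ∈ A' → ¬ S.E u t')
    (hbound : ∀ n u, 1 ≤ n → n < J → iter f s n = some u → u ∈ A ∪ A')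
    (hft : f s = some t) (htA : t ∈ A) :
    ∀ n u, 1 ≤ n → n < J → iter f s n = some u → u ∈ A := by
  intro n
  induction n with
  | zero => intro u h1 _ _; exact absurd h1 (by simp)
  | succ k ih =>
    intro u h1 hJ hu
    cases k with
    | zero =>
      rw [iter_one] at hu
      have : t = u := Option.some.inj (hft ▸ hu)
      exact this ▸ htA
    | succ k' =>
      have hk1 : 1 ≤ k' + 1 := Nat.succ_le_succ (Nat.zero_le k')
      rw [iter_succ] at hu
      cases hik : iter f s (k' + 1) with
      | none => rw [hik, Option.bind_none] at hu; exact absurd hu (by simp)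
      | some u' =>
        rw [hik, Option.bind_some] at hu
        have hu'A : u' ∈ A := ih u' hk1 (Nat.lt_of_succ_lt hJ) hik
        have hE : S.E u' u := (hf u' u hu).2
        cases hbound (k'+1+1) u h1 hJ (by rw [iter_succ, hik, Option.bind_some]; exact hu) with
        | inl hA => exact hA
        | inr hA' => exact absurd hE (hcross u' u hu'A hA')

theorem gv_union_unk {A A' : Set V} {f : V → Option V} {s : V}
    (hsA : s ∉ A) (hsA' : s ∉ A') :
    GV S (A ∪ A') f s View.unk ↔ (GV S A f s View.unk ∧ GV S A' f s View.unk) := by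
  constructor
  · rintro (⟨hn, -⟩ | ⟨t, hft, htP⟩)
    · exact ⟨Or.inl ⟨hn, hsA⟩, Or.inl ⟨hn, hsA'⟩⟩
    · exact ⟨Or.inr ⟨t, hft, fun c => htP (Or.inl c)⟩,
        Or.inr ⟨t, hft, fun c => htP (Or.inr c)⟩⟩
  · rintro ⟨hA | ⟨t, hft, htA⟩, hA'⟩
    · exact Or.inl ⟨hA.1, fun c => c.elim hsA hsA'⟩
    · rcases hA' with ⟨hn, -⟩ | ⟨t', hft', htA'⟩
      · rw [hft] at hn; exact absurd hn (by simp)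
      · have ht't : t' = t := Option.some.inj (hft'.symm.trans hft)
        subst ht't
        exact Or.inr ⟨t', hft, fun c => c.elim htA htA'⟩

theorem gv_union_top {A A' : Set V} {f : V → Option V} {s : V}
    (hf : S.Sel Set.univ f)
    (hcross : ∀ u t', u ∈ A → t' ∈ A' → ¬ S.E u t' ∧ ¬ S.E t' u)
    (hsA : s ∉ A) (hsA' : s ∉ A') :
    GV S (A ∪ A') f s View.top ↔ (GV S A f s View.top ∨ GV S A' f s View.top) := by
  constructor
  · rintro ⟨h1, h2, h3⟩
    have hne : f s ≠ none := h1.resolve_right (fun c => c.elim hsA hsA')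
    obtain ⟨t, hft⟩ := Option.ne_none_iff_exists'.mp hne
    cases h2 1 t le_rfl (by rw [iter_one]; exact hft) with
    | inl htA =>
      refine Or.inl ⟨Or.inl hne, fun n u hn hnu => ?_, h3⟩
      exact stay hf (fun u t' hu ht' => (hcross u t' hu ht').1)
        (fun n u h1' _ hu => h2 n u h1' hu) hft htA n u hn (Nat.lt_succ_self n) hnu
    | inr htA' =>
      refine Or.inr ⟨Or.inl hne, fun n u hn hnu => ?_, h3⟩
      refine stay (A := A') (A' := A) hf (fun u t' hu ht' => (hcross t' u ht' hu).2)
        (fun n u h1' _ hu => (h2 n u h1' hu).symm) hft htA' n u hn (Nat.lt_succ_self n) hnu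
  · rintro (⟨h1, h2, h3⟩ | ⟨h1, h2, h3⟩)
    · exact ⟨Or.inl (h1.resolve_right hsA), fun n u hn hu => Or.inl (h2 n u hn hu), h3⟩
    · exact ⟨Or.inl (h1.resolve_right hsA'), fun n u hn hu => Or.inr (h2 n u hn hu), h3⟩

theorem gv_union_bot {A A' : Set V} {f : V → Option V} {s : V}
    (hf : S.Sel Set.univ f)
    (hcross : ∀ u t', u ∈ A → t' ∈ A' → ¬ S.E u t' ∧ ¬ S.E t' u)
    (hsA : s ∉ A) (hsA' : s ∉ A') :
    GV S (A ∪ A') f s View.bot ↔ (GV S A f s View.bot ∨ GV S A' f s View.bot) := by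
  constructor
  · rintro ⟨h1, h2, h3⟩
    have hne : f s ≠ none := h1.resolve_right (fun c => c.elim hsA hsA')
    obtain ⟨t, hft⟩ := Option.ne_none_iff_exists'.mp hne
    cases h2 1 t le_rfl (by rw [iter_one]; exact hft) with
    | inl htA =>
      refine Or.inl ⟨Or.inl hne, fun n u hn hnu => ?_, h3⟩
      exact stay hf (fun u t' hu ht' => (hcross u t' hu ht').1)
        (fun n u h1' _ hu => h2 n u h1' hu) hft htA n u hn (Nat.lt_succ_self n) hnu
    | inr htA' =>
      refine Or.inr ⟨Or.inl hne, fun n u hn hnu => ?_, h3⟩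
      refine stay (A := A') (A' := A) hf (fun u t' hu ht' => (hcross t' u ht' hu).2)
        (fun n u h1' _ hu => (h2 n u h1' hu).symm) hft htA' n u hn (Nat.lt_succ_self n) hnu
  · rintro (⟨h1, h2, h3⟩ | ⟨h1, h2, h3⟩)
    · exact ⟨Or.inl (h1.resolve_right hsA), fun n u hn hu => Or.inl (h2 n u hn hu), h3⟩
    · exact ⟨Or.inl (h1.resolve_right hsA'), fun n u hn hu => Or.inr (h2 n u hn hu), h3⟩

theorem gv_union_exit {A A' : Set V} {f : V → Option V} {s : V} {t : V} {m : ℕ}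
    (hf : S.Sel Set.univ f)
    (hcross : ∀ u t', u ∈ A → t' ∈ A' → ¬ S.E u t' ∧ ¬ S.E t' u) :
    GV S (A ∪ A') f s (View.exit t m) ↔
      (GV S A f s (View.exit t m) ∨ GV S A' f s (View.exit t m)) := by
  have key : ∀ (X Y : Set V), (∀ u t', u ∈ X → t' ∈ Y → ¬ S.E u t') →
      GV S X f s (View.exit t m) → t ∉ Y → GV S (X ∪ Y) f s (View.exit t m) := by
    intro X Y _ hw htY
    obtain ⟨j, hj2, hjt, htX, hpre, hex, hmax⟩ := hw
    exact ⟨j, hj2, hjt, fun c => c.elim htX htY,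
      fun n u h1 hnj hu => Or.inl (hpre n u h1 hnj hu), hex, hmax⟩
  constructor
  · rintro ⟨j, hj2, hjt, htP, hpre, hex, hmax⟩
    have h1j : 1 < j := hj2
    obtain ⟨u₁, hu₁⟩ := iter_some_of_le (le_of_lt h1j) hjt
    have hfs : f s = some u₁ := by rw [← iter_one f s]; exact hu₁
    cases hpre 1 u₁ le_rfl h1j hu₁ with
    | inl hA =>
      refine Or.inl ⟨j, hj2, hjt, fun c => htP (Or.inl c),
        fun n u h1 hnj hu => ?_, hex, hmax⟩
      exact stay hf (fun u t' hu ht' => (hcross u t' hu ht').1) hpre hfs hA n u h1 hnj hu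
    | inr hA' =>
      refine Or.inr ⟨j, hj2, hjt, fun c => htP (Or.inr c),
        fun n u h1 hnj hu => ?_, hex, hmax⟩
      refine stay (A := A') (A' := A) hf (fun u t' hu ht' => (hcross t' u ht' hu).2)
        (fun n u h1' hnj' hu => (hpre n u h1' hnj' hu).symm) hfs hA' n u h1 hnj hu
  · rintro (hw | hw)
    · -- exit from A; show t ∉ A'
      refine key A A' (fun u t' hu ht' => (hcross u t' hu ht').1) hw ?_
      intro htA'
      obtain ⟨j, hj2, hjt, htX, hpre, hex, hmax⟩ := hw
      have hj1 : 1 ≤ j - 1 := Nat.le_sub_of_add_le hj2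
      have hjj : j - 1 + 1 = j := Nat.succ_pred_eq_of_pos (Nat.lt_of_lt_of_le Nat.zero_lt_two hj2)
      obtain ⟨u, hu⟩ := iter_some_of_le (Nat.sub_le j 1) hjt
      have huA : u ∈ A := hpre (j-1) u hj1 (Nat.sub_lt (Nat.lt_of_lt_of_le Nat.zero_lt_two hj2) Nat.one_pos) hu
      have hfu : f u = some t := by
        have : iter f s ((j-1)+1) = some t := by rw [hjj]; exact hjt
        rw [iter_succ, hu, Option.bind_some] at this; exact this
      exact (hcross u t huA htA').1 (hf u t hfu).2
    · have hsymm : ∀ u t', u ∈ A' → t' ∈ A → ¬ S.E u t' := fun u t' hu ht' =>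
        (hcross t' u ht' hu).2
      have := key A' A hsymm hw ?_
      · obtain ⟨j, hj2, hjt, htX, hpre, hex, hmax⟩ := this
        exact ⟨j, hj2, hjt, fun c => htX (Or.symm c),
          fun n u h1 hnj hu => Or.symm (hpre n u h1 hnj hu), hex, hmax⟩
      · intro htA
        obtain ⟨j, hj2, hjt, htX, hpre, hex, hmax⟩ := hw
        have hj1 : 1 ≤ j - 1 := Nat.le_sub_of_add_le hj2
        have hjj : j - 1 + 1 = j := Nat.succ_pred_eq_of_pos (Nat.lt_of_lt_of_le Nat.zero_lt_two hj2)
        obtain ⟨u, hu⟩ := iter_some_of_le (Nat.sub_le j 1) hjt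
        have huA' : u ∈ A' := hpre (j-1) u hj1 (Nat.sub_lt (Nat.lt_of_lt_of_le Nat.zero_lt_two hj2) Nat.one_pos) hu
        have hfu : f u = some t := by
          have : iter f s ((j-1)+1) = some t := by rw [hjj]; exact hjt
          rw [iter_succ, hu, Option.bind_some] at this; exact this
        exact (hcross t u htA huA').2 (hf u t hfu).2

theorem gv_union_congr {A A' : Set V} {f f' : V → Option V} {s : V}
    (hf : S.Sel Set.univ f) (hf' : S.Sel Set.univ f')
    (hcross : ∀ u t', u ∈ A → t' ∈ A' → ¬ S.E u t' ∧ ¬ S.E t' u)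
    (hsA : s ∉ A) (hsA' : s ∉ A')
    (hA : ∀ w, GV S A f s w ↔ GV S A f' s w)
    (hA' : ∀ w, GV S A' f s w ↔ GV S A' f' s w) :
    ∀ w, GV S (A ∪ A') f s w ↔ GV S (A ∪ A') f' s w := by
  intro w
  cases w with
  | unk => rw [gv_union_unk hsA hsA', gv_union_unk hsA hsA', hA, hA']
  | top => rw [gv_union_top hf hcross hsA hsA', gv_union_top hf' hcross hsA hsA', hA, hA']
  | bot => rw [gv_union_bot hf hcross hsA hsA', gv_union_bot hf' hcross hsA hsA', hA, hA']
  | exit t m => rw [gv_union_exit hf hcross, gv_union_exit hf' hcross, hA, hA']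

end GVAux
section TreeAux

universe u' v'

open SimpleGraph Walk

variable {𝒱 : Type v'} {T : SimpleGraph 𝒱} {root : 𝒱}

/-- The unique path between two vertices of a tree. -/
noncomputable def tpath (hT : T.IsTree) (x y : 𝒱) : T.Walk x y :=
  (hT.existsUnique_path x y).choose

theorem tpath_isPath (hT : T.IsTree) (x y : 𝒱) : (tpath hT x y).IsPath :=
  (hT.existsUnique_path x y).choose_spec.1

theorem tpath_unique (hT : T.IsTree) {x y : 𝒱} (p : T.Walk x y) (hp : p.IsPath) :
    p = tpath hT x y :=
  (hT.existsUnique_path x y).choose_spec.2 p hp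

theorem anc_iff (hT : T.IsTree) {x y : 𝒱} :
    Anc T root x y ↔ x ∈ (tpath hT root y).support :=
  ⟨fun h => h _ (tpath_isPath hT root y),
   fun h p hp => (tpath_unique hT p hp).symm ▸ h⟩

theorem anc_self (x : 𝒱) : Anc T root x x := fun p _ => p.end_mem_support

theorem anc_root (y : 𝒱) : Anc T root root y := fun p _ => p.start_mem_support

theorem anc_trans [DecidableEq 𝒱] (hT : T.IsTree) {x y z : 𝒱}
    (hxy : Anc T root x y) (hyz : Anc T root y z) : Anc T root x z := by
  intro p hp
  have hy : y ∈ p.support := hyz p hp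
  exact p.support_takeUntil_subset hy (hxy (p.takeUntil y hy) (hp.takeUntil hy))

theorem anc_antisymm [DecidableEq 𝒱] (hT : T.IsTree) {x y : 𝒱}
    (hxy : Anc T root x y) (hyx : Anc T root y x) : x = y := by
  set p := tpath hT root y with hpdef
  have hp : p.IsPath := tpath_isPath hT root y
  have hx : x ∈ p.support := (anc_iff hT).mp hxy
  set q := p.takeUntil x hx with hqdef
  have hq : q.IsPath := hp.takeUntil hx
  have hyq : y ∈ q.support := hyx q hq
  set r := q.takeUntil y hyq with hrdef
  have hr : r.IsPath := hq.takeUntil hyq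
  have hrp : r = p := (tpath_unique hT r hr)
  have h1 : r.length ≤ q.length := q.length_takeUntil_le hyq
  have h2 : q.length ≤ p.length := p.length_takeUntil_le hx
  have h1' : p.length ≤ q.length := by rw [← hrp]; exact h1
  have h3 : q.length = p.length := le_antisymm h2 h1'
  have h4 := congrArg Walk.length (p.take_spec hx)
  rw [Walk.length_append] at h4
  have h5 : (p.dropUntil x hx).length = 0 := by
    have : q.length + (p.dropUntil x hx).length = p.length := h4
    omega
  exact Walk.eq_of_length_eq_zero h5

theorem take_drop_inter [DecidableEq 𝒱] {p : T.Walk x y} (hp : p.IsPath)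
    {z u : 𝒱} (hz : z ∈ p.support)
    (h1 : u ∈ (p.takeUntil z hz).support) (h2 : u ∈ (p.dropUntil z hz).support) :
    u = z := by
  have hnodup : p.support.Nodup := (Walk.isPath_def p).mp hp
  have hspec := p.take_spec hz
  have hsupp : (p.takeUntil z hz).support ++ ((p.dropUntil z hz).support).tail
      = p.support := by
    rw [← Walk.support_append, hspec]
  rw [← hsupp] at hnodup
  have hdisj := (List.nodup_append.mp hnodup).2.2
  have h2' : u ∈ z :: (p.dropUntil z hz).support.tail := by
    rw [← Walk.support_eq_cons]; exact h2
  rcases List.mem_cons.mp h2' with h | h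
  · exact h
  · exact (hdisj u h1 u h rfl).elim

theorem anc_total [DecidableEq 𝒱] (hT : T.IsTree) {x y z : 𝒱}
    (hx : Anc T root x z) (hy : Anc T root y z) :
    Anc T root x y ∨ Anc T root y x := by
  set p := tpath hT root z with hpdef
  have hp : p.IsPath := tpath_isPath hT root z
  have hxs : x ∈ p.support := (anc_iff hT).mp hx
  have hys : y ∈ p.support := (anc_iff hT).mp hy
  by_cases hyq : y ∈ (p.takeUntil x hxs).support
  · right
    have : p.takeUntil x hxs = tpath hT root x := tpath_unique hT _ (hp.takeUntil hxs)
    rw [anc_iff hT, ← this]; exact hyq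
  · left
    have hyd : y ∈ (p.dropUntil x hxs).support := by
      have := hys
      rw [← p.take_spec hxs, Walk.mem_support_append_iff] at this
      exact this.resolve_left hyq
    set d := (p.dropUntil x hxs).takeUntil y hyd with hddef
    have hdp : d.IsPath := (hp.dropUntil hxs).takeUntil hyd
    set r := (p.takeUntil x hxs).append d with hrdef
    have hrp : r.IsPath := by
      rw [Walk.isPath_def, Walk.support_append]
      have hdnodup : d.support.Nodup := (Walk.isPath_def _).mp hdp
      have hdnodup' : (x :: d.support.tail).Nodup := by
        rw [← Walk.support_eq_cons d]; exact hdnodup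
      refine List.Nodup.append ((Walk.isPath_def _).mp (hp.takeUntil hxs))
        (List.nodup_cons.mp hdnodup').2 ?_
      intro u hu1 hu2
      have hu2' : u ∈ d.support := List.mem_of_mem_tail hu2
      have hud : u ∈ (p.dropUntil x hxs).support :=
        (p.dropUntil x hxs).support_takeUntil_subset hyd hu2'
      have hux : u = x := take_drop_inter hp hxs hu1 hud
      exact (List.nodup_cons.mp hdnodup').1 (hux ▸ hu2)
    have hxr : x ∈ r.support := by
      rw [hrdef, Walk.mem_support_append_iff]
      exact Or.inl (Walk.end_mem_support _)
    intro q hq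
    rw [tpath_unique hT q hq, ← tpath_unique hT r hrp]
    exact hxr

theorem adj_anc [DecidableEq 𝒱] (hT : T.IsTree) {x y : 𝒱} (h : T.Adj x y) :
    Anc T root x y ∨ Anc T root y x := by
  set p := tpath hT root x with hpdef
  have hp : p.IsPath := tpath_isPath hT root x
  by_cases hy : y ∈ p.support
  · right; exact (anc_iff hT).mpr hy
  · left
    have hr : (p.concat h).IsPath := by
      rw [Walk.isPath_def, Walk.support_concat]
      refine List.Nodup.append ((Walk.isPath_def p).mp hp) (List.nodup_singleton y) ?_
      intro a ha hay
      rw [List.mem_singleton] at hay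
      exact hy (hay ▸ ha)
    intro q hq
    rw [tpath_unique hT q hq, ← tpath_unique hT _ hr]
    rw [Walk.support_concat]
    exact List.mem_append_left _ p.end_mem_support

theorem path_parent [DecidableEq 𝒱] (hT : T.IsTree) {x y : 𝒱}
    (hanc : Anc T root x y) (had : T.Adj x y) :
    tpath hT root y = (tpath hT root x).concat had := by
  have hy : y ∉ (tpath hT root x).support := by
    intro hy
    exact had.ne (anc_antisymm hT hanc ((anc_iff hT).mpr hy))
  have hr : ((tpath hT root x).concat had).IsPath := by
    rw [Walk.isPath_def, Walk.support_concat]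
    refine List.Nodup.append ((Walk.isPath_def _).mp (tpath_isPath hT root x))
      (List.nodup_singleton y) ?_
    intro a ha hay
    rw [List.mem_singleton] at hay
    exact hy (hay ▸ ha)
  exact (tpath_unique hT _ hr).symm

theorem anc_of_parent [DecidableEq 𝒱] (hT : T.IsTree) {x y z : 𝒱}
    (hanc : Anc T root x y) (had : T.Adj x y)
    (hz : Anc T root z y) (hzy : z ≠ y) : Anc T root z x := by
  have hzs : z ∈ (tpath hT root y).support := (anc_iff hT).mp hz
  rw [path_parent hT hanc had, Walk.support_concat] at hzs
  rcases List.mem_append.mp hzs with h | h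
  · exact (anc_iff hT).mpr h
  · exact absurd (List.mem_singleton.mp h) hzy

theorem depth_parent [DecidableEq 𝒱] (hT : T.IsTree) {x y : 𝒱}
    (hanc : Anc T root x y) (had : T.Adj x y) :
    (tpath hT root y).length = (tpath hT root x).length + 1 := by
  rw [path_parent hT hanc had, Walk.length_concat]

theorem cross_entry [DecidableEq 𝒱] (hT : T.IsTree) {a b x y : 𝒱}
    (hab : Anc T root a b) (had : T.Adj a b)
    (hx : ¬ Anc T root b x) (hy : Anc T root b y) (hadj : T.Adj x y) :
    x = a ∧ y = b := by
  rcases adj_anc hT hadj with hxy | hyx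
  · by_cases hyb : y = b
    · subst hyb
      have h1 : Anc T root x a := anc_of_parent hT hab had hxy hadj.ne
      have h2 : Anc T root a x := anc_of_parent hT hxy hadj hab had.ne
      exact ⟨anc_antisymm hT h1 h2, rfl⟩
    · exact absurd (anc_of_parent hT hxy hadj hy (Ne.symm hyb)) hx
  · exact absurd (anc_trans hT hy hyx) hx

theorem exists_adj (hT : T.IsTree) {x y : 𝒱} (hxy : x ≠ y) (z : 𝒱) :
    ∃ w, T.Adj z w := by
  by_cases hz : z = x
  · subst hz
    obtain ⟨p⟩ := hT.isConnected.preconnected z y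
    cases p with
    | nil => exact absurd rfl hxy
    | cons h q => exact ⟨_, h⟩
  · obtain ⟨p⟩ := hT.isConnected.preconnected z x
    cases p with
    | nil => exact absurd rfl hz
    | cons h q => exact ⟨_, h⟩

theorem anc_between [DecidableEq 𝒱] (hT : T.IsTree) {a b z : 𝒱}
    (hab : Anc T root a b) (hbz : Anc T root b z) (hne : a ≠ b) :
    ∀ p : T.Walk a z, p.IsPath → b ∈ p.support := by
  intro p hp
  have haz : Anc T root a z := anc_trans hT hab hbz
  have has : a ∈ (tpath hT root z).support := (anc_iff hT).mp haz
  have hdrop : (tpath hT root z).dropUntil a has = p := by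
    have h1 : ((tpath hT root z).dropUntil a has).IsPath :=
      (tpath_isPath hT root z).dropUntil has
    rw [tpath_unique hT p hp, tpath_unique hT _ h1]
  have hbs : b ∈ (tpath hT root z).support := (anc_iff hT).mp hbz
  rw [← (tpath hT root z).take_spec has, Walk.mem_support_append_iff] at hbs
  rcases hbs with h | h
  · exfalso
    have : (tpath hT root z).takeUntil a has = tpath hT root a :=
      tpath_unique hT _ ((tpath_isPath hT root z).takeUntil has)
    exact hne (anc_antisymm hT hab ((anc_iff hT).mpr (this ▸ h)))
  · rw [← hdrop]; exact h

theorem exists_entry {Q : 𝒱 → Prop} {vs : ℕ → 𝒱} {k₀ k₁ : ℕ}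
    (h₀ : ¬ Q (vs k₀)) (h₁ : Q (vs k₁)) (hk : k₀ < k₁) :
    ∃ m, k₀ ≤ m ∧ m < k₁ ∧ ¬ Q (vs m) ∧ Q (vs (m+1)) := by
  induction k₁ with
  | zero => omega
  | succ n ih =>
    by_cases hq : Q (vs n)
    · have hk0n : k₀ < n := by
        rcases Nat.lt_or_ge k₀ n with h | h
        · exact h
        · exfalso
          have : k₀ = n := by omega
          exact h₀ (this ▸ hq)
      obtain ⟨m, hm1, hm2, hm3, hm4⟩ := ih hq hk0n
      exact ⟨m, hm1, by omega, hm3, hm4⟩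
    · exact ⟨n, by omega, by omega, hq, h₁⟩

end TreeAux
section TDAux

universe u' v'

open SimpleGraph Walk

variable {V : Type u'} {𝒱 : Type v'} {T : SimpleGraph 𝒱} {root : 𝒱} {B : 𝒱 → Finset V}

theorem bag_walk {s : V} (hconn : (T.induce {x : 𝒱 | s ∈ B x}).Connected)
    {x y : 𝒱} (hx : s ∈ B x) (hy : s ∈ B y) :
    ∃ w : T.Walk x y, ∀ z ∈ w.support, s ∈ B z := by
  obtain ⟨W⟩ := hconn.preconnected ⟨x, hx⟩ ⟨y, hy⟩
  refine ⟨W.map (SimpleGraph.Embedding.induce _).toHom, ?_⟩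
  intro z hz
  replace hz : z ∈ W.support.map (SimpleGraph.Embedding.induce (G := T) {x : 𝒱 | s ∈ B x}).toHom := by
    rw [← Walk.support_map]; exact hz
  obtain ⟨u, _, rfl⟩ := List.mem_map.mp hz
  exact u.2

theorem bag_conn [DecidableEq 𝒱] (hT : T.IsTree) {s : V}
    (hconn : (T.induce {x : 𝒱 | s ∈ B x}).Connected)
    {x y : 𝒱} (hx : s ∈ B x) (hy : s ∈ B y) :
    ∀ p : T.Walk x y, p.IsPath → ∀ z ∈ p.support, s ∈ B z := by
  obtain ⟨w, hw⟩ := bag_walk hconn hx hy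
  intro p hp z hz
  have hzb : p = w.bypass := by
    rw [tpath_unique hT p hp, tpath_unique hT w.bypass w.bypass_isPath]
  exact hw z (w.support_bypass_subset (hzb ▸ hz))

theorem bagroot_exists [Fintype 𝒱] [DecidableEq 𝒱] [DecidableEq V] (hT : T.IsTree)
    (hconn : ∀ s : V, (T.induce {x : 𝒱 | s ∈ B x}).Connected)
    (hnon : ∀ s : V, ∃ x, s ∈ B x) (s : V) :
    ∃ r, IsBagRoot T root B s r := by
  obtain ⟨x₀, hx₀⟩ := hnon s
  obtain ⟨r, hrF, hrmin⟩ := Finset.exists_min_image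
    (Finset.univ.filter (fun z : 𝒱 => s ∈ B z)) (fun z => (tpath hT root z).length)
    ⟨x₀, by simp [hx₀]⟩
  have hrB : s ∈ B r := by simpa using hrF
  have key : ∀ (u x' : 𝒱) (w : T.Walk u x'),
      (∀ z ∈ w.support, s ∈ B z) → Anc T root r u → Anc T root r x' := by
    intro u x' w
    induction w with
    | nil => exact fun _ h => h
    | @cons u₁ u₂ x'' hadj q ih =>
      intro hsupp hanc
      have hu₂B : s ∈ B u₂ := hsupp u₂ (by
        rw [Walk.support_cons]; exact List.mem_cons_of_mem _ q.start_mem_support)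
      have hanc₂ : Anc T root r u₂ := by
        rcases adj_anc hT hadj with hh | hh
        · exact anc_trans hT hanc hh
        · by_cases hru : r = u₁
          · exfalso
            subst hru
            have hd := depth_parent hT hh hadj.symm
            have hm := hrmin u₂ (by simp [hu₂B])
            omega
          · exact anc_of_parent hT hh hadj.symm hanc hru
      exact ih (fun z hz => hsupp z (by
        rw [Walk.support_cons]; exact List.mem_cons_of_mem _ hz)) hanc₂
  refine ⟨r, hrB, fun x hx => ?_⟩
  obtain ⟨w, hw⟩ := bag_walk (hconn s) hrB hx
  exact key r x w hw (anc_self r)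

theorem down_fresh [DecidableEq 𝒱] (hT : T.IsTree) {vs : ℕ → 𝒱} {ℓ : ℕ}
    (hD : IsDFT T root ℓ vs) {i : ℕ} (h1 : 1 ≤ i) (hiℓ : i < ℓ)
    (hab : Anc T root (vs i) (vs (i+1))) :
    ∀ k, 1 ≤ k → k ≤ i → ¬ Anc T root (vs (i+1)) (vs k) := by
  have hadj := hD.adj i h1 hiℓ
  have hb_ne_root : vs (i+1) ≠ root := by
    intro hh
    have h2 : Anc T root (vs i) root := hh ▸ hab
    have ha : vs i = root := anc_antisymm hT h2 (anc_root _)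
    exact hadj.ne (ha.trans hh.symm)
  have h₀ : ¬ Anc T root (vs (i+1)) (vs 1) := by
    rw [hD.first]
    intro hc
    exact hb_ne_root (anc_antisymm hT hc (anc_root _))
  intro k hk1 hki hQ
  rcases Nat.eq_or_lt_of_le hk1 with hh | hh
  · exact h₀ (hh ▸ hQ)
  · obtain ⟨m, hm1, hm2, hm3, hm4⟩ :=
      exists_entry (Q := fun z => Anc T root (vs (i+1)) z) h₀ hQ hh
    have hmadj := hD.adj m hm1 (by omega)
    obtain ⟨hma, hmb⟩ := cross_entry hT hab hadj hm3 hm4 hmadj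
    obtain ⟨j, _, huniq⟩ := hD.once (vs i) (vs (i+1)) hadj
    have e1 : m = j := huniq m ⟨hm1, by omega, hma, hmb⟩
    have e2 : i = j := huniq i ⟨h1, hiℓ, rfl, rfl⟩
    omega

theorem up_unvisited [DecidableEq 𝒱] (hT : T.IsTree) {vs : ℕ → 𝒱} {ℓ : ℕ}
    (hD : IsDFT T root ℓ vs) {i : ℕ} (h1 : 1 ≤ i) (hiℓ : i < ℓ)
    (hba : Anc T root (vs (i+1)) (vs i)) :
    ∀ k, i + 1 ≤ k → k ≤ ℓ → ¬ Anc T root (vs i) (vs k) := by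
  have hadj := hD.adj i h1 hiℓ
  have hane : vs i ≠ root := by
    intro hh
    have h2 : Anc T root (vs (i+1)) root := hh ▸ hba
    have hb : vs (i+1) = root := anc_antisymm hT h2 (anc_root _)
    exact hadj.ne (hh.trans hb.symm)
  have h₀ : ¬ Anc T root (vs i) (vs 1) := by
    rw [hD.first]
    intro hc
    exact hane (anc_antisymm hT hc (anc_root _))
  have hi1 : 1 < i := by
    rcases Nat.eq_or_lt_of_le h1 with hh | hh
    · exact absurd (anc_self (vs i)) (by rw [← hh] at h₀ ⊢; exact h₀)
    · exact hh
  obtain ⟨d, hd1, hd2, hd3, hd4⟩ :=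
    exists_entry (Q := fun z => Anc T root (vs i) z) h₀ (anc_self (vs i)) hi1
  have hdadj := hD.adj d hd1 (by omega)
  obtain ⟨hda, hdb⟩ := cross_entry hT hba hadj.symm hd3 hd4 hdadj
  obtain ⟨j, _, huniq⟩ := hD.once (vs (i+1)) (vs i) hadj.symm
  have ed : d = j := huniq d ⟨hd1, by omega, hda, hdb⟩
  intro k hk
  induction k, hk using Nat.le_induction with
  | base =>
    intro _ hc
    exact hadj.ne (anc_antisymm hT hc hba)
  | succ k hk ih =>
    intro hkl hc
    have ihk : ¬ Anc T root (vs i) (vs k) := ih (by omega)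
    have hkadj := hD.adj k (by omega) (by omega)
    obtain ⟨hkb, hka⟩ := cross_entry hT hba hadj.symm ihk hc hkadj
    have ek : k = j := huniq k ⟨by omega, by omega, hkb, hka⟩
    omega

theorem node_visited (hT : T.IsTree) {vs : ℕ → 𝒱} {ℓ : ℕ}
    (hD : IsDFT T root ℓ vs) {x y : 𝒱} (hne : x ≠ y) (z : 𝒱) :
    ∃ k, 1 ≤ k ∧ k < ℓ ∧ vs k = z := by
  obtain ⟨w, hw⟩ := exists_adj hT hne z
  obtain ⟨j, ⟨hj1, hj2, hj3, _⟩, _⟩ := hD.once z w hw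
  exact ⟨j, hj1, hj2, hj3⟩

end TDAux

section SettingAux

universe u' v'

variable {V : Type u'} {𝒱 : Type v'} {S : Setting V 𝒱}

theorem gv_unk_only {P : Set V} {f : V → Option V} {s : V}
    (hs : s ∉ P) (hsucc : ∀ t, f s = some t → t ∉ P) (w : View V) :
    GV S P f s w ↔ w = View.unk := by
  constructor
  · intro hw
    cases w with
    | unk => rfl
    | top =>
      obtain ⟨h1, h2, -⟩ := hw
      obtain ⟨t, hft⟩ := Option.ne_none_iff_exists'.mp (h1.resolve_right hs)
      exact absurd (h2 1 t le_rfl (by rw [iter_one]; exact hft)) (hsucc t hft)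
    | bot =>
      obtain ⟨h1, h2, -⟩ := hw
      obtain ⟨t, hft⟩ := Option.ne_none_iff_exists'.mp (h1.resolve_right hs)
      exact absurd (h2 1 t le_rfl (by rw [iter_one]; exact hft)) (hsucc t hft)
    | exit t m =>
      obtain ⟨j, hj2, hjt, -, hpre, -, -⟩ := hw
      obtain ⟨u, hu⟩ := iter_some_of_le (le_of_lt hj2) hjt
      have hu' : f s = some u := by rw [← iter_one f s]; exact hu
      exact absurd (hpre 1 u le_rfl hj2 hu) (hsucc u hu')
  · rintro rfl
    cases hfs : f s with
    | none => exact Or.inl ⟨hfs, hs⟩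
    | some t => exact Or.inr ⟨t, hfs, hsucc t hfs⟩

theorem viewOn_congr {i i' : ℕ} {x : 𝒱} (h : S.psiGtAt i x = S.psiGtAt i' x)
    (f : V → Option V) : S.viewOn f i x = S.viewOn f i' x := by
  funext s w
  exact propext (and_congr_right fun _ =>
    (selView_eq_gv S f i x s w).trans
      (((gv_congr S h f s w)).trans (selView_eq_gv S f i' x s w).symm))

theorem omega_congr {i i' : ℕ} {x : 𝒱} (h : S.psiGtAt i x = S.psiGtAt i' x)
    (g : V → Option V) : S.omega g i x = S.omega g i' x :=
  Set.ext fun R =>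
    ⟨fun ⟨f, hf, hR⟩ => ⟨f, hf, hR.trans (viewOn_congr h f)⟩,
     fun ⟨f, hf, hR⟩ => ⟨f, hf, hR.trans (viewOn_congr h.symm f)⟩⟩

theorem omega_const {g : V → Option V} (hg : S.Sel S.V0 g) {i : ℕ} {x : 𝒱}
    (hemp : ∀ t, t ∉ S.psiGtAt i x) :
    S.omega g i x = {fun (s : V) (w : View V) => s ∈ S.B x ∧ w = View.unk} := by
  have hview : ∀ f : V → Option V, S.viewOn f i x =
      fun (s : V) (w : View V) => s ∈ S.B x ∧ w = View.unk := by
    intro f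
    funext s w
    exact propext (and_congr_right fun _ =>
      (selView_eq_gv S f i x s w).trans (gv_empty hemp f s w))
  ext R
  constructor
  · rintro ⟨f, _, rfl⟩
    exact hview f
  · rintro rfl
    classical
    refine ⟨fun s => if s ∈ S.V0 then g s else none, ⟨?_, ?_, ?_⟩, (hview _).symm⟩
    · intro s t hst
      by_cases hs : s ∈ S.V0
      · simp only [if_pos hs] at hst
        exact ⟨Set.mem_univ s, (hg s t hst).2⟩
      · simp only [if_neg hs] at hst
        exact absurd hst (by simp)
    · intro s hs
      simp only [if_pos hs]
    · intro s hs
      cases hgs : g s with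
      | none => rfl
      | some t => exact absurd (hg s t hgs).1 hs

theorem sel_none {g : V → Option V} (hg : S.Sel S.V0 g) :
    ∀ s ∉ S.V0, g s = none := by
  intro s hs
  cases hgs : g s with
  | none => rfl
  | some t => exact absurd (hg s t hgs).1 hs

end SettingAux

/-- (i) Every `ω_ℓ^g(x)` is the singleton consisting of the
constant function `s ↦ ?` on `B x`; (ii) for non-critical `i ≤ ℓ - 1`, the views
`ω_i` are determined by the views `ω_{i+1}`. -/
theorem omega_last_and_noncritical {V : Type u} {𝒱 : Type v}
    [Fintype V] [DecidableEq V] [Fintype 𝒱]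
    (S : Setting V 𝒱) (hS : S.Standing) (hV : 2 ≤ Fintype.card V) :
    (∀ g : V → Option V, S.Sel S.V0 g → ∀ x ∈ S.theta S.len,
      S.omega g S.len x =
        {fun (s : V) (w : View V) => s ∈ S.B x ∧ w = View.unk}) ∧
    (∀ i : ℕ, 1 ≤ i → i ≤ S.len - 1 → ¬ S.Crit i →
      ∀ g h : V → Option V, S.Sel S.V0 g → S.Sel S.V0 h →
        (∀ x ∈ S.theta (i + 1), S.omega g (i + 1) x = S.omega h (i + 1) x) →
        ∀ x ∈ S.theta i, S.omega g i x = S.omega h i x) := by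
  classical
  obtain ⟨hcol, hnice, hD, hrootbag⟩ := hS
  obtain ⟨⟨hT, hedge, hconn⟩, hleaf, hleafbag, hbagstep⟩ := hnice
  obtain ⟨s₀, t₀, hst⟩ := Fintype.exists_pair_of_one_lt_card
    (by omega : 1 < Fintype.card V) (α := V)
  obtain ⟨x₀, -, hx₀⟩ := hleafbag s₀
  obtain ⟨y₀, -, hy₀⟩ := hleafbag t₀
  have hxy₀ : x₀ ≠ y₀ := by
    intro hh
    rw [hh, hy₀] at hx₀
    exact hst (Finset.singleton_inj.mp hx₀.symm)
  have hnon : ∀ s : V, ∃ x, s ∈ S.B x := fun s => by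
    obtain ⟨x, -, hx⟩ := hleafbag s
    exact ⟨x, by rw [hx]; exact Finset.mem_singleton_self s⟩
  have hvisit : ∀ z : 𝒱, ∃ k, 1 ≤ k ∧ k < S.len ∧ S.vs k = z :=
    node_visited hT hD hxy₀
  have hall : ∀ s : V, s ∈ S.psiLe (S.len - 1) := by
    intro s
    obtain ⟨x, hx⟩ := hnon s
    obtain ⟨k, hk1, hk2, hk3⟩ := hvisit x
    exact ⟨k, hk1, by omega, x, by show Anc S.T S.root x (S.vs k); rw [hk3]; exact anc_self x, hx⟩
  constructor
  · intro g hg x _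
    have hemp : ∀ t, t ∉ S.psiGtAt S.len x := by
      rintro t ⟨hnP, -⟩
      exact hnP (hall t)
    exact omega_const hg hemp
  · intro i h1 hi hnc g h hg hh Hyp x hx
    have hℓ1 : 1 ≤ S.len := hD.one_le
    have hiℓ : i < S.len := by omega
    have hPsiEq : S.psiLe i = S.psiLe (i-1) := by
      have hsub : S.psiLe (i-1) ⊆ S.psiLe i := by
        rintro s ⟨j, hj1, hj2, hj3⟩
        exact ⟨j, hj1, by omega, hj3⟩
      have hcsub : (S.psiLe i)ᶜ ⊆ (S.psiLe (i-1))ᶜ := Set.compl_subset_compl.mpr hsub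
      by_contra hne
      exact hnc ((Set.ssubset_iff_subset_ne).mpr ⟨hcsub, fun hcc => hne (compl_inj_iff.mp hcc)⟩)
    have hGtAux : ∀ (j j' : ℕ) (y : 𝒱), S.psiLe (j-1) = S.psiLe (j'-1) →
        ThetaLe S.T S.root S.vs j = ThetaLe S.T S.root S.vs j' →
        S.psiGtAt j y = S.psiGtAt j' y := by
      intro j j' y hP hTh
      have hP' : PsiLe S.T S.root S.vs S.B (j-1) = PsiLe S.T S.root S.vs S.B (j'-1) := hP
      show PsiGtAt S.T S.root S.vs S.B j y = PsiGtAt S.T S.root S.vs S.B j' y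
      unfold PsiGtAt LowestAnc
      simp only [hTh, hP']
    have hadj : S.T.Adj (S.vs i) (S.vs (i+1)) := hD.adj i h1 hiℓ
    rcases adj_anc (root := S.root) hT hadj with hab | hba
    · -- DOWN case
      have hfresh : ∀ k, 1 ≤ k → k ≤ i → ¬ Anc S.T S.root (S.vs (i+1)) (S.vs k) :=
        down_fresh hT hD h1 hiℓ hab
      have hnotba : ¬ Anc S.T S.root (S.vs (i+1)) (S.vs i) := fun hc =>
        hadj.ne (anc_antisymm hT hab hc)
      have hbnotin : S.vs (i+1) ∉ ThetaLe S.T S.root S.vs i := by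
        rintro ⟨j, hj1, hj2, hj3⟩
        exact hfresh j hj1 hj2 hj3
      have hbmem : S.vs (i+1) ∈ ThetaLe S.T S.root S.vs (i+1) :=
        ⟨i+1, by omega, le_rfl, anc_self _⟩
      have hamem : ∀ j, i ≤ j → S.vs i ∈ ThetaLe S.T S.root S.vs j := fun j hj =>
        ⟨i, h1, hj, anc_self _⟩
      have hTLe : ∀ z, z ∈ ThetaLe S.T S.root S.vs (i+1) ↔
          (z = S.vs (i+1) ∨ z ∈ ThetaLe S.T S.root S.vs i) := by
        intro z
        constructor
        · rintro ⟨j, hj1, hj2, hj3⟩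
          rcases Nat.lt_or_ge j (i+1) with hj | hj
          · exact Or.inr ⟨j, hj1, by omega, hj3⟩
          · have hji : j = i + 1 := by omega
            subst hji
            by_cases hzb : z = S.vs (i+1)
            · exact Or.inl hzb
            · exact Or.inr ⟨i, h1, le_rfl, anc_of_parent hT hab hadj hj3 hzb⟩
        · rintro (rfl | ⟨j, hj1, hj2, hj3⟩)
          · exact hbmem
          · exact ⟨j, hj1, by omega, hj3⟩
      by_cases hxa : x = S.vs i
      · subst hxa
        -- the hard case: x = vs i
        have hdisj : ∀ s : V, s ∈ S.psiGtAt (i+1) (S.vs i) →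
            s ∈ S.psiGtAt (i+1) (S.vs (i+1)) → False := by
          rintro s ⟨-, r1, hbr1, hl1⟩ ⟨-, r2, hbr2, hl2⟩
          have hr12 : r1 = r2 := anc_antisymm hT (hbr1.2 r2 hbr2.1) (hbr2.2 r1 hbr1.1)
          subst hr12
          exact hnotba (hl1.2.2 _ hl2.1 ((hTLe _).mpr (Or.inl rfl)))
        have hnocommon : ∀ u t : V, u ∈ S.psiGtAt (i+1) (S.vs i) →
            t ∈ S.psiGtAt (i+1) (S.vs (i+1)) → ∀ z, u ∈ S.B z → t ∈ S.B z → False := by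
          rintro u t ⟨hu1, ru, hbru, hlu⟩ ⟨-, rt, hbrt, hlt⟩ z hz1 hz2
          have hnbru : ¬ Anc S.T S.root (S.vs (i+1)) ru := fun hc =>
            hnotba (hlu.2.2 _ hc ((hTLe _).mpr (Or.inl rfl)))
          have h1z : Anc S.T S.root ru z := hbru.2 z hz1
          have h2z : Anc S.T S.root rt z := hbrt.2 z hz2
          rcases anc_total hT h1z h2z with hurt | hrtu
          · rcases anc_total hT hurt hlt.1 with hub | hbu
            · by_cases hrb : ru = S.vs (i+1)
              · exact hnbru (by rw [hrb]; exact anc_self _)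
              · have hua : Anc S.T S.root ru (S.vs i) := anc_of_parent hT hab hadj hub hrb
                exact hu1 ⟨i, h1, le_rfl, ru, hua, hbru.1⟩
            · exact hnbru hbu
          · exact hnbru (anc_trans hT hlt.1 hrtu)
        have hnoedge : ∀ u t : V, u ∈ S.psiGtAt (i+1) (S.vs i) →
            t ∈ S.psiGtAt (i+1) (S.vs (i+1)) → ¬ S.E u t ∧ ¬ S.E t u := by
          intro u t hu ht
          constructor
          · intro hE
            obtain ⟨z, hz1, hz2⟩ := hedge u t hE
            exact hnocommon u t hu ht z hz1 hz2
          · intro hE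
            obtain ⟨z, hz1, hz2⟩ := hedge t u hE
            exact hnocommon u t hu ht z hz2 hz1
        have hBa : ∀ s ∈ S.B (S.vs i), s ∈ S.psiLe i := fun s hs =>
          ⟨i, h1, le_rfl, S.vs i, anc_self _, hs⟩
        have hBaA : ∀ s ∈ S.B (S.vs i), s ∉ S.psiGtAt (i+1) (S.vs i) := by
          rintro s hs ⟨hnP, -⟩
          exact hnP (hBa s hs)
        have hBaA' : ∀ s ∈ S.B (S.vs i), s ∉ S.psiGtAt (i+1) (S.vs (i+1)) := by
          rintro s hs ⟨hnP, -⟩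
          exact hnP (hBa s hs)
        have hD5 : ∀ s, s ∈ S.B (S.vs i) → s ∉ S.B (S.vs (i+1)) →
            ∀ t, t ∈ S.psiGtAt (i+1) (S.vs (i+1)) → ¬ S.E s t := by
          rintro s hsa hsb t ⟨-, rt, hbrt, hlt⟩ hE
          obtain ⟨z, hz1, hz2⟩ := hedge s t hE
          have hbz : Anc S.T S.root (S.vs (i+1)) z := anc_trans hT hlt.1 (hbrt.2 z hz2)
          exact hsb (bag_conn hT (hconn s) hsa hz1 (tpath hT (S.vs i) z)
            (tpath_isPath hT _ _) (S.vs (i+1))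
            (anc_between hT hab hbz hadj.ne _ (tpath_isPath hT _ _)))
        have hGtU : S.psiGtAt i (S.vs i) =
            S.psiGtAt (i+1) (S.vs i) ∪ S.psiGtAt (i+1) (S.vs (i+1)) := by
          ext s
          constructor
          · rintro ⟨hnP, r, hbr, hl⟩
            have hnP' : s ∉ S.psiLe i := by
              intro hc
              rw [hPsiEq] at hc
              exact hnP hc
            by_cases hbr_anc : Anc S.T S.root (S.vs (i+1)) r
            · refine Or.inr ⟨hnP', r, hbr, hbr_anc, (hTLe _).mpr (Or.inl rfl), ?_⟩
              intro y hyr hy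
              rcases (hTLe y).mp hy with rfl | hyi
              · exact anc_self _
              · exact anc_trans hT (hl.2.2 y hyr hyi) hab
            · refine Or.inl ⟨hnP', r, hbr, hl.1, (hTLe _).mpr (Or.inr (hamem i le_rfl)), ?_⟩
              intro y hyr hy
              rcases (hTLe y).mp hy with rfl | hyi
              · exact absurd hyr hbr_anc
              · exact hl.2.2 y hyr hyi
          · rintro (⟨hnP, r, hbr, hl⟩ | ⟨hnP, r, hbr, hl⟩)
            · refine ⟨fun hc => hnP ?_, r, hbr, hl.1, hamem i le_rfl, ?_⟩
              · have hc' : s ∈ S.psiLe (i-1) := hc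
                rw [← hPsiEq] at hc'
                exact hc'
              · intro y hyr hyi
                exact hl.2.2 y hyr ((hTLe y).mpr (Or.inr hyi))
            · refine ⟨fun hc => hnP ?_, r, hbr, anc_trans hT hab hl.1, hamem i le_rfl, ?_⟩
              · have hc' : s ∈ S.psiLe (i-1) := hc
                rw [← hPsiEq] at hc'
                exact hc'
              · intro y hyr hyi
                have hyb : Anc S.T S.root y (S.vs (i+1)) :=
                  hl.2.2 y hyr ((hTLe y).mpr (Or.inr hyi))
                have hyne : y ≠ S.vs (i+1) := fun hc => hbnotin (hc ▸ hyi)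
                exact anc_of_parent hT hab hadj hyb hyne
        have hmain : ∀ (g' h' : V → Option V), S.Sel S.V0 g' → S.Sel S.V0 h' →
            S.omega g' (i+1) (S.vs i) = S.omega h' (i+1) (S.vs i) →
            S.omega g' (i+1) (S.vs (i+1)) = S.omega h' (i+1) (S.vs (i+1)) →
            S.omega g' i (S.vs i) ⊆ S.omega h' i (S.vs i) := by
          intro g' h' hg' hh' Ha Hb R hR
          obtain ⟨f, hf, rfl⟩ := hR
          have hmem₁ : S.viewOn f (i+1) (S.vs i) ∈ S.omega h' (i+1) (S.vs i) := by
            rw [← Ha]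
            exact ⟨f, hf, rfl⟩
          obtain ⟨f₁, hf₁, he₁⟩ := hmem₁
          have hmem₂ : S.viewOn f (i+1) (S.vs (i+1)) ∈ S.omega h' (i+1) (S.vs (i+1)) := by
            rw [← Hb]
            exact ⟨f, hf, rfl⟩
          obtain ⟨f₂, hf₂, he₂⟩ := hmem₂
          have hv₁ : ∀ s ∈ S.B (S.vs i), ∀ w, S.SelView f (i+1) (S.vs i) s w ↔
              S.SelView f₁ (i+1) (S.vs i) s w := by
            intro s hs w
            have h2 := congrFun (congrFun he₁ s) w
            simp only [Setting.viewOn] at h2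
            have h3 := h2.to_iff
            exact ⟨fun hsv => (h3.mp ⟨hs, hsv⟩).2, fun hsv => (h3.mpr ⟨hs, hsv⟩).2⟩
          have hv₂ : ∀ s ∈ S.B (S.vs (i+1)), ∀ w, S.SelView f (i+1) (S.vs (i+1)) s w ↔
              S.SelView f₂ (i+1) (S.vs (i+1)) s w := by
            intro s hs w
            have h2 := congrFun (congrFun he₂ s) w
            simp only [Setting.viewOn] at h2
            have h3 := h2.to_iff
            exact ⟨fun hsv => (h3.mp ⟨hs, hsv⟩).2, fun hsv => (h3.mpr ⟨hs, hsv⟩).2⟩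
          have hgv₁ : ∀ s ∈ S.B (S.vs i), ∀ w,
              GV S (S.psiGtAt (i+1) (S.vs i)) f s w ↔
              GV S (S.psiGtAt (i+1) (S.vs i)) f₁ s w := by
            intro s hs w
            rw [← selView_eq_gv, ← selView_eq_gv]
            exact hv₁ s hs w
          have hgv₂ : ∀ s ∈ S.B (S.vs (i+1)), ∀ w,
              GV S (S.psiGtAt (i+1) (S.vs (i+1))) f s w ↔
              GV S (S.psiGtAt (i+1) (S.vs (i+1))) f₂ s w := by
            intro s hs w
            rw [← selView_eq_gv, ← selView_eq_gv]
            exact hv₂ s hs w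
          set f' : V → Option V := fun u =>
            if u ∈ S.psiGtAt (i+1) (S.vs i) then f₁ u
            else if u ∈ S.psiGtAt (i+1) (S.vs (i+1)) then f₂ u
            else if u ∈ S.V0 then h' u
            else if ∃ t, f₁ u = some t ∧ t ∈ S.psiGtAt (i+1) (S.vs i) then f₁ u
            else if ∃ t, f₂ u = some t ∧ t ∈ S.psiGtAt (i+1) (S.vs (i+1)) then f₂ u
            else none with hf'def
          have hf'A : ∀ u ∈ S.psiGtAt (i+1) (S.vs i), f' u = f₁ u := by
            intro u hu
            simp only [hf'def]
            rw [if_pos hu]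
          have hf'A' : ∀ u ∈ S.psiGtAt (i+1) (S.vs (i+1)), f' u = f₂ u := by
            intro u hu
            have hnA : u ∉ S.psiGtAt (i+1) (S.vs i) := fun hc => hdisj u hc hu
            simp only [hf'def]
            rw [if_neg hnA, if_pos hu]
          have hf'sel : S.Sel Set.univ f' := by
            intro u t hut
            simp only [hf'def] at hut
            split_ifs at hut
            all_goals first
              | exact ⟨Set.mem_univ u, (hf₁.1 u t hut).2⟩
              | exact ⟨Set.mem_univ u, (hf₂.1 u t hut).2⟩
              | exact ⟨Set.mem_univ u, (hh' u t hut).2⟩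
              | exact Option.noConfusion hut
          have hf'ext : S.Ext f' h' := by
            refine ⟨hf'sel, ?_, sel_none hh'⟩
            intro u hu
            simp only [hf'def]
            split_ifs with h₁ h₂ h₃ h₄ h₅
            all_goals first
              | exact hf₁.2.1 u hu
              | exact hf₂.2.1 u hu
              | rfl
              | exact absurd hu h₃
          have hkey : ∀ s ∈ S.B (S.vs i), ∀ w,
              S.SelView f i (S.vs i) s w ↔ S.SelView f' i (S.vs i) s w := by
            intro s hs w
            have hs'eval : f' s = if s ∈ S.V0 then h' s
                else if ∃ t, f₁ s = some t ∧ t ∈ S.psiGtAt (i+1) (S.vs i) then f₁ s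
                else if ∃ t, f₂ s = some t ∧ t ∈ S.psiGtAt (i+1) (S.vs (i+1)) then f₂ s
                else none := by
              simp only [hf'def]
              rw [if_neg (hBaA s hs), if_neg (hBaA' s hs)]
            have hsel₁ : ∀ t ∈ S.psiGtAt (i+1) (S.vs i), (f₁ s = some t ↔ f' s = some t) := by
              intro t ht
              by_cases hsv : s ∈ S.V0
              · have hfs : f' s = f₁ s := by
                  rw [hs'eval, if_pos hsv, hf₁.2.1 s hsv]
                rw [hfs]
              · by_cases hc1 : ∃ t', f₁ s = some t' ∧ t' ∈ S.psiGtAt (i+1) (S.vs i)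
                · have hfs : f' s = f₁ s := by rw [hs'eval, if_neg hsv, if_pos hc1]
                  rw [hfs]
                · by_cases hc2 : ∃ t', f₂ s = some t' ∧ t' ∈ S.psiGtAt (i+1) (S.vs (i+1))
                  · have hfs : f' s = f₂ s := by
                      rw [hs'eval, if_neg hsv, if_neg hc1, if_pos hc2]
                    constructor
                    · intro hft
                      exact absurd ⟨t, hft, ht⟩ hc1
                    · intro hft
                      rw [hfs] at hft
                      obtain ⟨t', hft', ht'⟩ := hc2
                      have htt : t' = t := Option.some.inj (hft'.symm.trans hft)
                      exact absurd (htt ▸ ht') (fun c => hdisj t ht c)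
                  · have hfs : f' s = none := by
                      rw [hs'eval, if_neg hsv, if_neg hc1, if_neg hc2]
                    constructor
                    · intro hft
                      exact absurd ⟨t, hft, ht⟩ hc1
                    · intro hft
                      rw [hfs] at hft
                      exact absurd hft (by simp)
            have hAside : ∀ w', GV S (S.psiGtAt (i+1) (S.vs i)) f s w' ↔
                GV S (S.psiGtAt (i+1) (S.vs i)) f' s w' := by
              intro w'
              exact (hgv₁ s hs w').trans
                (gv_iff (hBaA s hs) (fun u hu => (hf'A u hu).symm) hsel₁ w')
            have hA'side : ∀ w', GV S (S.psiGtAt (i+1) (S.vs (i+1))) f s w' ↔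
                GV S (S.psiGtAt (i+1) (S.vs (i+1))) f' s w' := by
              by_cases hsb : s ∈ S.B (S.vs (i+1))
              · have hsel₂ : ∀ t ∈ S.psiGtAt (i+1) (S.vs (i+1)),
                    (f₂ s = some t ↔ f' s = some t) := by
                  intro t ht
                  by_cases hsv : s ∈ S.V0
                  · have hfs : f' s = f₂ s := by
                      rw [hs'eval, if_pos hsv, hf₂.2.1 s hsv]
                    rw [hfs]
                  · by_cases hc1 : ∃ t', f₁ s = some t' ∧ t' ∈ S.psiGtAt (i+1) (S.vs i)
                    · have hfs : f' s = f₁ s := by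
                        rw [hs'eval, if_neg hsv, if_pos hc1]
                      obtain ⟨t₀, hft₀, ht₀⟩ := hc1
                      constructor
                      · intro hft
                        exfalso
                        -- f's first step is in A, so f's A'-view is unk, so f₂'s is too
                        have hnunk₁ : ¬ GV S (S.psiGtAt (i+1) (S.vs i)) f₁ s View.unk := by
                          rintro (⟨hn, -⟩ | ⟨t'', h'', ht''⟩)
                          · rw [hft₀] at hn
                            exact absurd hn (by simp)
                          · exact ht'' (Option.some.inj (h''.symm.trans hft₀) ▸ ht₀)
                        have hnunk : ¬ GV S (S.psiGtAt (i+1) (S.vs i)) f s View.unk :=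
                          fun hc => hnunk₁ ((hgv₁ s hs View.unk).mp hc)
                        obtain ⟨tf, hftf, htfA⟩ :
                            ∃ tf, f s = some tf ∧ tf ∈ S.psiGtAt (i+1) (S.vs i) := by
                          cases hfs₀ : f s with
                          | none => exact absurd (Or.inl ⟨hfs₀, hBaA s hs⟩) hnunk
                          | some tf =>
                            by_cases htfA : tf ∈ S.psiGtAt (i+1) (S.vs i)
                            · exact ⟨tf, rfl, htfA⟩
                            · exact absurd (Or.inr ⟨tf, hfs₀, htfA⟩) hnunk
                        have hu' : GV S (S.psiGtAt (i+1) (S.vs (i+1))) f s View.unk :=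
                          Or.inr ⟨tf, hftf, fun c => hdisj tf htfA c⟩
                        have hu₂ : GV S (S.psiGtAt (i+1) (S.vs (i+1))) f₂ s View.unk :=
                          (hgv₂ s hsb View.unk).mp hu'
                        rcases hu₂ with ⟨hn, -⟩ | ⟨t'', h'', ht''⟩
                        · rw [hft] at hn
                          exact absurd hn (by simp)
                        · exact ht'' (Option.some.inj (h''.symm.trans hft) ▸ ht)
                      · intro hft
                        exfalso
                        rw [hfs] at hft
                        have htt : t₀ = t := Option.some.inj (hft₀.symm.trans hft)
                        exact hdisj t (htt ▸ ht₀) ht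
                    · by_cases hc2 : ∃ t', f₂ s = some t' ∧ t' ∈ S.psiGtAt (i+1) (S.vs (i+1))
                      · have hfs : f' s = f₂ s := by
                          rw [hs'eval, if_neg hsv, if_neg hc1, if_pos hc2]
                        rw [hfs]
                      · have hfs : f' s = none := by
                          rw [hs'eval, if_neg hsv, if_neg hc1, if_neg hc2]
                        constructor
                        · intro hft
                          exact absurd ⟨t, hft, ht⟩ hc2
                        · intro hft
                          rw [hfs] at hft
                          exact absurd hft (by simp)
                intro w'
                exact (hgv₂ s hsb w').trans
                  (gv_iff (hBaA' s hs) (fun u hu => (hf'A' u hu).symm) hsel₂ w')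
              · intro w'
                have t1 := gv_unk_only (S := S) (hBaA' s hs)
                  (fun t hft htA' => hD5 s hs hsb t htA' (hf.1 s t hft).2) w'
                have t2 := gv_unk_only (S := S) (hBaA' s hs)
                  (fun t hft htA' => hD5 s hs hsb t htA' (hf'sel s t hft).2) w'
                rw [t1, t2]
            rw [selView_eq_gv S f i (S.vs i) s w, selView_eq_gv S f' i (S.vs i) s w,
              gv_congr S hGtU f s w, gv_congr S hGtU f' s w]
            exact gv_union_congr hf.1 hf'sel hnoedge (hBaA s hs) (hBaA' s hs)
              hAside hA'side w
          refine ⟨f', hf'ext, ?_⟩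
          funext s w
          apply propext
          show (s ∈ S.B (S.vs i) ∧ S.SelView f i (S.vs i) s w) ↔
            (s ∈ S.B (S.vs i) ∧ S.SelView f' i (S.vs i) s w)
          exact and_congr_right fun hs => hkey s hs w
        have hamem' : S.vs i ∈ S.theta (i+1) := hab
        have hbmem' : S.vs (i+1) ∈ S.theta (i+1) := anc_self _
        exact Set.Subset.antisymm
          (hmain g h hg hh (Hyp _ hamem') (Hyp _ hbmem'))
          (hmain h g hh hg (Hyp _ hamem').symm (Hyp _ hbmem').symm)
      · -- x ≠ vs i : regions unchanged
        have hGtx : S.psiGtAt i x = S.psiGtAt (i+1) x := by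
          ext s
          constructor
          · rintro ⟨hnP, r, hbr, hl⟩
            refine ⟨fun hc => hnP ?_, r, hbr, hl.1, (hTLe _).mpr (Or.inr hl.2.1), ?_⟩
            · have hc' : s ∈ S.psiLe i := hc
              rw [hPsiEq] at hc'
              exact hc'
            · intro y hyr hy
              rcases (hTLe y).mp hy with rfl | hyi
              · exfalso
                have haR : Anc S.T S.root (S.vs i) r := anc_trans hT hab hyr
                have hax : Anc S.T S.root (S.vs i) x := hl.2.2 _ haR (hamem i le_rfl)
                exact hxa (anc_antisymm hT hx hax)
              · exact hl.2.2 y hyr hyi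
          · rintro ⟨hnP, r, hbr, hl⟩
            refine ⟨fun hc => hnP ?_, r, hbr, hl.1, ?_, ?_⟩
            · have hc' : s ∈ S.psiLe (i-1) := hc
              rw [← hPsiEq] at hc'
              exact hc'
            · rcases (hTLe x).mp hl.2.1 with rfl | hxi
              · exact absurd hx hnotba
              · exact hxi
            · intro y hyr hyi
              exact hl.2.2 y hyr ((hTLe y).mpr (Or.inr hyi))
        have hxb : Anc S.T S.root x (S.vs (i+1)) := anc_trans hT hx hab
        rw [omega_congr hGtx g, omega_congr hGtx h]
        exact Hyp x hxb
    · -- UP case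
      have hTLeEq : ThetaLe S.T S.root S.vs (i+1) = ThetaLe S.T S.root S.vs i := by
        ext z
        constructor
        · rintro ⟨j, hj1, hj2, hj3⟩
          rcases Nat.lt_or_ge j (i+1) with hj | hj
          · exact ⟨j, hj1, by omega, hj3⟩
          · have hji : j = i + 1 := by omega
            subst hji
            exact ⟨i, h1, le_rfl, anc_trans hT hj3 hba⟩
        · rintro ⟨j, hj1, hj2, hj3⟩
          exact ⟨j, hj1, by omega, hj3⟩
      have hGt : ∀ y, S.psiGtAt i y = S.psiGtAt (i+1) y := fun y =>
        hGtAux i (i+1) y (by rw [Nat.add_sub_cancel]; exact hPsiEq.symm) hTLeEq.symm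
      by_cases hxb : Anc S.T S.root x (S.vs (i+1))
      · rw [omega_congr (hGt x) g, omega_congr (hGt x) h]
        exact Hyp x hxb
      · have hxa : x = S.vs i := by
          by_contra hne
          exact hxb (anc_of_parent hT hba hadj.symm hx hne)
        subst hxa
        have hemp : ∀ s, s ∉ S.psiGtAt i (S.vs i) := by
          intro s hsmem
          rw [hGt (S.vs i)] at hsmem
          obtain ⟨hnP, r, hbr, hl⟩ := hsmem
          obtain ⟨k, hk1, hkℓ, hk3⟩ := hvisit r
          have hki : k ≤ i := by
            by_contra hc
            exact up_unvisited hT hD h1 hiℓ hba k (by omega) (by omega)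
              (by rw [hk3]; exact hl.1)
          have hrmem : r ∈ ThetaLe S.T S.root S.vs (i+1) :=
            ⟨k, hk1, by omega, by show Anc S.T S.root r (S.vs k); rw [hk3]; exact anc_self r⟩
          have hra : Anc S.T S.root r (S.vs i) := hl.2.2 r (anc_self r) hrmem
          have hreq : r = S.vs i := anc_antisymm hT hra hl.1
          exact hnP ⟨i, h1, le_rfl, S.vs i, anc_self _, by rw [← hreq]; exact hbr.1⟩
        rw [omega_const hg hemp, omega_const hh hemp]
end
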